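/- arXiv:1008.2583 — 7 statements merged into one kernel-verified Lean document; each statement's English description precedes it below -/
import Mathlib

section
/- There exists a constant C > 0 such that for every even integer k > 2 and every integer n > 2k, |α(P(n,k)) − (2k−1)n/(2k)| ≤ C·k. -/
namespace GP

/-- Adjacency generating relation for the generalized Petersen graph `P(n,k)`:
`Sum.inl i` is the outer vertex `u_i`, `Sum.inr i` is the inner vertex `v_i`. -/
def adjFun (n k : ℕ) : (ZMod n ⊕ ZMod n) → (ZMod n ⊕ ZMod n) → Prop
  | Sum.inl i, Sum.inl j => j = i + 1
  | Sum.inl i, Sum.inr j => j = i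
  | Sum.inr i, Sum.inr j => j = i + (k : ZMod n)
  | _, _ => False

/-- The generalized Petersen graph `P(n,k)`. -/
def P (n k : ℕ) : SimpleGraph (ZMod n ⊕ ZMod n) :=
  SimpleGraph.fromRel (adjFun n k)

/-- `s` is an independent set of vertices in `G`. -/
def IsIndep {V : Type*} (G : SimpleGraph V) (s : Finset V) : Prop :=
  ∀ v ∈ s, ∀ w ∈ s, ¬ G.Adj v w

/-- The independence number of a graph. -/
noncomputable def indepNum {V : Type*} (G : SimpleGraph V) : ℕ :=
  sSup {m | ∃ s : Finset V, IsIndep G s ∧ s.card = m}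

/-- `α(P(n,k))`. -/
noncomputable def alpha (n k : ℕ) : ℕ := indepNum (P n k)

/-- The outer vertex `u_i`. -/
def u (n : ℕ) (i : ZMod n) : ZMod n ⊕ ZMod n := Sum.inl i

/-- The inner vertex `v_i`. -/
def v (n : ℕ) (i : ZMod n) : ZMod n ⊕ ZMod n := Sum.inr i

/-- The `2k`-segment `I_t = {u_t, …, u_{t+2k-1}} ∪ {v_t, …, v_{t+2k-1}}`. -/
def segment (n k : ℕ) (t : ZMod n) : Finset (ZMod n ⊕ ZMod n) :=
  ((Finset.range (2*k)).image fun j : ℕ => u n (t + (j : ZMod n))) ∪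
  ((Finset.range (2*k)).image fun j : ℕ => v n (t + (j : ZMod n)))



/-- Abstract context: `U x` ~ outer vertex in column x selected, `V x` ~ inner selected. -/
structure Ctx (k : ℕ) (U V : ℕ → Prop) : Prop where
  hk : 4 ≤ k
  hke : k % 2 = 0
  hU : ∀ x, U x → U (x+1) → False
  hUV : ∀ x, U x → V x → False
  hV : ∀ x, V x → V (x+k) → False

def aocc (U V : ℕ → Prop) (x : ℕ) : Prop := U x ∨ V x

variable {k : ℕ} {U V : ℕ → Prop}

lemma chainU (H : Ctx k U V) (t : ℕ) (hw : ∀ j, j < 2*k → aocc U V (t+j))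
    (h0 : U (t+k)) :
    ∀ j, j < k → (j % 2 = 1 → U (t+j)) ∧ (j % 2 = 0 → U (t+k+j)) := by
  intro j
  induction j with
  | zero =>
    exact fun _ => ⟨fun h => by omega, fun _ => by simpa using h0⟩
  | succ j ih =>
    intro hj
    have ihj := ih (by omega)
    constructor
    · intro hodd
      have hUkj : U (t+k+j) := ihj.2 (by omega)
      have hnU : ¬ U (t+k+(j+1)) := by
        intro h
        exact H.hU (t+k+j) hUkj (by rwa [show t+k+j+1 = t+k+(j+1) by omega])
      have hocc1 : aocc U V (t+(j+1)) := hw _ (by omega)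
      rcases hocc1 with h | h
      · exact h
      · -- V (t+(j+1)); then V at t+(j+1)+k = t+k+(j+1)
        have hocc2 : aocc U V (t+k+(j+1)) := by
          have := hw (k+(j+1)) (by omega)
          rwa [show t+(k+(j+1)) = t+k+(j+1) by omega] at this
        rcases hocc2 with h2 | h2
        · exact absurd h2 hnU
        · exact absurd (H.hV (t+(j+1)) h (by rwa [show t+(j+1)+k = t+k+(j+1) by omega]))
            (fun f => f)
    · intro heven
      have hUj : U (t+j) := ihj.1 (by omega)
      have hnU : ¬ U (t+(j+1)) := by
        intro h
        exact H.hU (t+j) hUj (by rwa [show t+j+1 = t+(j+1) by omega])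
      have hVj : V (t+(j+1)) := by
        rcases hw (j+1) (by omega) with h | h
        · exact absurd h hnU
        · exact h
      have hnV : ¬ V (t+k+(j+1)) := by
        intro h
        exact H.hV (t+(j+1)) hVj (by rwa [show t+(j+1)+k = t+k+(j+1) by omega])
      rcases hw (k+(j+1)) (by omega) with h | h
      · rwa [show t+(k+(j+1)) = t+k+(j+1) by omega] at h
      · exact absurd (by rwa [show t+(k+(j+1)) = t+k+(j+1) by omega] at h) hnV

lemma no_Uk (H : Ctx k U V) (t : ℕ) (hw : ∀ j, j < 2*k → aocc U V (t+j)) :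
    ¬ U (t+k) := by
  intro h
  have hk := H.hk; have hke := H.hke
  have h1 : U (t+(k-1)) := (chainU H t hw h (k-1) (by omega)).1 (by omega)
  exact H.hU (t+(k-1)) h1 (by rwa [show t+(k-1)+1 = t+k by omega])

lemma canonical (H : Ctx k U V) (t : ℕ) (hw : ∀ j, j < 2*k → aocc U V (t+j)) :
    ∀ j, j < k → ((j % 2 = 0 → U (t+j) ∧ V (t+k+j)) ∧ (j % 2 = 1 → V (t+j) ∧ U (t+k+j))) := by
  have hk := H.hk
  have base : U t ∧ V (t+k) := by
    have hnUk := no_Uk H t hw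
    have hVk : V (t+k) := by
      rcases hw k (by omega) with h | h
      · exact absurd h hnUk
      · exact h
    have hnVt : ¬ V t := fun h => H.hV t h hVk
    have hUt : U t := by
      rcases hw 0 (by omega) with h | h
      · simpa using h
      · exact absurd (by simpa using h) hnVt
    exact ⟨hUt, hVk⟩
  intro j
  induction j with
  | zero =>
    refine fun _ => ⟨fun _ => by simpa using base, fun h => by omega⟩
  | succ j ih =>
    intro hj
    have ihj := ih (by omega)
    constructor
    · -- (j+1) even, so j odd
      intro he
      have ⟨hVj, hUkj⟩ := ihj.2 (by omega)
      -- U(t+k+j) → ¬U(t+k+(j+1)) → V (t+k+(j+1)) → ¬V(t+(j+1)) → U(t+(j+1))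
      have hnU2 : ¬ U (t+k+(j+1)) := fun h =>
        H.hU (t+k+j) hUkj (by rwa [show t+k+j+1 = t+k+(j+1) by omega])
      have hV2 : V (t+k+(j+1)) := by
        rcases hw (k+(j+1)) (by omega) with h | h
        · exact absurd (by rwa [show t+(k+(j+1)) = t+k+(j+1) by omega] at h) hnU2
        · rwa [show t+(k+(j+1)) = t+k+(j+1) by omega] at h
      have hnV1 : ¬ V (t+(j+1)) := fun h =>
        H.hV (t+(j+1)) h (by rwa [show t+(j+1)+k = t+k+(j+1) by omega])
      have hU1 : U (t+(j+1)) := by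
        rcases hw (j+1) (by omega) with h | h
        · exact h
        · exact absurd h hnV1
      exact ⟨hU1, hV2⟩
    · -- (j+1) odd, so j even
      intro ho
      have ⟨hUj, hVkj⟩ := ihj.1 (by omega)
      have hnU1 : ¬ U (t+(j+1)) := fun h =>
        H.hU (t+j) hUj (by rwa [show t+j+1 = t+(j+1) by omega])
      have hV1 : V (t+(j+1)) := by
        rcases hw (j+1) (by omega) with h | h
        · exact absurd h hnU1
        · exact h
      have hnV2 : ¬ V (t+k+(j+1)) := fun h =>
        H.hV (t+(j+1)) hV1 (by rwa [show t+(j+1)+k = t+k+(j+1) by omega])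
      have hU2 : U (t+k+(j+1)) := by
        rcases hw (k+(j+1)) (by omega) with h | h
        · rwa [show t+(k+(j+1)) = t+k+(j+1) by omega] at h
        · exact absurd (by rwa [show t+(k+(j+1)) = t+k+(j+1) by omega] at h) hnV2
      exact ⟨hV1, hU2⟩

lemma canonical_empty (H : Ctx k U V) (t : ℕ) (hw : ∀ j, j < 2*k → aocc U V (t+j)) :
    ¬ aocc U V (t + 2*k) := by
  have hk := H.hk; have hke := H.hke
  have c := canonical H t hw
  have hVk : V (t+k) := by
    have := ((c 0 (by omega)).1 (by omega)).2
    simpa using this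
  have hU2 : U (t+k+(k-1)) := ((c (k-1) (by omega)).2 (by omega)).2
  intro hocc
  rcases hocc with h | h
  · exact H.hU (t+k+(k-1)) hU2 (by rwa [show t+k+(k-1)+1 = t+2*k by omega])
  · exact H.hV (t+k) hVk (by rwa [show t+k+k = t+2*k by omega])

/-- The forced run-pattern state. -/
def Tst (k : ℕ) (U V : ℕ → Prop) (c : ℕ) : Prop :=
  (∀ o, o ≤ 2*k-2 → aocc U V (c+o)) ∧ (∀ o, o % 2 = 1 → o + 3 ≤ k → U (c+o))

lemma Ga (H : Ctx k U V) (c : ℕ) (hT : Tst k U V c) :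
    ∀ o, o % 2 = 0 → o + 2 ≤ k → V (c+o) := by
  have hk := H.hk
  intro o ho hok
  have hnU : ¬ U (c+o) := by
    rcases Nat.eq_zero_or_pos o with h0 | h0
    · subst h0
      intro h
      exact H.hU c (by simpa using h) (by simpa using hT.2 1 (by omega) (by omega))
    · intro h
      have hU' : U (c+(o-1)) := hT.2 (o-1) (by omega) (by omega)
      exact H.hU (c+(o-1)) hU' (by rwa [show c+(o-1)+1 = c+o by omega])
  rcases hT.1 o (by omega) with h | h
  · exact absurd h hnU
  · exact h

lemma Gb (H : Ctx k U V) (c : ℕ) (hT : Tst k U V c) :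
    ∀ o, o % 2 = 0 → k ≤ o → o + 2 ≤ 2*k → U (c+o) := by
  have hk := H.hk; have hke := H.hke
  intro o ho h1 h2
  have hV' : V (c+(o-k)) := Ga H c hT (o-k) (by omega) (by omega)
  have hnV : ¬ V (c+o) := fun h =>
    H.hV (c+(o-k)) hV' (by rwa [show c+(o-k)+k = c+o by omega])
  rcases hT.1 o (by omega) with h | h
  · exact h
  · exact absurd h hnV

lemma Gc (H : Ctx k U V) (c : ℕ) (hT : Tst k U V c) :
    ∀ o, o % 2 = 1 → k ≤ o + 1 → o + 3 ≤ 2*k → V (c+o) := by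
  have hk := H.hk; have hke := H.hke
  intro o ho h1 h2
  have hU' : U (c+(o+1)) := Gb H c hT (o+1) (by omega) (by omega) (by omega)
  have hnU : ¬ U (c+o) := fun h =>
    H.hU (c+o) h (by rwa [show c+o+1 = c+(o+1) by omega])
  rcases hT.1 o (by omega) with h | h
  · exact absurd h hnU
  · exact h

lemma step_empty (H : Ctx k U V) (c : ℕ) (hT : Tst k U V c) :
    ¬ aocc U V (c + (2*k-1)) := by
  have hk := H.hk; have hke := H.hke
  intro hocc
  have hw : ∀ j, j < 2*k → aocc U V (c+j) := by
    intro j hj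
    rcases Nat.lt_or_ge j (2*k-1) with h | h
    · exact hT.1 j (by omega)
    · rwa [show j = 2*k-1 by omega]
  have hV1 : V (c+1) := ((canonical H c hw 1 (by omega)).2 (by omega)).1
  exact H.hUV (c+1) (hT.2 1 (by omega) (by omega)) hV1

lemma step_T (H : Ctx k U V) (c : ℕ) (hT : Tst k U V c)
    (hocc2 : ∀ o, o ≤ 2*k-2 → aocc U V (c + 2*k + o)) :
    Tst k U V (c + 2*k) := by
  have hk := H.hk; have hke := H.hke
  refine ⟨hocc2, ?_⟩
  intro o ho hok
  have hVo : V (c+(o+k)) := Gc H c hT (o+k) (by omega) (by omega) (by omega)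
  have hnV : ¬ V (c + 2*k + o) := fun h =>
    H.hV (c+(o+k)) hVo (by rwa [show c+(o+k)+k = c+2*k+o by omega])
  rcases hocc2 o (by omega) with h | h
  · exact h
  · exact absurd h hnV

lemma start_T (H : Ctx k U V) (a : ℕ) (hw : ∀ j, j < 2*k → aocc U V (a+1+j))
    (hocc2 : ∀ o, o ≤ 2*k-2 → aocc U V (a + (2*k+2) + o)) :
    Tst k U V (a + (2*k+2)) := by
  have hk := H.hk; have hke := H.hke
  refine ⟨hocc2, ?_⟩
  intro o ho hok
  have hVj : V (a+1+k+(o+1)) := ((canonical H (a+1) hw (o+1) (by omega)).1 (by omega)).2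
  have hnV : ¬ V (a + (2*k+2) + o) := fun h =>
    H.hV (a+1+k+(o+1)) hVj (by rwa [show a+1+k+(o+1)+k = a+(2*k+2)+o by omega])
  rcases hocc2 o (by omega) with h | h
  · exact h
  · exact absurd h hnV

open Classical in
/-- Number of empty columns with offset in `(a, n]`. -/
noncomputable def Ecnt (U V : ℕ → Prop) (n a : ℕ) : ℕ :=
  ((Finset.Ioc a n).filter (fun x => ¬ aocc U V x)).card

variable {n : ℕ}

lemma Ecnt_one {a q : ℕ} (h1 : a < q) (h2 : q ≤ n) (h3 : ¬ aocc U V q) :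
    Ecnt U V n q + 1 ≤ Ecnt U V n a := by
  unfold Ecnt
  rw [← Finset.card_insert_of_notMem (show q ∉ _ by
    simp [Finset.mem_filter, Finset.mem_Ioc])]
  apply Finset.card_le_card
  intro x hx
  rcases Finset.mem_insert.1 hx with rfl | hx
  · simp only [Finset.mem_filter, Finset.mem_Ioc]
    exact ⟨⟨h1, h2⟩, h3⟩
  · simp only [Finset.mem_filter, Finset.mem_Ioc] at hx ⊢
    exact ⟨⟨by omega, hx.1.2⟩, hx.2⟩

lemma Ecnt_two {a q1 q2 : ℕ} (h1 : a < q1) (h2 : q1 < q2) (h3 : q2 ≤ n)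
    (h4 : ¬ aocc U V q1) (h5 : ¬ aocc U V q2) :
    Ecnt U V n q2 + 2 ≤ Ecnt U V n a := by
  have e1 := Ecnt_one (U := U) (V := V) (n := n) h2 h3 h5
  have e2 := Ecnt_one (U := U) (V := V) (n := n) h1 (by omega) h4
  omega

/-- The key counting induction: empties have density at least ~1/(2k). -/
lemma main_count (H : Ctx k U V) (hend : ¬ aocc U V n) :
    ∀ N : ℕ,
      (∀ a, a ≤ n → n ≤ a + N → ¬ aocc U V a →
        n ≤ 2*k*Ecnt U V n a + a + 2*k) ∧
      (∀ c, 1 ≤ c → c + (2*k-1) ≤ n → n ≤ c + N → Tst k U V c →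
        n ≤ 2*k*Ecnt U V n (c-1) + c + (2*k-2)) := by
  have hk := H.hk; have hke := H.hke
  intro N
  induction N with
  | zero =>
    constructor
    · intro a ha1 ha2 _
      have h0 : 0 ≤ 2*k*Ecnt U V n a := Nat.zero_le _
      omega
    · intro c hc1 hc2 hc3 _
      omega
  | succ N ih =>
    constructor
    · -- INV
      intro a ha1 ha2 hempa
      by_cases hae : a = n
      · have h0 : 0 ≤ 2*k*Ecnt U V n a := Nat.zero_le _
        omega
      have haln : a < n := by omega
      by_cases hex : ∃ j, 1 ≤ j ∧ j ≤ 2*k ∧ a + j ≤ n ∧ ¬ aocc U V (a+j)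
      · obtain ⟨j, hj1, hj2, hj3, hj4⟩ := hex
        have hrec := ih.1 (a+j) hj3 (by omega) hj4
        have hE := Ecnt_one (U := U) (V := V) (n := n) (a := a) (q := a+j)
          (by omega) hj3 hj4
        have hmul : 2*k*(Ecnt U V n (a+j) + 1) ≤ 2*k*Ecnt U V n a :=
          Nat.mul_le_mul_left _ hE
        have hexp : 2*k*(Ecnt U V n (a+j) + 1) = 2*k*Ecnt U V n (a+j) + 2*k :=
          by ring
        omega
      · push_neg at hex
        -- no empty within the next 2k columns; in particular n - a > 2k
        have h2k : a + 2*k + 1 ≤ n := by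
          by_contra hcon
          have hocc := hex (n-a) (by omega) (by omega) (by omega)
          rw [show a + (n-a) = n by omega] at hocc
          exact hend hocc
        have hw : ∀ j, j < 2*k → aocc U V (a+1+j) := by
          intro j hj
          have := hex (j+1) (by omega) (by omega) (by omega)
          rwa [show a+(j+1) = a+1+j by omega] at this
        have hemp1 : ¬ aocc U V (a+1+2*k) := canonical_empty H (a+1) hw
        have hemp1' : ¬ aocc U V (a+(2*k+1)) := by rwa [show a+1+2*k = a+(2*k+1) by omega] at hemp1
        by_cases hex2 : ∃ o, o ≤ 2*k-2 ∧ a + (2*k+2) + o ≤ n ∧ ¬ aocc U V (a + (2*k+2) + o)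
        · obtain ⟨o, ho1, ho2, ho3⟩ := hex2
          have hrec := ih.1 (a + (2*k+2) + o) ho2 (by omega) ho3
          have hE := Ecnt_two (U := U) (V := V) (n := n) (a := a)
            (q1 := a+(2*k+1)) (q2 := a + (2*k+2) + o) (by omega) (by omega) ho2 hemp1' ho3
          have hmul : 2*k*(Ecnt U V n (a+(2*k+2)+o) + 2) ≤ 2*k*Ecnt U V n a :=
            Nat.mul_le_mul_left _ hE
          have hexp : 2*k*(Ecnt U V n (a+(2*k+2)+o) + 2) = 2*k*Ecnt U V n (a+(2*k+2)+o) + (2*k)*2 :=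
            by ring
          omega
        · push_neg at hex2
          -- boundary cases
          rcases Nat.lt_or_ge n (a + (2*k+2)) with hb | hb
          · -- n = a + 2k + 1
            have hn' : n = a + (2*k+1) := by omega
            have hE := Ecnt_one (U := U) (V := V) (n := n) (a := a) (q := a+(2*k+1))
              (by omega) (by omega) hemp1'
            have : 0 ≤ Ecnt U V n (a+(2*k+1)) := Nat.zero_le _
            have h1 : 1 ≤ Ecnt U V n a := by omega
            have hmul : 2*k*1 ≤ 2*k*Ecnt U V n a := Nat.mul_le_mul_left _ h1
            omega
          · -- n ≥ a + 2k + 2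
            have hfar : a + (2*k+2) + (2*k-2) + 1 ≤ n := by
              by_contra hcon
              have hocc := hex2 (n - (a+(2*k+2))) (by omega) (by omega)
              rw [show a+(2*k+2)+(n-(a+(2*k+2))) = n by omega] at hocc
              exact hend hocc
            have hocc2 : ∀ o, o ≤ 2*k-2 → aocc U V (a + (2*k+2) + o) :=
              fun o ho => hex2 o ho (by omega)
            have hT : Tst k U V (a + (2*k+2)) := start_T H a hw hocc2
            have hrec := ih.2 (a + (2*k+2)) (by omega) (by omega) (by omega) hT
            have hE := Ecnt_one (U := U) (V := V) (n := n) (a := a) (q := a+(2*k+1))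
              (by omega) (by omega) hemp1'
            have hmul : 2*k*(Ecnt U V n (a+(2*k+1)) + 1) ≤ 2*k*Ecnt U V n a :=
              Nat.mul_le_mul_left _ hE
            have hexp : 2*k*(Ecnt U V n (a+(2*k+1)) + 1) = 2*k*Ecnt U V n (a+(2*k+1)) + 2*k :=
              by ring
            have heq : a + (2*k+2) - 1 = a + (2*k+1) := by omega
            rw [heq] at hrec
            omega
    · -- AUX
      intro c hc1 hcn hbud hT
      have hemp1 : ¬ aocc U V (c + (2*k-1)) := step_empty H c hT
      by_cases hex : ∃ o, 2*k ≤ o ∧ o ≤ 4*k-2 ∧ c + o ≤ n ∧ ¬ aocc U V (c+o)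
      · obtain ⟨o, ho1, ho2, ho3, ho4⟩ := hex
        have hrec := ih.1 (c+o) ho3 (by omega) ho4
        have hE := Ecnt_two (U := U) (V := V) (n := n) (a := c-1)
          (q1 := c+(2*k-1)) (q2 := c+o) (by omega) (by omega) ho3 hemp1 ho4
        have hmul : 2*k*(Ecnt U V n (c+o) + 2) ≤ 2*k*Ecnt U V n (c-1) :=
          Nat.mul_le_mul_left _ hE
        have hexp : 2*k*(Ecnt U V n (c+o) + 2) = 2*k*Ecnt U V n (c+o) + (2*k)*2 :=
          by ring
        omega
      · push_neg at hex
        rcases Nat.lt_or_ge n (c + 2*k) with hb | hb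
        · -- n = c + 2k - 1
          have hn' : n = c + (2*k-1) := by omega
          have hE := Ecnt_one (U := U) (V := V) (n := n) (a := c-1) (q := c+(2*k-1))
            (by omega) (by omega) hemp1
          have h1 : 1 ≤ Ecnt U V n (c-1) := by omega
          have hmul : 2*k*1 ≤ 2*k*Ecnt U V n (c-1) := Nat.mul_le_mul_left _ h1
          omega
        · have hfar : c + (4*k-1) ≤ n := by
            by_contra hcon
            have hocc := hex (n-c) (by omega) (by omega) (by omega)
            rw [show c+(n-c) = n by omega] at hocc
            exact hend hocc
          have hocc2 : ∀ o, o ≤ 2*k-2 → aocc U V (c + 2*k + o) := by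
            intro o ho
            have := hex (2*k+o) (by omega) (by omega) (by omega)
            rwa [show c+(2*k+o) = c+2*k+o by omega] at this
          have hT2 : Tst k U V (c + 2*k) := step_T H c hT hocc2
          have hrec := ih.2 (c + 2*k) (by omega) (by omega) (by omega) hT2
          have heq : c + 2*k - 1 = c + (2*k-1) := by omega
          rw [heq] at hrec
          have hE := Ecnt_one (U := U) (V := V) (n := n) (a := c-1) (q := c+(2*k-1))
            (by omega) (by omega) hemp1
          have hmul : 2*k*(Ecnt U V n (c+(2*k-1)) + 1) ≤ 2*k*Ecnt U V n (c-1) :=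
            Nat.mul_le_mul_left _ hE
          have hexp : 2*k*(Ecnt U V n (c+(2*k-1)) + 1) = 2*k*Ecnt U V n (c+(2*k-1)) + 2*k :=
            by ring
          omega

/-- Final abstract conclusion: if column 0 is empty then `n ≤ 2k·(#empties in (0,n]) + 2k`. -/
lemma density (H : Ctx k U V) (hend : ¬ aocc U V n) (h0 : ¬ aocc U V 0) :
    n ≤ 2*k*Ecnt U V n 0 + 2*k := by
  have := (main_count H hend n).1 0 (Nat.zero_le n) (by omega) h0
  omega



section Graph

variable {n k : ℕ}

lemma decomp {K q q' o o' d : ℕ} (ho : o < K) (ho' : o' < K) (hd : d ≤ K)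
    (h : K*q' + o' = K*q + o + d) :
    (q' = q ∧ o' = o + d) ∨ (q' = q + 1 ∧ o' + K = o + d) := by
  rcases Nat.lt_trichotomy q' q with hlt | heq | hgt
  · exfalso
    have h1 : K*(q'+1) ≤ K*q := Nat.mul_le_mul_left _ (by omega)
    rw [Nat.mul_add, Nat.mul_one] at h1
    omega
  · subst heq
    rw [Nat.add_assoc] at h
    exact Or.inl ⟨rfl, Nat.add_left_cancel h⟩
  · rcases Nat.lt_or_ge q' (q+2) with h2 | h2
    · have hq' : q' = q + 1 := by omega
      subst hq'
      rw [Nat.mul_add, Nat.mul_one, Nat.add_assoc, Nat.add_assoc] at h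
      have := Nat.add_left_cancel h
      exact Or.inr ⟨rfl, by omega⟩
    · exfalso
      have h1 : K*(q+2) ≤ K*q' := Nat.mul_le_mul_left _ h2
      rw [Nat.mul_add] at h1
      have : K*2 = K + K := by ring
      omega

lemma mod_bound_inj {x y : ℕ} (hx1 : 0 < x) (hx2 : x ≤ n) (hy1 : 0 < y) (hy2 : y ≤ n)
    (h : x % n = y % n) : x = y := by
  rcases Nat.lt_or_ge x n with h1 | h1
  · rcases Nat.lt_or_ge y n with h2 | h2
    · rwa [Nat.mod_eq_of_lt h1, Nat.mod_eq_of_lt h2] at h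
    · have hy : y = n := by omega
      subst hy
      rw [Nat.mod_eq_of_lt h1, Nat.mod_self] at h
      omega
  · have hx : x = n := by omega
    rw [hx, Nat.mod_self] at h
    rw [hx]
    rcases Nat.lt_or_ge y n with h2 | h2
    · rw [Nat.mod_eq_of_lt h2] at h
      omega
    · omega

lemma natCast_inj_bounded [NeZero n] {c c' : ℕ} (hc : 0 < c) (hcn : c ≤ n)
    (hc' : 0 < c') (hcn' : c' ≤ n) (h : (c : ZMod n) = (c' : ZMod n)) : c = c' := by
  have hm := (ZMod.natCast_eq_natCast_iff c c' n).1 h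
  exact mod_bound_inj hc hcn hc' hcn' hm

section WithHyp
variable (hk4 : 4 ≤ k) (hkn : 2*k < n)

lemma k_ne_zero_zmod (hk4 : 4 ≤ k) (hkn : 2*k < n) : (k : ZMod n) ≠ 0 := by
  haveI : NeZero n := ⟨by omega⟩
  intro h
  have hv : (k : ZMod n).val = k := ZMod.val_cast_of_lt (by omega)
  rw [h, ZMod.val_zero] at hv
  omega

lemma adj_uu (hk4 : 4 ≤ k) (hkn : 2*k < n) (x : ZMod n) :
    (P n k).Adj (Sum.inl x) (Sum.inl (x+1)) := by
  haveI : NeZero n := ⟨by omega⟩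
  haveI : Fact (1 < n) := ⟨by omega⟩
  rw [P, SimpleGraph.fromRel_adj]
  refine ⟨?_, Or.inl rfl⟩
  simp only [ne_eq, Sum.inl.injEq]
  intro hc
  exact one_ne_zero ((left_eq_add).1 hc)

lemma adj_spoke (x : ZMod n) : (P n k).Adj (Sum.inl x) (Sum.inr x) := by
  rw [P, SimpleGraph.fromRel_adj]
  exact ⟨by simp, Or.inl rfl⟩

lemma adj_vv (hk4 : 4 ≤ k) (hkn : 2*k < n) (x : ZMod n) :
    (P n k).Adj (Sum.inr x) (Sum.inr (x + (k:ZMod n))) := by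
  haveI : NeZero n := ⟨by omega⟩
  rw [P, SimpleGraph.fromRel_adj]
  refine ⟨?_, Or.inl rfl⟩
  simp only [ne_eq, Sum.inr.injEq]
  intro hc
  exact k_ne_zero_zmod hk4 hkn ((left_eq_add).1 hc)

lemma adj_cases (hk4 : 4 ≤ k) (hkn : 2*k < n) {x y : ZMod n ⊕ ZMod n}
    (h : (P n k).Adj x y) :
    (∃ a, x = Sum.inl a ∧ y = Sum.inl (a+1)) ∨ (∃ a, y = Sum.inl a ∧ x = Sum.inl (a+1)) ∨
    (∃ a, x = Sum.inl a ∧ y = Sum.inr a) ∨ (∃ a, y = Sum.inl a ∧ x = Sum.inr a) ∨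
    (∃ a, x = Sum.inr a ∧ y = Sum.inr (a+(k:ZMod n))) ∨
    (∃ a, y = Sum.inr a ∧ x = Sum.inr (a+(k:ZMod n))) := by
  rw [P, SimpleGraph.fromRel_adj] at h
  obtain ⟨hne, h | h⟩ := h
  · rcases x with a | a <;> rcases y with b | b <;> simp only [adjFun] at h
    · exact Or.inl ⟨a, rfl, by rw [h]⟩
    · exact Or.inr (Or.inr (Or.inl ⟨a, rfl, by rw [h]⟩))
    · exact Or.inr (Or.inr (Or.inr (Or.inr (Or.inl ⟨a, rfl, by rw [h]⟩))))
  · rcases x with a | a <;> rcases y with b | b <;> simp only [adjFun] at h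
    · exact Or.inr (Or.inl ⟨b, rfl, by rw [h]⟩)
    · exact Or.inr (Or.inr (Or.inr (Or.inl ⟨b, rfl, by rw [h]⟩)))
    · exact Or.inr (Or.inr (Or.inr (Or.inr (Or.inr ⟨b, rfl, by rw [h]⟩))))

/-- Any independent set in `P n k` gives a `Ctx` for the abstract development. -/
lemma mkCtx (hk4 : 4 ≤ k) (hke : k % 2 = 0) (hkn : 2*k < n)
    {s : Finset (ZMod n ⊕ ZMod n)} (hs : IsIndep (P n k) s) (e₀ : ZMod n) :
    Ctx k (fun x : ℕ => Sum.inl (e₀ + (x:ℕ)) ∈ s) (fun x : ℕ => Sum.inr (e₀ + (x:ℕ)) ∈ s) := by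
  haveI : NeZero n := ⟨by omega⟩
  refine ⟨hk4, hke, ?_, ?_, ?_⟩
  · intro x h1 h2
    have e : (e₀ + ((x+1:ℕ) : ZMod n)) = (e₀ + (x:ℕ)) + 1 := by push_cast; ring
    rw [e] at h2
    exact hs _ h1 _ h2 (adj_uu hk4 hkn _)
  · intro x h1 h2
    exact hs _ h1 _ h2 (adj_spoke _)
  · intro x h1 h2
    have e : (e₀ + ((x+k:ℕ) : ZMod n)) = (e₀ + (x:ℕ)) + (k:ZMod n) := by push_cast; ring
    rw [e] at h2
    exact hs _ h1 _ h2 (adj_vv hk4 hkn _)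

/-- Upper bound for any independent set. -/
lemma card_le_of_indep (hk4 : 4 ≤ k) (hke : k % 2 = 0) (hkn : 2*k < n)
    {s : Finset (ZMod n ⊕ ZMod n)} (hs : IsIndep (P n k) s) :
    2*k*s.card + n ≤ 2*k*n + 2*k := by
  classical
  haveI : NeZero n := ⟨by omega⟩
  by_cases hall : ∃ i : ZMod n, Sum.inl i ∉ s ∧ Sum.inr i ∉ s
  · obtain ⟨e₀, he1, he2⟩ := hall
    set U : ℕ → Prop := fun x : ℕ => Sum.inl (e₀ + (x:ℕ)) ∈ s with hUdef
    set V : ℕ → Prop := fun x : ℕ => Sum.inr (e₀ + (x:ℕ)) ∈ s with hVdef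
    have H : Ctx k U V := mkCtx hk4 hke hkn hs e₀
    have h0 : ¬ aocc U V 0 := by
      intro h
      rcases h with h | h
      · exact he1 (by simpa [hUdef] using h)
      · exact he2 (by simpa [hVdef] using h)
    have hend : ¬ aocc U V n := by
      intro h
      have e : e₀ + ((n:ℕ) : ZMod n) = e₀ + ((0:ℕ) : ZMod n) := by
        rw [ZMod.natCast_self, Nat.cast_zero]
      rcases h with h | h
      · exact he1 (by rw [hUdef] at h; rw [e] at h; simpa using h)
      · exact he2 (by rw [hVdef] at h; rw [e] at h; simpa using h)
    have hdens := density H hend h0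
    -- bridge: s.card + Ecnt U V n 0 ≤ n
    have hbridge : s.card + Ecnt U V n 0 ≤ n := by
      set occCol := Finset.univ.filter (fun i : ZMod n => Sum.inl i ∈ s ∨ Sum.inr i ∈ s)
        with hoccCol
      set empCol := Finset.univ.filter (fun i : ZMod n => ¬(Sum.inl i ∈ s ∨ Sum.inr i ∈ s))
        with hempCol
      have hsplit : occCol.card + empCol.card = n := by
        rw [hoccCol, hempCol, Finset.card_filter_add_card_filter_not]
        simp [Finset.card_univ, ZMod.card]
      have h1 : s.card ≤ occCol.card := by
        apply Finset.card_le_card_of_injOn (Sum.elim id id)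
        · intro v hv
          rcases v with a | a
          · simp only [hoccCol, Finset.mem_coe, Finset.mem_filter, Finset.mem_univ, true_and, Sum.elim_inl, id]
            exact Or.inl hv
          · simp only [hoccCol, Finset.mem_coe, Finset.mem_filter, Finset.mem_univ, true_and, Sum.elim_inr, id]
            exact Or.inr hv
        · intro v hv w hw hvw
          rcases v with a | a <;> rcases w with b | b <;>
            simp only [Sum.elim_inl, Sum.elim_inr, id] at hvw
          · rw [hvw]
          · exfalso; rw [hvw] at hv; exact hs _ hv _ hw (adj_spoke b)
          · exfalso; rw [hvw] at hv; exact hs _ hw _ hv (adj_spoke b)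
          · rw [hvw]
      have h2 : Ecnt U V n 0 ≤ empCol.card := by
        unfold Ecnt
        apply Finset.card_le_card_of_injOn (fun x : ℕ => e₀ + (x : ZMod n))
        · intro x hx
          simp only [Finset.mem_coe, Finset.mem_filter, Finset.mem_Ioc] at hx
          simp only [hempCol, Finset.mem_coe, Finset.mem_filter, Finset.mem_univ, true_and]
          intro hcon
          exact hx.2 hcon
        · intro x hx y hy hxy
          simp only [Finset.coe_filter, Set.mem_setOf_eq, Finset.mem_Ioc] at hx hy
          have hcc : (x : ZMod n) = (y : ZMod n) := by
            have := add_left_cancel hxy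
            exact this
          exact natCast_inj_bounded hx.1.1 hx.1.2 hy.1.1 hy.1.2 hcc
      have := h1.trans_eq rfl
      omega
    have hmul : 2*k*(s.card + Ecnt U V n 0) ≤ 2*k*n := Nat.mul_le_mul_left _ hbridge
    have hexp : 2*k*(s.card + Ecnt U V n 0) = 2*k*s.card + 2*k*Ecnt U V n 0 := by ring
    omega
  · exfalso
    push_neg at hall
    set U : ℕ → Prop := fun x : ℕ => Sum.inl ((0:ZMod n) + (x:ℕ)) ∈ s with hUdef
    set V : ℕ → Prop := fun x : ℕ => Sum.inr ((0:ZMod n) + (x:ℕ)) ∈ s with hVdef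
    have H : Ctx k U V := mkCtx hk4 hke hkn hs 0
    have hw : ∀ j, j < 2*k → aocc U V (0+j) := by
      intro j hj
      rcases em (Sum.inl ((0:ZMod n) + ((0+j:ℕ):ZMod n)) ∈ s) with h | h
      · exact Or.inl h
      · exact Or.inr (hall _ h)
    have hce := canonical_empty H 0 hw
    rcases em (Sum.inl ((0:ZMod n) + ((0+2*k:ℕ):ZMod n)) ∈ s) with h | h
    · exact hce (Or.inl h)
    · exact hce (Or.inr (hall _ h))

end WithHyp
end Graph

section Assemble

variable {n k : ℕ}

def Q1 (k : ℕ) : Finset ℕ :=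
  ((Finset.range (k/2-1)).image (fun i => 2*i+1)) ∪ ((Finset.range (k/2)).image (fun i => k+2*i))

def Q2 (k : ℕ) : Finset ℕ :=
  ((Finset.range (k/2)).image (fun i => 2*i)) ∪ ((Finset.range (k/2)).image (fun i => k-1+2*i))

lemma mem_Q1 {o : ℕ} (h : o ∈ Q1 k) :
    (∃ i, i < k/2-1 ∧ o = 2*i+1) ∨ (∃ i, i < k/2 ∧ o = k+2*i) := by
  simp only [Q1, Finset.mem_union, Finset.mem_image, Finset.mem_range] at h
  rcases h with ⟨i, hi, he⟩ | ⟨i, hi, he⟩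
  · exact Or.inl ⟨i, hi, he.symm⟩
  · exact Or.inr ⟨i, hi, he.symm⟩

lemma mem_Q2 {o : ℕ} (h : o ∈ Q2 k) :
    (∃ i, i < k/2 ∧ o = 2*i) ∨ (∃ i, i < k/2 ∧ o = k-1+2*i) := by
  simp only [Q2, Finset.mem_union, Finset.mem_image, Finset.mem_range] at h
  rcases h with ⟨i, hi, he⟩ | ⟨i, hi, he⟩
  · exact Or.inl ⟨i, hi, he.symm⟩
  · exact Or.inr ⟨i, hi, he.symm⟩

lemma Q1_lt (hk4 : 4 ≤ k) (hke : k % 2 = 0) {o : ℕ} (h : o ∈ Q1 k) : o ≤ 2*k-2 := by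
  rcases mem_Q1 h with ⟨i, hi, rfl⟩ | ⟨i, hi, rfl⟩ <;> omega

lemma Q2_lt (hk4 : 4 ≤ k) (hke : k % 2 = 0) {o : ℕ} (h : o ∈ Q2 k) : o ≤ 2*k-2 := by
  rcases mem_Q2 h with ⟨i, hi, rfl⟩ | ⟨i, hi, rfl⟩ <;> omega

lemma card_Q1 (hk4 : 4 ≤ k) (hke : k % 2 = 0) : (Q1 k).card = k - 1 := by
  have hinj1 : Function.Injective (fun i : ℕ => 2*i+1) := by
    intro a b h; simp only [] at h; omega
  have hinj2 : Function.Injective (fun i : ℕ => k+2*i) := by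
    intro a b h; simp only [] at h; omega
  have hdisj : Disjoint ((Finset.range (k/2-1)).image (fun i => 2*i+1))
      ((Finset.range (k/2)).image (fun i => k+2*i)) := by
    rw [Finset.disjoint_left]
    intro a ha hb
    simp only [Finset.mem_image, Finset.mem_range] at ha hb
    obtain ⟨i, hi, he⟩ := ha
    obtain ⟨j, hj, he2⟩ := hb
    omega
  rw [Q1, Finset.card_union_of_disjoint hdisj, Finset.card_image_of_injective _ hinj1,
    Finset.card_image_of_injective _ hinj2, Finset.card_range, Finset.card_range]
  omega

lemma card_Q2 (hk4 : 4 ≤ k) (hke : k % 2 = 0) : (Q2 k).card = k := by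
  have hinj1 : Function.Injective (fun i : ℕ => 2*i) := by
    intro a b h; simp only [] at h; omega
  have hinj2 : Function.Injective (fun i : ℕ => k-1+2*i) := by
    intro a b h; simp only [] at h; omega
  have hdisj : Disjoint ((Finset.range (k/2)).image (fun i => 2*i))
      ((Finset.range (k/2)).image (fun i => k-1+2*i)) := by
    rw [Finset.disjoint_left]
    intro a ha hb
    simp only [Finset.mem_image, Finset.mem_range] at ha hb
    obtain ⟨i, hi, he⟩ := ha
    obtain ⟨j, hj, he2⟩ := hb
    omega
  rw [Q2, Finset.card_union_of_disjoint hdisj, Finset.card_image_of_injective _ hinj1,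
    Finset.card_image_of_injective _ hinj2, Finset.card_range]
  omega

lemma exists_indep_big (hk4 : 4 ≤ k) (hke : k % 2 = 0) (hkn : 2*k < n) :
    ∃ s : Finset (ZMod n ⊕ ZMod n), IsIndep (P n k) s ∧
      s.card = (n/(2*k)-1) * (2*k-1) := by
  classical
  haveI : NeZero n := ⟨by omega⟩
  set b := n/(2*k) with hbdef
  have hbn : 2*k*b ≤ n := by
    have h := Nat.div_add_mod n (2*k)
    rw [← hbdef] at h
    omega
  have hb1 : 1 ≤ b := by
    rw [hbdef, Nat.one_le_div_iff (by omega)]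
    omega
  set f1 : ℕ × ℕ → ZMod n ⊕ ZMod n := fun p => Sum.inl ((2*k*p.1 + p.2 : ℕ) : ZMod n) with hf1
  set f2 : ℕ × ℕ → ZMod n ⊕ ZMod n := fun p => Sum.inr ((2*k*p.1 + p.2 : ℕ) : ZMod n) with hf2
  set D1 := (Finset.range (b-1)) ×ˢ Q1 k with hD1
  set D2 := (Finset.range (b-1)) ×ˢ Q2 k with hD2
  -- the key cancellation: cast-equal values with bounded data are ℕ-equal
  have key : ∀ q o q' o' (d : ℕ), q < b-1 → q' < b-1 → o ≤ 2*k-2 → o' ≤ 2*k-2 → d ≤ k →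
      ((2*k*q'+o' : ℕ) : ZMod n) = ((2*k*q+o+d : ℕ) : ZMod n) →
      2*k*q' + o' = 2*k*q + o + d := by
    intro q o q' o' d hq hq' ho ho' hd hc
    have hm := (ZMod.natCast_eq_natCast_iff _ _ _).1 hc
    have hmul1 : 2*k*(q'+1) ≤ 2*k*(b-1) := Nat.mul_le_mul_left _ (by omega)
    have hmul2 : 2*k*(q+1) ≤ 2*k*(b-1) := Nat.mul_le_mul_left _ (by omega)
    have he1 : 2*k*(q'+1) = 2*k*q' + 2*k := by ring
    have he2 : 2*k*(q+1) = 2*k*q + 2*k := by ring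
    have he3 : 2*k*(b-1) + 2*k = 2*k*b := by
      calc 2*k*(b-1) + 2*k = 2*k*((b-1)+1) := by ring
        _ = 2*k*b := by rw [Nat.sub_add_cancel hb1]
    have hlt1 : 2*k*q' + o' < n := by omega
    have hlt2 : 2*k*q + o + d < n := by omega
    unfold Nat.ModEq at hm
    rwa [Nat.mod_eq_of_lt hlt1, Nat.mod_eq_of_lt hlt2] at hm
  have extract : ∀ x, x ∈ D1.image f1 ∪ D2.image f2 →
      (∃ q o, q < b-1 ∧ o ∈ Q1 k ∧ x = Sum.inl ((2*k*q+o : ℕ) : ZMod n)) ∨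
      (∃ q o, q < b-1 ∧ o ∈ Q2 k ∧ x = Sum.inr ((2*k*q+o : ℕ) : ZMod n)) := by
    intro x hx
    rcases Finset.mem_union.1 hx with hx | hx
    · obtain ⟨p, hp, hpe⟩ := Finset.mem_image.1 hx
      obtain ⟨hp1, hp2⟩ := Finset.mem_product.1 hp
      exact Or.inl ⟨p.1, p.2, Finset.mem_range.1 hp1, hp2, hpe.symm⟩
    · obtain ⟨p, hp, hpe⟩ := Finset.mem_image.1 hx
      obtain ⟨hp1, hp2⟩ := Finset.mem_product.1 hp
      exact Or.inr ⟨p.1, p.2, Finset.mem_range.1 hp1, hp2, hpe.symm⟩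
  refine ⟨D1.image f1 ∪ D2.image f2, ?_, ?_⟩
  · -- independence
    intro vv hvv ww hww hadj
    have hv' := extract vv hvv
    have hw' := extract ww hww
    rcases adj_cases hk4 hkn hadj with ⟨a, hx, hy⟩ | ⟨a, hx, hy⟩ | ⟨a, hx, hy⟩ |
      ⟨a, hx, hy⟩ | ⟨a, hx, hy⟩ | ⟨a, hx, hy⟩
    · -- vv = inl a, ww = inl (a+1) : outer consecutive
      rcases hv' with ⟨q, o, hq, ho, hve⟩ | ⟨q, o, hq, ho, hve⟩
      swap
      · rw [hve] at hx; cases hx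
      rcases hw' with ⟨q', o', hq', ho', hwe⟩ | ⟨q', o', hq', ho', hwe⟩
      swap
      · rw [hwe] at hy; cases hy
      rw [hve] at hx; rw [hwe] at hy
      have ha := Sum.inl.inj hx
      have hb' := Sum.inl.inj hy
      have hcc : ((2*k*q'+o' : ℕ) : ZMod n) = ((2*k*q+o+1 : ℕ) : ZMod n) := by
        rw [hb', ← ha]; push_cast; ring
      have heq := key q o q' o' 1 hq hq' (Q1_lt hk4 hke ho) (Q1_lt hk4 hke ho') (by omega) hcc
      rcases decomp (K := 2*k) (by have := Q1_lt hk4 hke ho; omega)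
        (by have := Q1_lt hk4 hke ho'; omega) (by omega) heq with ⟨h1, h2⟩ | ⟨h1, h2⟩
      · rcases mem_Q1 ho with ⟨i, hi, rfl⟩ | ⟨i, hi, rfl⟩ <;>
          rcases mem_Q1 ho' with ⟨j, hj, rfl⟩ | ⟨j, hj, rfl⟩ <;> omega
      · have := Q1_lt hk4 hke ho; have := Q1_lt hk4 hke ho'; omega
    · -- ww = inl a, vv = inl (a+1)
      rcases hv' with ⟨q, o, hq, ho, hve⟩ | ⟨q, o, hq, ho, hve⟩
      swap
      · rw [hve] at hy; cases hy
      rcases hw' with ⟨q', o', hq', ho', hwe⟩ | ⟨q', o', hq', ho', hwe⟩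
      swap
      · rw [hwe] at hx; cases hx
      rw [hve] at hy; rw [hwe] at hx
      have ha := Sum.inl.inj hx
      have hb' := Sum.inl.inj hy
      have hcc : ((2*k*q+o : ℕ) : ZMod n) = ((2*k*q'+o'+1 : ℕ) : ZMod n) := by
        rw [hb', ← ha]; push_cast; ring
      have heq := key q' o' q o 1 hq' hq (Q1_lt hk4 hke ho') (Q1_lt hk4 hke ho) (by omega) hcc
      rcases decomp (K := 2*k) (by have := Q1_lt hk4 hke ho'; omega)
        (by have := Q1_lt hk4 hke ho; omega) (by omega) heq with ⟨h1, h2⟩ | ⟨h1, h2⟩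
      · rcases mem_Q1 ho with ⟨i, hi, rfl⟩ | ⟨i, hi, rfl⟩ <;>
          rcases mem_Q1 ho' with ⟨j, hj, rfl⟩ | ⟨j, hj, rfl⟩ <;> omega
      · have := Q1_lt hk4 hke ho; have := Q1_lt hk4 hke ho'; omega
    · -- vv = inl a, ww = inr a : spoke
      rcases hv' with ⟨q, o, hq, ho, hve⟩ | ⟨q, o, hq, ho, hve⟩
      swap
      · rw [hve] at hx; cases hx
      rcases hw' with ⟨q', o', hq', ho', hwe⟩ | ⟨q', o', hq', ho', hwe⟩
      · rw [hwe] at hy; cases hy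
      rw [hve] at hx; rw [hwe] at hy
      have ha := Sum.inl.inj hx
      have hb' := Sum.inr.inj hy
      have hcc : ((2*k*q'+o' : ℕ) : ZMod n) = ((2*k*q+o+0 : ℕ) : ZMod n) := by
        rw [hb', ← ha]; push_cast; ring
      have heq := key q o q' o' 0 hq hq' (Q1_lt hk4 hke ho) (Q2_lt hk4 hke ho') (by omega) hcc
      rcases decomp (K := 2*k) (by have := Q1_lt hk4 hke ho; omega)
        (by have := Q2_lt hk4 hke ho'; omega) (by omega) heq with ⟨h1, h2⟩ | ⟨h1, h2⟩
      · rcases mem_Q1 ho with ⟨i, hi, rfl⟩ | ⟨i, hi, rfl⟩ <;>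
          rcases mem_Q2 ho' with ⟨j, hj, rfl⟩ | ⟨j, hj, rfl⟩ <;> omega
      · have := Q1_lt hk4 hke ho; have := Q2_lt hk4 hke ho'; omega
    · -- ww = inl a, vv = inr a : spoke reversed
      rcases hv' with ⟨q, o, hq, ho, hve⟩ | ⟨q, o, hq, ho, hve⟩
      · rw [hve] at hy; cases hy
      rcases hw' with ⟨q', o', hq', ho', hwe⟩ | ⟨q', o', hq', ho', hwe⟩
      swap
      · rw [hwe] at hx; cases hx
      rw [hve] at hy; rw [hwe] at hx
      have ha := Sum.inl.inj hx
      have hb' := Sum.inr.inj hy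
      have hcc : ((2*k*q'+o' : ℕ) : ZMod n) = ((2*k*q+o+0 : ℕ) : ZMod n) := by
        rw [ha, ← hb']; push_cast; ring
      have heq := key q o q' o' 0 hq hq' (Q2_lt hk4 hke ho) (Q1_lt hk4 hke ho') (by omega) hcc
      rcases decomp (K := 2*k) (by have := Q2_lt hk4 hke ho; omega)
        (by have := Q1_lt hk4 hke ho'; omega) (by omega) heq with ⟨h1, h2⟩ | ⟨h1, h2⟩
      · rcases mem_Q2 ho with ⟨i, hi, rfl⟩ | ⟨i, hi, rfl⟩ <;>
          rcases mem_Q1 ho' with ⟨j, hj, rfl⟩ | ⟨j, hj, rfl⟩ <;> omega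
      · have := Q2_lt hk4 hke ho; have := Q1_lt hk4 hke ho'; omega
    · -- vv = inr a, ww = inr (a+k) : inner
      rcases hv' with ⟨q, o, hq, ho, hve⟩ | ⟨q, o, hq, ho, hve⟩
      · rw [hve] at hx; cases hx
      rcases hw' with ⟨q', o', hq', ho', hwe⟩ | ⟨q', o', hq', ho', hwe⟩
      · rw [hwe] at hy; cases hy
      rw [hve] at hx; rw [hwe] at hy
      have ha := Sum.inr.inj hx
      have hb' := Sum.inr.inj hy
      have hcc : ((2*k*q'+o' : ℕ) : ZMod n) = ((2*k*q+o+k : ℕ) : ZMod n) := by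
        rw [hb', ← ha]; push_cast; ring
      have heq := key q o q' o' k hq hq' (Q2_lt hk4 hke ho) (Q2_lt hk4 hke ho') (by omega) hcc
      rcases decomp (K := 2*k) (by have := Q2_lt hk4 hke ho; omega)
        (by have := Q2_lt hk4 hke ho'; omega) (by omega) heq with ⟨h1, h2⟩ | ⟨h1, h2⟩
      · rcases mem_Q2 ho with ⟨i, hi, rfl⟩ | ⟨i, hi, rfl⟩ <;>
          rcases mem_Q2 ho' with ⟨j, hj, rfl⟩ | ⟨j, hj, rfl⟩ <;> omega
      · rcases mem_Q2 ho with ⟨i, hi, rfl⟩ | ⟨i, hi, rfl⟩ <;>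
          rcases mem_Q2 ho' with ⟨j, hj, rfl⟩ | ⟨j, hj, rfl⟩ <;> omega
    · -- ww = inr a, vv = inr (a+k) : inner reversed
      rcases hv' with ⟨q, o, hq, ho, hve⟩ | ⟨q, o, hq, ho, hve⟩
      · rw [hve] at hy; cases hy
      rcases hw' with ⟨q', o', hq', ho', hwe⟩ | ⟨q', o', hq', ho', hwe⟩
      · rw [hwe] at hx; cases hx
      rw [hve] at hy; rw [hwe] at hx
      have ha := Sum.inr.inj hx
      have hb' := Sum.inr.inj hy
      have hcc : ((2*k*q+o : ℕ) : ZMod n) = ((2*k*q'+o'+k : ℕ) : ZMod n) := by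
        rw [hb', ← ha]; push_cast; ring
      have heq := key q' o' q o k hq' hq (Q2_lt hk4 hke ho') (Q2_lt hk4 hke ho) (by omega) hcc
      rcases decomp (K := 2*k) (by have := Q2_lt hk4 hke ho'; omega)
        (by have := Q2_lt hk4 hke ho; omega) (by omega) heq with ⟨h1, h2⟩ | ⟨h1, h2⟩
      · rcases mem_Q2 ho with ⟨i, hi, rfl⟩ | ⟨i, hi, rfl⟩ <;>
          rcases mem_Q2 ho' with ⟨j, hj, rfl⟩ | ⟨j, hj, rfl⟩ <;> omega
      · rcases mem_Q2 ho with ⟨i, hi, rfl⟩ | ⟨i, hi, rfl⟩ <;>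
          rcases mem_Q2 ho' with ⟨j, hj, rfl⟩ | ⟨j, hj, rfl⟩ <;> omega
  · -- cardinality
    have hinjcast : ∀ (p p' : ℕ × ℕ), p.1 < b-1 → p.2 ≤ 2*k-2 → p'.1 < b-1 → p'.2 ≤ 2*k-2 →
        ((2*k*p.1 + p.2 : ℕ) : ZMod n) = ((2*k*p'.1 + p'.2 : ℕ) : ZMod n) → p = p' := by
      intro p p' h1 h2 h3 h4 hc
      have hcc : ((2*k*p.1+p.2 : ℕ) : ZMod n) = ((2*k*p'.1+p'.2+0 : ℕ) : ZMod n) := by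
        rw [hc]; norm_num
      have heq := key p'.1 p'.2 p.1 p.2 0 h3 h1 h4 h2 (by omega) hcc
      rcases decomp (K := 2*k) (by omega) (by omega) (by omega) heq with ⟨ha, hb'⟩ | ⟨ha, hb'⟩
      · exact Prod.ext ha (by omega)
      · omega
    have hdisj : Disjoint (D1.image f1) (D2.image f2) := by
      rw [Finset.disjoint_left]
      intro x hx1 hx2
      obtain ⟨p, _, hpe⟩ := Finset.mem_image.1 hx1
      obtain ⟨p', _, hpe'⟩ := Finset.mem_image.1 hx2
      rw [← hpe] at hpe'
      simp [hf1, hf2] at hpe'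
    rw [Finset.card_union_of_disjoint hdisj]
    have hc1 : (D1.image f1).card = (b-1)*(k-1) := by
      rw [Finset.card_image_of_injOn, hD1, Finset.card_product, Finset.card_range,
        card_Q1 hk4 hke]
      intro p hp p' hp' he
      simp only [hD1, Finset.coe_product, Set.mem_prod, Finset.mem_coe, Finset.mem_range] at hp hp'
      exact hinjcast p p' hp.1 (Q1_lt hk4 hke hp.2) hp'.1 (Q1_lt hk4 hke hp'.2)
        (Sum.inl.inj he)
    have hc2 : (D2.image f2).card = (b-1)*k := by
      rw [Finset.card_image_of_injOn, hD2, Finset.card_product, Finset.card_range,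
        card_Q2 hk4 hke]
      intro p hp p' hp' he
      simp only [hD2, Finset.coe_product, Set.mem_prod, Finset.mem_coe, Finset.mem_range] at hp hp'
      exact hinjcast p p' hp.1 (Q2_lt hk4 hke hp.2) hp'.1 (Q2_lt hk4 hke hp'.2)
        (Sum.inr.inj he)
    rw [hc1, hc2, ← Nat.mul_add, show (k-1) + k = 2*k-1 by omega]

lemma alpha_bdd (hn : 0 < n) :
    BddAbove {m | ∃ s : Finset (ZMod n ⊕ ZMod n), IsIndep (P n k) s ∧ s.card = m} := by
  haveI : NeZero n := ⟨by omega⟩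
  refine ⟨n+n, ?_⟩
  rintro m ⟨s, _, rfl⟩
  have h1 := Finset.card_le_univ s
  rwa [Fintype.card_sum, ZMod.card] at h1

lemma alpha_upper (hk4 : 4 ≤ k) (hke : k % 2 = 0) (hkn : 2*k < n) :
    2*k*(alpha n k) + n ≤ 2*k*n + 2*k := by
  have hne : {m | ∃ s : Finset (ZMod n ⊕ ZMod n), IsIndep (P n k) s ∧ s.card = m}.Nonempty :=
    ⟨0, ∅, fun v hv => absurd hv (Finset.notMem_empty v), Finset.card_empty⟩
  obtain ⟨s, hs, hc⟩ := Nat.sSup_mem hne (alpha_bdd (by omega))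
  have : alpha n k = s.card := by
    rw [alpha, indepNum, ← hc]
  rw [this]
  exact card_le_of_indep hk4 hke hkn hs

lemma alpha_lower (hk4 : 4 ≤ k) (hke : k % 2 = 0) (hkn : 2*k < n) :
    (n/(2*k)-1)*(2*k-1) ≤ alpha n k := by
  obtain ⟨s, hs, hc⟩ := exists_indep_big hk4 hke hkn
  rw [alpha, indepNum]
  exact le_csSup (alpha_bdd (by omega)) ⟨s, hs, hc⟩

end Assemble

/-- There is a constant `C > 0` such that for every even `k > 2` and
every `n > 2k`, `|α(P(n,k)) − (2k−1)n/(2k)| ≤ C·k`. -/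
theorem alpha_asymptotics :
    ∃ C : ℝ, 0 < C ∧ ∀ n k : ℕ, Even k → 2 < k → 2 * k < n →
      |(alpha n k : ℝ) - (2 * (k : ℝ) - 1) * n / (2 * k)| ≤ C * k := by
  refine ⟨5, by norm_num, ?_⟩
  intro n k hke hk2 hkn
  have hk4 : 4 ≤ k := by
    rcases hke with ⟨m, hm⟩
    omega
  have hke' : k % 2 = 0 := Nat.even_iff.1 hke
  have hU := alpha_upper (n := n) (k := k) hk4 hke' hkn
  have hL := alpha_lower (n := n) (k := k) hk4 hke' hkn
  set b := n/(2*k) with hbdef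
  have hb1 : 1 ≤ b := by
    rw [hbdef, Nat.one_le_div_iff (by omega)]
    omega
  have hbu : 2*k*b ≤ n ∧ n < 2*k*b + 2*k := by
    have h1 := Nat.div_add_mod n (2*k)
    rw [← hbdef] at h1
    have h2 : n % (2*k) < 2*k := Nat.mod_lt _ (by omega)
    omega
  have hcast : (((b-1)*(2*k-1) : ℕ) : ℝ) = ((b:ℝ)-1)*(2*(k:ℝ)-1) := by
    rw [Nat.cast_mul, Nat.cast_sub hb1, Nat.cast_sub (by omega : 1 ≤ 2*k)]
    push_cast
    ring
  set A := (alpha n k : ℝ) with hA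
  have hA1 : 2*(k:ℝ)*A + n ≤ 2*(k:ℝ)*n + 2*(k:ℝ) := by
    rw [hA]; exact_mod_cast hU
  have hA2 : ((b:ℝ)-1)*(2*(k:ℝ)-1) ≤ A := by
    rw [← hcast, hA]
    exact_mod_cast hL
  have hN1 : 2*(k:ℝ)*(b:ℝ) ≤ n := by exact_mod_cast hbu.1
  have hN2 : (n:ℝ) < 2*(k:ℝ)*(b:ℝ) + 2*(k:ℝ) := by exact_mod_cast hbu.2
  have hk4' : (4:ℝ) ≤ (k:ℝ) := by exact_mod_cast hk4
  have hkpos : (0:ℝ) < 2*(k:ℝ) := by linarith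
  have hT : (2*(k:ℝ)-1)*(n:ℝ)/(2*(k:ℝ))*(2*(k:ℝ)) = (2*(k:ℝ)-1)*(n:ℝ) :=
    div_mul_cancel₀ _ (ne_of_gt hkpos)
  rw [abs_le]
  constructor
  · -- T - A ≤ 5k
    have e1 : (2*(k:ℝ))*(((b:ℝ)-1)*(2*(k:ℝ)-1)) ≤ 2*(k:ℝ)*A :=
      mul_le_mul_of_nonneg_left hA2 (by linarith)
    have e2 : (2*(k:ℝ)-1)*(n:ℝ) ≤ (2*(k:ℝ)-1)*(2*(k:ℝ)*(b:ℝ) + 2*(k:ℝ)) :=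
      mul_le_mul_of_nonneg_left (le_of_lt hN2) (by linarith)
    have e3 : (2*(k:ℝ)-1)*(2*(k:ℝ)*(b:ℝ)+2*(k:ℝ)) - 2*(k:ℝ)*(((b:ℝ)-1)*(2*(k:ℝ)-1))
        = (2*(k:ℝ)-1)*(4*(k:ℝ)) := by ring
    have key : (2*(k:ℝ)-1)*(n:ℝ) - 2*(k:ℝ)*A ≤ (2*(k:ℝ)-1)*(4*(k:ℝ)) := by linarith
    have e4 : (2*(k:ℝ)-1)*(4*(k:ℝ)) ≤ 5*(k:ℝ)*(2*(k:ℝ)) := by nlinarith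
    have hfin : ((2*(k:ℝ)-1)*(n:ℝ)/(2*(k:ℝ)) - A)*(2*(k:ℝ)) ≤ 5*(k:ℝ)*(2*(k:ℝ)) := by
      rw [sub_mul, hT]
      linarith
    have := le_of_mul_le_mul_right hfin hkpos
    linarith
  · -- A - T ≤ 5k
    have key : 2*(k:ℝ)*A - (2*(k:ℝ)-1)*(n:ℝ) ≤ 2*(k:ℝ) := by linarith
    have e4 : (2:ℝ)*(k:ℝ) ≤ 5*(k:ℝ)*(2*(k:ℝ)) := by nlinarith
    have hfin : (A - (2*(k:ℝ)-1)*(n:ℝ)/(2*(k:ℝ)))*(2*(k:ℝ)) ≤ 5*(k:ℝ)*(2*(k:ℝ)) := by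
      rw [sub_mul, hT]
      linarith
    have := le_of_mul_le_mul_right hfin hkpos
    linarith

end GP
end

section
/- For every integer n > 8: α(P(n,4)) = 7n/8 if n ≡ 0 (mod 8); α(P(n,4)) = 7(n−1)/8 if n ≡ 1 (mod 8); α(P(n,4)) = 7(n−2)/8 + 1 if n ≡ 2 (mod 8); α(P(n,4)) = 7(n−3)/8 + 2 if n ≡ 3 (mod 8); and α(P(n,4)) = 7(n−5)/8 + 4 if n ≡ 5 (mod 8). -/
namespace GP

open Finset in
/-- potential function for the discharging argument -/
def pot : Bool → Bool → Bool → Bool → Bool → ℤ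
  | false, false, false, false, false => 8
  | false, false, false, false, true  => 6
  | false, false, false, true,  false => 8
  | false, false, false, true,  true  => 3
  | false, false, true,  false, false => 7
  | false, false, true,  false, true  => 4
  | false, false, true,  true,  false => 2
  | false, false, true,  true,  true  => 2
  | false, true,  false, false, false => 8
  | false, true,  false, false, true  => 6
  | false, true,  false, true,  false => 8
  | false, true,  false, true,  true  => 3
  | false, true,  true,  false, false => 2
  | false, true,  true,  false, true  => 1
  | false, true,  true,  true,  false => 2
  | false, true,  true,  true,  true  => 1
  | true,  false, false, false, false => 7
  | true,  false, false, true,  false => 5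
  | true,  false, true,  false, false => 7
  | true,  false, true,  true,  false => 2
  | true,  true,  false, false, false => 1
  | true,  true,  false, true,  false => 0
  | true,  true,  true,  false, false => 1
  | true,  true,  true,  true,  false => 0
  | _, _, _, _, _ => 0

def bi (x : Bool) : ℤ := if x then 1 else 0

lemma key : ∀ a b3 b2 b1 b0 a' b' : Bool, (a && b0) = false → (a' && b') = false →
    (a && a') = false → (b3 && b') = false →
    8 * (bi a' + bi b') + pot a' b2 b1 b0 b' ≤ 7 + pot a b3 b2 b1 b0 := by decide

lemma upper_bound (n : ℕ) (hn : 8 < n) (S : Finset (ZMod n ⊕ ZMod n))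
    (hS : IsIndep (P n 4) S) : S.card ≤ 7 * n / 8 := by
  haveI : NeZero n := ⟨by omega⟩
  have h1 : (1 : ZMod n) ≠ 0 := by
    intro h
    have : ((1:ℕ) : ZMod n) = 0 := by exact_mod_cast h
    rw [ZMod.natCast_eq_zero_iff] at this
    have := Nat.le_of_dvd one_pos this
    omega
  have h4 : ((4:ℕ) : ZMod n) ≠ 0 := by
    intro h
    rw [ZMod.natCast_eq_zero_iff] at h
    have := Nat.le_of_dvd (by norm_num) h
    omega
  set A : ZMod n → Bool := fun i => decide (u n i ∈ S) with hA
  set B : ZMod n → Bool := fun i => decide (v n i ∈ S) with hB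
  have adj_uv : ∀ i : ZMod n, (P n 4).Adj (u n i) (v n i) := by
    intro i
    refine ⟨by simp [u, v], Or.inl ?_⟩
    show (i : ZMod n) = i
    rfl
  have adj_uu : ∀ i : ZMod n, (P n 4).Adj (u n i) (u n (i + 1)) := by
    intro i
    refine ⟨?_, Or.inl rfl⟩
    simp only [u, Ne, Sum.inl.injEq]
    intro h
    exact h1 (by linear_combination -h)
  have adj_vv : ∀ i : ZMod n, (P n 4).Adj (v n i) (v n (i + 4)) := by
    intro i
    refine ⟨?_, Or.inl ?_⟩
    · simp only [v, Ne, Sum.inr.injEq]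
      intro h
      apply h4
      push_cast
      linear_combination -h
    · show i + (4:ZMod n) = i + ((4:ℕ) : ZMod n)
      push_cast
      ring
  have f1 : ∀ i : ZMod n, (A i && B i) = false := by
    intro i
    by_cases hu : u n i ∈ S
    · by_cases hv : v n i ∈ S
      · exact absurd (adj_uv i) (hS _ hu _ hv)
      · simp [hA, hB, hv]
    · simp [hA, hu]
  have f2 : ∀ i : ZMod n, (A i && A (i + 1)) = false := by
    intro i
    by_cases hu : u n i ∈ S
    · by_cases hv : u n (i+1) ∈ S
      · exact absurd (adj_uu i) (hS _ hu _ hv)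
      · simp [hA, hv]
    · simp [hA, hu]
  have f3 : ∀ i : ZMod n, (B i && B (i + 4)) = false := by
    intro i
    by_cases hu : v n i ∈ S
    · by_cases hv : v n (i+4) ∈ S
      · exact absurd (adj_vv i) (hS _ hu _ hv)
      · simp [hB, hv]
    · simp [hB, hu]
  set W : ZMod n → ℤ := fun i => bi (A i) + bi (B i) with hW
  set PT : ZMod n → ℤ := fun i => pot (A i) (B (i-3)) (B (i-2)) (B (i-1)) (B i) with hPT
  have step : ∀ i : ZMod n, 8 * W (i+1) + PT (i+1) ≤ 7 + PT i := by
    intro i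
    have e1 : i + 1 - 3 = i - 2 := by ring
    have e2 : i + 1 - 2 = i - 1 := by ring
    have e3 : i + 1 - 1 = i := by ring
    have e4 : i - 3 + 4 = i + 1 := by ring
    have hb3 := f3 (i - 3)
    rw [e4] at hb3
    have := key (A i) (B (i-3)) (B (i-2)) (B (i-1)) (B i) (A (i+1)) (B (i+1))
      (f1 i) (f1 (i+1)) (f2 i) hb3
    simpa [hW, hPT, e1, e2, e3] using this
  -- sum it up
  have sum_step : ∑ i : ZMod n, (8 * W (i+1) + PT (i+1)) ≤ ∑ i : ZMod n, (7 + PT i) :=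
    Finset.sum_le_sum fun i _ => step i
  have reW : ∑ i : ZMod n, W (i+1) = ∑ i : ZMod n, W i := Equiv.sum_comp (Equiv.addRight 1) W
  have rePT : ∑ i : ZMod n, PT (i+1) = ∑ i : ZMod n, PT i := Equiv.sum_comp (Equiv.addRight 1) PT
  have main : 8 * ∑ i : ZMod n, W i ≤ 7 * n := by
    have l1 : ∑ i : ZMod n, (8 * W (i+1) + PT (i+1)) = 8 * ∑ i : ZMod n, W i + ∑ i : ZMod n, PT i := by
      rw [Finset.sum_add_distrib, ← Finset.mul_sum, reW, rePT]
    have l2 : ∑ i : ZMod n, (7 + PT i) = 7 * n + ∑ i : ZMod n, PT i := by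
      rw [Finset.sum_add_distrib]
      congr 1
      simp [Finset.sum_const, ZMod.card]
      try ring
    rw [l1, l2] at sum_step
    omega
  have cardS : (S.card : ℤ) = ∑ i : ZMod n, W i := by
    have : S.card = ∑ x : ZMod n ⊕ ZMod n, (if x ∈ S then 1 else 0) := by
      rw [Finset.sum_boole]
      simp
    rw [this]
    push_cast
    rw [Fintype.sum_sum_type]
    rw [← Finset.sum_add_distrib]
    apply Finset.sum_congr rfl
    intro i _
    by_cases h1 : Sum.inl i ∈ S <;> by_cases h2 : (Sum.inr i : ZMod n ⊕ ZMod n) ∈ S <;>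
      simp [hW, bi, hA, hB, u, v, h1, h2]
  have : 8 * (S.card : ℤ) ≤ 7 * n := by rw [cardS]; exact main
  have : 8 * S.card ≤ 7 * n := by exact_mod_cast this
  omega

open Finset


lemma natmodeq (n : ℕ) (hn : 0 < n) (i j c : ℕ) (hi : i < n) (hj : j < n) (hc : c < n)
    (h : (j : ZMod n) = (i : ZMod n) + (c : ℕ)) : j = i + c ∨ j + n = i + c := by
  have h2 : ((j : ℕ) : ZMod n) = ((i + c : ℕ) : ZMod n) := by push_cast; exact h
  rw [ZMod.natCast_eq_natCast_iff'] at h2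
  rw [Nat.mod_eq_of_lt hj] at h2
  rcases lt_or_ge (i + c) n with hlt | hge
  · left; rw [Nat.mod_eq_of_lt hlt] at h2; omega
  · right
    have h3 : (i + c) % n = i + c - n := by
      rw [Nat.mod_eq_sub_mod hge, Nat.mod_eq_of_lt (by omega)]
    omega

lemma cast_inj_of_lt (n : ℕ) (hn : 0 < n) (i j : ℕ) (hi : i < n) (hj : j < n)
    (h : (i : ZMod n) = (j : ZMod n)) : i = j := by
  rw [ZMod.natCast_eq_natCast_iff', Nat.mod_eq_of_lt hi, Nat.mod_eq_of_lt hj] at h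
  exact h

lemma build (n : ℕ) (hn : 8 < n) (PU PV : ℕ → Prop) [DecidablePred PU] [DecidablePred PV]
    (hUV : ∀ i, i < n → PU i → PV i → False)
    (hUU : ∀ i, i + 1 < n → PU i → PU (i + 1) → False)
    (hUUw : PU (n - 1) → PU 0 → False)
    (hVV : ∀ i, i + 4 < n → PV i → PV (i + 4) → False)
    (hVVw : ∀ i, i < n → n ≤ i + 4 → PV i → PV (i + 4 - n) → False) :
    ∃ s : Finset (ZMod n ⊕ ZMod n), IsIndep (P n 4) s ∧
      s.card = ((range n).filter PU).card + ((range n).filter PV).card := by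
  have hn0 : 0 < n := by omega
  refine ⟨((range n).filter PU).image (fun i : ℕ => u n i) ∪
    ((range n).filter PV).image (fun i : ℕ => v n i), ?_, ?_⟩
  · rintro x hx y hy hadj
    rw [P, SimpleGraph.fromRel_adj] at hadj
    simp only [mem_union, mem_image, mem_filter, mem_range, u, v] at hx hy
    obtain ⟨hne, hor⟩ := hadj
    rcases hx with ⟨i, ⟨hi, hPi⟩, rfl⟩ | ⟨i, ⟨hi, hPi⟩, rfl⟩ <;>
      rcases hy with ⟨j, ⟨hj, hPj⟩, rfl⟩ | ⟨j, ⟨hj, hPj⟩, rfl⟩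
    · -- u u
      rcases hor with h | h <;> simp only [adjFun] at h
      · have h1 : (j : ZMod n) = (i : ZMod n) + ((1:ℕ) : ZMod n) := by push_cast; exact_mod_cast h
        rcases natmodeq n hn0 i j 1 hi hj (by omega) h1 with h2 | h2
        · exact hUU i (by omega) hPi (h2 ▸ hPj)
        · have e1 : i = n - 1 := by omega
          have e2 : j = 0 := by omega
          exact hUUw (e1 ▸ hPi) (e2 ▸ hPj)
      · have h1 : (i : ZMod n) = (j : ZMod n) + ((1:ℕ) : ZMod n) := by push_cast; exact_mod_cast h
        rcases natmodeq n hn0 j i 1 hj hi (by omega) h1 with h2 | h2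
        · exact hUU j (by omega) hPj (h2 ▸ hPi)
        · have e1 : j = n - 1 := by omega
          have e2 : i = 0 := by omega
          exact hUUw (e1 ▸ hPj) (e2 ▸ hPi)
    · -- u v
      rcases hor with h | h <;> simp only [adjFun] at h
      have h1 : j = i := cast_inj_of_lt n hn0 j i hj hi h
      exact hUV i hi hPi (h1 ▸ hPj)
    · -- v u
      rcases hor with h | h <;> simp only [adjFun] at h
      have h1 : i = j := cast_inj_of_lt n hn0 i j hi hj h
      exact hUV j hj hPj (h1 ▸ hPi)
    · -- v v
      rcases hor with h | h <;> simp only [adjFun] at h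
      · have h1 : (j : ZMod n) = (i : ZMod n) + ((4:ℕ) : ZMod n) := by exact_mod_cast h
        rcases natmodeq n hn0 i j 4 hi hj (by omega) h1 with h2 | h2
        · exact hVV i (by omega) hPi (h2 ▸ hPj)
        · have e2 : j = i + 4 - n := by omega
          exact hVVw i hi (by omega) hPi (e2 ▸ hPj)
      · have h1 : (i : ZMod n) = (j : ZMod n) + ((4:ℕ) : ZMod n) := by exact_mod_cast h
        rcases natmodeq n hn0 j i 4 hj hi (by omega) h1 with h2 | h2
        · exact hVV j (by omega) hPj (h2 ▸ hPi)
        · have e2 : i = j + 4 - n := by omega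
          exact hVVw j hj (by omega) hPj (e2 ▸ hPi)
  · rw [card_union_of_disjoint, card_image_of_injOn, card_image_of_injOn]
    · intro a ha b hb hab
      simp only [coe_filter, mem_range, Set.mem_setOf_eq] at ha hb
      simp only [v, Sum.inr.injEq] at hab
      exact cast_inj_of_lt n hn0 a b ha.1 hb.1 hab
    · intro a ha b hb hab
      simp only [coe_filter, mem_range, Set.mem_setOf_eq] at ha hb
      simp only [u, Sum.inl.injEq] at hab
      exact cast_inj_of_lt n hn0 a b ha.1 hb.1 hab
    · rw [disjoint_left]
      rintro x hx hy
      simp only [mem_image, u, v] at hx hy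
      obtain ⟨a, _, rfl⟩ := hx
      obtain ⟨b, _, hb⟩ := hy
      cases hb



lemma count_periodic (q : ℕ) (Pr pS : ℕ → Prop) [DecidablePred Pr] [DecidablePred pS]
    (h : ∀ i, i < 8 * q → (Pr i ↔ pS (i % 8))) :
    ((range (8 * q)).filter Pr).card = q * ((range 8).filter pS).card := by
  induction q with
  | zero => simp
  | succ q ih =>
    have e : 8 * (q + 1) = 8 * q + 8 := by ring
    rw [e, Finset.range_add, filter_union, card_union_of_disjoint]
    · rw [ih (fun i hi => h i (by omega))]
      have e2 : (((range 8).map (addLeftEmbedding (8 * q))).filter Pr).card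
          = ((range 8).filter pS).card := by
        rw [Finset.filter_map, card_map]
        apply congrArg
        apply filter_congr
        intro x hx
        simp only [mem_range] at hx
        have h1 := h (8 * q + x) (by omega)
        have h2 : (8 * q + x) % 8 = x := by omega
        simp only [addLeftEmbedding, Function.comp, Function.Embedding.coeFn_mk]
        rw [h1, h2]
      rw [e2]
      ring
    · rw [disjoint_left]
      intro a ha hb
      simp only [mem_filter, mem_range, mem_map, addLeftEmbedding] at ha hb
      obtain ⟨⟨b, hb1, hb2⟩, _⟩ := hb
      simp only [Function.Embedding.coeFn_mk] at hb2
      omega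

lemma count_full (n L : ℕ) (hLn : L ≤ n) (h8 : (n - L) % 8 = 0)
    (Pr pS pT : ℕ → Prop) [DecidablePred Pr] [DecidablePred pS] [DecidablePred pT]
    (hbase : ∀ i, i < n - L → (Pr i ↔ pS (i % 8)))
    (htail : ∀ j, j < L → (Pr ((n - L) + j) ↔ pT j)) :
    ((range n).filter Pr).card
      = ((n - L) / 8) * ((range 8).filter pS).card + ((range L).filter pT).card := by
  set t := n - L with ht
  have e : n = t + L := by omega
  rw [e, Finset.range_add, filter_union, card_union_of_disjoint]
  · congr 1
    · have h1 := count_periodic (t / 8) Pr pS (fun i hi => hbase i (by omega))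
      rw [show 8 * (t / 8) = t by omega] at h1
      exact h1
    · rw [Finset.filter_map, card_map]
      apply congrArg
      apply filter_congr
      intro x hx
      simp only [mem_range] at hx
      simp only [addLeftEmbedding, Function.comp, Function.Embedding.coeFn_mk]
      rw [htail x hx]
  · rw [disjoint_left]
    intro a ha hb
    simp only [mem_filter, mem_range, mem_map, addLeftEmbedding] at ha hb
    obtain ⟨⟨b, hb1, hb2⟩, _⟩ := hb
    simp only [Function.Embedding.coeFn_mk] at hb2
    omega

example : ((range 8).filter (fun x => x = 1 ∨ x = 3 ∨ x = 6)).card = 3 := by decide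



lemma class0 (n : ℕ) (hn : 8 < n) (hr : n % 8 = 0) :
    ∃ s : Finset (ZMod n ⊕ ZMod n), IsIndep (P n 4) s ∧ s.card = 7 * n / 8 := by
  obtain ⟨s, hs, hc⟩ := build n hn
    (fun i => (i < n - 0 ∧ (i % 8 = 1 ∨ i % 8 = 3 ∨ i % 8 = 6)) ∨ (n - 0 ≤ i ∧ (1 = 0)))
    (fun i => (i < n - 0 ∧ (i % 8 = 0 ∨ i % 8 = 2 ∨ i % 8 = 5 ∨ i % 8 = 7)) ∨ (n - 0 ≤ i ∧ (1 = 0)))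
    (by intro i h1 h2 h3; omega)
    (by intro i h1 h2 h3; omega)
    (by intro h2 h3; omega)
    (by intro i h1 h2 h3; omega)
    (by intro i h1 h2 h3 h4; omega)
  refine ⟨s, hs, ?_⟩
  rw [hc,
    count_full n 0 (by omega) (by omega) _ (fun x => x % 8 = 1 ∨ x % 8 = 3 ∨ x % 8 = 6) (fun j => 1 = 0)
      (by intro i hi; omega) (by intro j hj; omega),
    count_full n 0 (by omega) (by omega) _ (fun x => x % 8 = 0 ∨ x % 8 = 2 ∨ x % 8 = 5 ∨ x % 8 = 7) (fun j => 1 = 0)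
      (by intro i hi; omega) (by intro j hj; omega)]
  have c1 : ((range 8).filter (fun x => x % 8 = 1 ∨ x % 8 = 3 ∨ x % 8 = 6)).card = 3 := by decide
  have c2 : ((range 0).filter (fun j => 1 = 0)).card = 0 := by decide
  have c3 : ((range 8).filter (fun x => x % 8 = 0 ∨ x % 8 = 2 ∨ x % 8 = 5 ∨ x % 8 = 7)).card = 4 := by decide
  have c4 : ((range 0).filter (fun j => 1 = 0)).card = 0 := by decide
  simp only [c1, c2, c3, c4]
  omega


lemma class1 (n : ℕ) (hn : 8 < n) (hr : n % 8 = 1) :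
    ∃ s : Finset (ZMod n ⊕ ZMod n), IsIndep (P n 4) s ∧ s.card = 7 * n / 8 := by
  obtain ⟨s, hs, hc⟩ := build n hn
    (fun i => (i < n - 9 ∧ (i % 8 = 1 ∨ i % 8 = 3 ∨ i % 8 = 6)) ∨ (n - 9 ≤ i ∧ (i - (n - 9) = 1 ∨ i - (n - 9) = 3 ∨ i - (n - 9) = 5 ∨ i - (n - 9) = 7)))
    (fun i => (i < n - 9 ∧ (i % 8 = 0 ∨ i % 8 = 2 ∨ i % 8 = 5 ∨ i % 8 = 7)) ∨ (n - 9 ≤ i ∧ (i - (n - 9) = 0 ∨ i - (n - 9) = 6 ∨ i - (n - 9) = 8)))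
    (by intro i h1 h2 h3; omega)
    (by intro i h1 h2 h3; omega)
    (by intro h2 h3; omega)
    (by intro i h1 h2 h3; omega)
    (by intro i h1 h2 h3 h4; omega)
  refine ⟨s, hs, ?_⟩
  rw [hc,
    count_full n 9 (by omega) (by omega) _ (fun x => x % 8 = 1 ∨ x % 8 = 3 ∨ x % 8 = 6) (fun j => j = 1 ∨ j = 3 ∨ j = 5 ∨ j = 7)
      (by intro i hi; omega) (by intro j hj; omega),
    count_full n 9 (by omega) (by omega) _ (fun x => x % 8 = 0 ∨ x % 8 = 2 ∨ x % 8 = 5 ∨ x % 8 = 7) (fun j => j = 0 ∨ j = 6 ∨ j = 8)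
      (by intro i hi; omega) (by intro j hj; omega)]
  have c1 : ((range 8).filter (fun x => x % 8 = 1 ∨ x % 8 = 3 ∨ x % 8 = 6)).card = 3 := by decide
  have c2 : ((range 9).filter (fun j => j = 1 ∨ j = 3 ∨ j = 5 ∨ j = 7)).card = 4 := by decide
  have c3 : ((range 8).filter (fun x => x % 8 = 0 ∨ x % 8 = 2 ∨ x % 8 = 5 ∨ x % 8 = 7)).card = 4 := by decide
  have c4 : ((range 9).filter (fun j => j = 0 ∨ j = 6 ∨ j = 8)).card = 3 := by decide
  simp only [c1, c2, c3, c4]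
  omega


lemma class2 (n : ℕ) (hn : 8 < n) (hr : n % 8 = 2) :
    ∃ s : Finset (ZMod n ⊕ ZMod n), IsIndep (P n 4) s ∧ s.card = 7 * n / 8 := by
  obtain ⟨s, hs, hc⟩ := build n hn
    (fun i => (i < n - 2 ∧ (i % 8 = 1 ∨ i % 8 = 3 ∨ i % 8 = 6)) ∨ (n - 2 ≤ i ∧ (i - (n - 2) = 1)))
    (fun i => (i < n - 2 ∧ (i % 8 = 0 ∨ i % 8 = 2 ∨ i % 8 = 5 ∨ i % 8 = 7)) ∨ (n - 2 ≤ i ∧ (1 = 0)))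
    (by intro i h1 h2 h3; omega)
    (by intro i h1 h2 h3; omega)
    (by intro h2 h3; omega)
    (by intro i h1 h2 h3; omega)
    (by intro i h1 h2 h3 h4; omega)
  refine ⟨s, hs, ?_⟩
  rw [hc,
    count_full n 2 (by omega) (by omega) _ (fun x => x % 8 = 1 ∨ x % 8 = 3 ∨ x % 8 = 6) (fun j => j = 1)
      (by intro i hi; omega) (by intro j hj; omega),
    count_full n 2 (by omega) (by omega) _ (fun x => x % 8 = 0 ∨ x % 8 = 2 ∨ x % 8 = 5 ∨ x % 8 = 7) (fun j => 1 = 0)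
      (by intro i hi; omega) (by intro j hj; omega)]
  have c1 : ((range 8).filter (fun x => x % 8 = 1 ∨ x % 8 = 3 ∨ x % 8 = 6)).card = 3 := by decide
  have c2 : ((range 2).filter (fun j => j = 1)).card = 1 := by decide
  have c3 : ((range 8).filter (fun x => x % 8 = 0 ∨ x % 8 = 2 ∨ x % 8 = 5 ∨ x % 8 = 7)).card = 4 := by decide
  have c4 : ((range 2).filter (fun j => 1 = 0)).card = 0 := by decide
  simp only [c1, c2, c3, c4]
  omega


lemma class3 (n : ℕ) (hn : 8 < n) (hr : n % 8 = 3) :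
    ∃ s : Finset (ZMod n ⊕ ZMod n), IsIndep (P n 4) s ∧ s.card = 7 * n / 8 := by
  obtain ⟨s, hs, hc⟩ := build n hn
    (fun i => (i < n - 11 ∧ (i % 8 = 1 ∨ i % 8 = 3 ∨ i % 8 = 6)) ∨ (n - 11 ≤ i ∧ (i - (n - 11) = 1 ∨ i - (n - 11) = 4 ∨ i - (n - 11) = 7 ∨ i - (n - 11) = 9)))
    (fun i => (i < n - 11 ∧ (i % 8 = 0 ∨ i % 8 = 2 ∨ i % 8 = 5 ∨ i % 8 = 7)) ∨ (n - 11 ≤ i ∧ (i - (n - 11) = 0 ∨ i - (n - 11) = 2 ∨ i - (n - 11) = 5 ∨ i - (n - 11) = 8 ∨ i - (n - 11) = 10)))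
    (by intro i h1 h2 h3; omega)
    (by intro i h1 h2 h3; omega)
    (by intro h2 h3; omega)
    (by intro i h1 h2 h3; omega)
    (by intro i h1 h2 h3 h4; omega)
  refine ⟨s, hs, ?_⟩
  rw [hc,
    count_full n 11 (by omega) (by omega) _ (fun x => x % 8 = 1 ∨ x % 8 = 3 ∨ x % 8 = 6) (fun j => j = 1 ∨ j = 4 ∨ j = 7 ∨ j = 9)
      (by intro i hi; omega) (by intro j hj; omega),
    count_full n 11 (by omega) (by omega) _ (fun x => x % 8 = 0 ∨ x % 8 = 2 ∨ x % 8 = 5 ∨ x % 8 = 7) (fun j => j = 0 ∨ j = 2 ∨ j = 5 ∨ j = 8 ∨ j = 10)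
      (by intro i hi; omega) (by intro j hj; omega)]
  have c1 : ((range 8).filter (fun x => x % 8 = 1 ∨ x % 8 = 3 ∨ x % 8 = 6)).card = 3 := by decide
  have c2 : ((range 11).filter (fun j => j = 1 ∨ j = 4 ∨ j = 7 ∨ j = 9)).card = 4 := by decide
  have c3 : ((range 8).filter (fun x => x % 8 = 0 ∨ x % 8 = 2 ∨ x % 8 = 5 ∨ x % 8 = 7)).card = 4 := by decide
  have c4 : ((range 11).filter (fun j => j = 0 ∨ j = 2 ∨ j = 5 ∨ j = 8 ∨ j = 10)).card = 5 := by decide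
  simp only [c1, c2, c3, c4]
  omega


lemma class5 (n : ℕ) (hn : 8 < n) (hr : n % 8 = 5) :
    ∃ s : Finset (ZMod n ⊕ ZMod n), IsIndep (P n 4) s ∧ s.card = 7 * n / 8 := by
  obtain ⟨s, hs, hc⟩ := build n hn
    (fun i => (i < n - 5 ∧ (i % 8 = 1 ∨ i % 8 = 3 ∨ i % 8 = 6)) ∨ (n - 5 ≤ i ∧ (i - (n - 5) = 1 ∨ i - (n - 5) = 3)))
    (fun i => (i < n - 5 ∧ (i % 8 = 0 ∨ i % 8 = 2 ∨ i % 8 = 5 ∨ i % 8 = 7)) ∨ (n - 5 ≤ i ∧ (i - (n - 5) = 2 ∨ i - (n - 5) = 4)))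
    (by intro i h1 h2 h3; omega)
    (by intro i h1 h2 h3; omega)
    (by intro h2 h3; omega)
    (by intro i h1 h2 h3; omega)
    (by intro i h1 h2 h3 h4; omega)
  refine ⟨s, hs, ?_⟩
  rw [hc,
    count_full n 5 (by omega) (by omega) _ (fun x => x % 8 = 1 ∨ x % 8 = 3 ∨ x % 8 = 6) (fun j => j = 1 ∨ j = 3)
      (by intro i hi; omega) (by intro j hj; omega),
    count_full n 5 (by omega) (by omega) _ (fun x => x % 8 = 0 ∨ x % 8 = 2 ∨ x % 8 = 5 ∨ x % 8 = 7) (fun j => j = 2 ∨ j = 4)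
      (by intro i hi; omega) (by intro j hj; omega)]
  have c1 : ((range 8).filter (fun x => x % 8 = 1 ∨ x % 8 = 3 ∨ x % 8 = 6)).card = 3 := by decide
  have c2 : ((range 5).filter (fun j => j = 1 ∨ j = 3)).card = 2 := by decide
  have c3 : ((range 8).filter (fun x => x % 8 = 0 ∨ x % 8 = 2 ∨ x % 8 = 5 ∨ x % 8 = 7)).card = 4 := by decide
  have c4 : ((range 5).filter (fun j => j = 2 ∨ j = 4)).card = 2 := by decide
  simp only [c1, c2, c3, c4]
  omega

lemma alpha_eq (n : ℕ) (hn : 8 < n)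
    (hex : ∃ s : Finset (ZMod n ⊕ ZMod n), IsIndep (P n 4) s ∧ s.card = 7 * n / 8) :
    alpha n 4 = 7 * n / 8 := by
  have hub : ∀ m ∈ {m | ∃ s : Finset (ZMod n ⊕ ZMod n), IsIndep (P n 4) s ∧ s.card = m},
      m ≤ 7 * n / 8 := by
    rintro m ⟨s, hs, rfl⟩
    exact upper_bound n hn s hs
  rw [alpha, indepNum]
  apply le_antisymm
  · exact csSup_le ⟨0, ⟨∅, fun a ha => absurd ha (Finset.notMem_empty a), Finset.card_empty⟩⟩ hub
  · exact le_csSup ⟨7 * n / 8, hub⟩ hex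

/-- Exact values of `α(P(n,4))` for `n > 8` in the residue classes
`0, 1, 2, 3, 5` modulo `8`. -/
theorem alpha_Pn4_exact (n : ℕ) (hn : 8 < n) :
    (n % 8 = 0 → alpha n 4 = 7 * n / 8) ∧
    (n % 8 = 1 → alpha n 4 = 7 * (n - 1) / 8) ∧
    (n % 8 = 2 → alpha n 4 = 7 * (n - 2) / 8 + 1) ∧
    (n % 8 = 3 → alpha n 4 = 7 * (n - 3) / 8 + 2) ∧
    (n % 8 = 5 → alpha n 4 = 7 * (n - 5) / 8 + 4) := by
  refine ⟨?_, ?_, ?_, ?_, ?_⟩ <;> intro hr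
  · rw [alpha_eq n hn (class0 n hn hr)]
  · rw [alpha_eq n hn (class1 n hn hr)]; omega
  · rw [alpha_eq n hn (class2 n hn hr)]; omega
  · rw [alpha_eq n hn (class3 n hn hr)]; omega
  · rw [alpha_eq n hn (class5 n hn hr)]; omega

end GP
end

section
/- For every integer n > 8: α(P(n,4)) ≥ 7(n−4)/8 + 2 if n ≡ 4 (mod 8); α(P(n,4)) ≥ 7(n−6)/8 + 4 if n ≡ 6 (mod 8); and α(P(n,4)) ≥ 7(n−7)/8 + 5 if n ≡ 7 (mod 8). -/
namespace GP

-- AUX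

lemma modeq_cases {n a b : ℕ} (ha : a < n) (hb : b < 2*n)
    (h : (a : ZMod n) = (b : ZMod n)) : a = b ∨ a + n = b := by
  have h' : a ≡ b [MOD n] := (ZMod.natCast_eq_natCast_iff a b n).1 h
  unfold Nat.ModEq at h'
  rw [Nat.mod_eq_of_lt ha] at h'
  rcases Nat.lt_or_ge b n with hb' | hb'
  · rw [Nat.mod_eq_of_lt hb'] at h'; omega
  · rw [Nat.mod_eq_sub_mod hb', Nat.mod_eq_of_lt (by omega)] at h'; omega

def mkSet (n : ℕ) (pU pV : ℕ → Prop) [DecidablePred pU] [DecidablePred pV] :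
    Finset (ZMod n ⊕ ZMod n) :=
  (((Finset.range n).filter pU).image fun i : ℕ => u n (i : ZMod n)) ∪
  (((Finset.range n).filter pV).image fun i : ℕ => v n (i : ZMod n))

lemma mkSet_card (n : ℕ) (pU pV : ℕ → Prop) [DecidablePred pU] [DecidablePred pV] :
    (mkSet n pU pV).card =
      ((Finset.range n).filter pU).card + ((Finset.range n).filter pV).card := by
  have hdisj : Disjoint
      (((Finset.range n).filter pU).image fun i : ℕ => u n (i : ZMod n))
      (((Finset.range n).filter pV).image fun i : ℕ => v n (i : ZMod n)) := by
    rw [Finset.disjoint_left]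
    rintro a ha hb
    simp only [Finset.mem_image, u, v] at ha hb
    obtain ⟨x, -, rfl⟩ := ha
    obtain ⟨y, -, h⟩ := hb
    exact absurd h (by simp)
  rw [mkSet, Finset.card_union_of_disjoint hdisj,
    Finset.card_image_of_injOn, Finset.card_image_of_injOn]
  · intro x hx y hy hxy
    simp only [Finset.coe_filter, Finset.mem_range, Set.mem_setOf_eq] at hx hy
    have hc : (x : ZMod n) = (y : ZMod n) := by
      simpa [v] using hxy
    have := modeq_cases hx.1 (show y < 2*n by omega) hc
    omega
  · intro x hx y hy hxy
    simp only [Finset.coe_filter, Finset.mem_range, Set.mem_setOf_eq] at hx hy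
    have hc : (x : ZMod n) = (y : ZMod n) := by
      simpa [u] using hxy
    have := modeq_cases hx.1 (show y < 2*n by omega) hc
    omega

lemma mkSet_indep (n : ℕ) (hn : 8 < n) (pU pV : ℕ → Prop)
    [DecidablePred pU] [DecidablePred pV]
    (h1 : ∀ x y, x < n → y < n → pU x → pU y → x ≠ y + 1 ∧ x + n ≠ y + 1)
    (h2 : ∀ x, x < n → pU x → pV x → False)
    (h3 : ∀ x y, x < n → y < n → pV x → pV y → x ≠ y + 4 ∧ x + n ≠ y + 4) :
    IsIndep (P n 4) (mkSet n pU pV) := by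
  intro a ha b hb hadj
  simp only [mkSet, Finset.mem_union, Finset.mem_image, Finset.mem_filter,
    Finset.mem_range, u, v] at ha hb
  rw [P, SimpleGraph.fromRel_adj] at hadj
  obtain ⟨-, hadj⟩ := hadj
  rcases ha with ⟨x, ⟨hx, hpx⟩, rfl⟩ | ⟨x, ⟨hx, hpx⟩, rfl⟩ <;>
    rcases hb with ⟨y, ⟨hy, hpy⟩, rfl⟩ | ⟨y, ⟨hy, hpy⟩, rfl⟩ <;>
    simp only [adjFun] at hadj
  · rcases hadj with h | h
    · have h' : ((y : ℕ) : ZMod n) = ((x + 1 : ℕ) : ZMod n) := by push_cast at h ⊢; exact h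
      have hm := modeq_cases hy (by omega) h'
      have := h1 y x hy hx hpy hpx
      omega
    · have h' : ((x : ℕ) : ZMod n) = ((y + 1 : ℕ) : ZMod n) := by push_cast at h ⊢; exact h
      have hm := modeq_cases hx (by omega) h'
      have := h1 x y hx hy hpx hpy
      omega
  · rcases hadj with h | h
    · have h' : ((y : ℕ) : ZMod n) = ((x : ℕ) : ZMod n) := by exact_mod_cast h
      have hm := modeq_cases hy (by omega) h'
      have hxy : y = x := by omega
      exact h2 x hx hpx (hxy ▸ hpy)
    · exact h
  · rcases hadj with h | h
    · exact h
    · have h' : ((x : ℕ) : ZMod n) = ((y : ℕ) : ZMod n) := by exact_mod_cast h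
      have hm := modeq_cases hx (by omega) h'
      have hxy : x = y := by omega
      exact h2 x hx (hxy ▸ hpy) hpx
  · rcases hadj with h | h
    · have h' : ((y : ℕ) : ZMod n) = ((x + 4 : ℕ) : ZMod n) := by push_cast at h ⊢; exact h
      have hm := modeq_cases hy (by omega) h'
      have := h3 y x hy hx hpy hpx
      omega
    · have h' : ((x : ℕ) : ZMod n) = ((y + 4 : ℕ) : ZMod n) := by push_cast at h ⊢; exact h
      have hm := modeq_cases hx (by omega) h'
      have := h3 x y hx hy hpx hpy
      omega

lemma card_le_alpha (n k : ℕ) (hn : 0 < n) (s : Finset (ZMod n ⊕ ZMod n))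
    (h : IsIndep (P n k) s) : s.card ≤ alpha n k := by
  haveI : NeZero n := ⟨hn.ne'⟩
  rw [alpha, indepNum]
  refine le_csSup ⟨Fintype.card (ZMod n ⊕ ZMod n), fun m hm => ?_⟩ ⟨s, h, rfl⟩
  obtain ⟨t, -, rfl⟩ := hm
  exact Finset.card_le_univ t

lemma filter_card_eq (p : ℕ → Prop) [DecidablePred p] (n N : ℕ)
    (e d : ℕ → ℕ)
    (he : ∀ t, t < N → e t < n ∧ p (e t))
    (hd : ∀ x, x < n → p x → d x < N)
    (hed : ∀ t, t < N → d (e t) = t)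
    (hde : ∀ x, x < n → p x → e (d x) = x) :
    ((Finset.range n).filter p).card = N := by
  rw [← Finset.card_range N]
  apply Finset.card_bij' (fun x _ => d x) (fun t _ => e t)
  · intro a ha
    rw [Finset.mem_filter, Finset.mem_range] at ha
    rw [Finset.mem_range]
    exact hd a ha.1 ha.2
  · intro t ht
    rw [Finset.mem_range] at ht
    rw [Finset.mem_filter, Finset.mem_range]
    exact ⟨(he t ht).1, (he t ht).2⟩
  · intro a ha
    rw [Finset.mem_filter, Finset.mem_range] at ha
    exact hde a ha.1 ha.2
  · intro t ht
    rw [Finset.mem_range] at ht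
    exact hed t ht

-- predicates: body pattern {1,3,6} outer / {2,4,5,7} inner on [0, 8m), plus tails
def pU4 (m x : ℕ) : Prop :=
  (x < 8*m ∧ (x%8 = 1 ∨ x%8 = 3 ∨ x%8 = 6)) ∨ x = 8*m+1 ∨ x = 8*m+3
def pV4 (m x : ℕ) : Prop :=
  x < 8*m ∧ (x%8 = 2 ∨ x%8 = 4 ∨ x%8 = 5 ∨ x%8 = 7)
def pU6 (m x : ℕ) : Prop :=
  (x < 8*m ∧ (x%8 = 1 ∨ x%8 = 3 ∨ x%8 = 6)) ∨ x = 8*m+1 ∨ x = 8*m+4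
def pV6 (m x : ℕ) : Prop :=
  (x < 8*m ∧ (x%8 = 2 ∨ x%8 = 4 ∨ x%8 = 5 ∨ x%8 = 7)) ∨ x = 8*m+2 ∨ x = 8*m+5
def pU7 (m x : ℕ) : Prop :=
  (x < 8*m ∧ (x%8 = 1 ∨ x%8 = 3 ∨ x%8 = 6)) ∨ x = 8*m+1 ∨ x = 8*m+3 ∨ x = 8*m+5
def pV7 (m x : ℕ) : Prop :=
  (x < 8*m ∧ (x%8 = 2 ∨ x%8 = 4 ∨ x%8 = 5 ∨ x%8 = 7)) ∨ x = 8*m+4 ∨ x = 8*m+6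

instance (m x : ℕ) : Decidable (pU4 m x) := by unfold pU4; infer_instance
instance (m x : ℕ) : Decidable (pV4 m x) := by unfold pV4; infer_instance
instance (m x : ℕ) : Decidable (pU6 m x) := by unfold pU6; infer_instance
instance (m x : ℕ) : Decidable (pV6 m x) := by unfold pV6; infer_instance
instance (m x : ℕ) : Decidable (pU7 m x) := by unfold pU7; infer_instance
instance (m x : ℕ) : Decidable (pV7 m x) := by unfold pV7; infer_instance

def eUb (t : ℕ) : ℕ := 8*(t/3) + (if t%3 = 0 then 1 else if t%3 = 1 then 3 else 6)
def dUb (x : ℕ) : ℕ := 3*(x/8) + (if x%8 = 1 then 0 else if x%8 = 3 then 1 else 2)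
def eVb (t : ℕ) : ℕ :=
  8*(t/4) + (if t%4 = 0 then 2 else if t%4 = 1 then 4 else if t%4 = 2 then 5 else 7)
def dVb (x : ℕ) : ℕ :=
  4*(x/8) + (if x%8 = 2 then 0 else if x%8 = 4 then 1 else if x%8 = 5 then 2 else 3)

def eU4 (m t : ℕ) : ℕ := if t = 3*m then 8*m+1 else if t = 3*m+1 then 8*m+3 else eUb t
def dU4 (m x : ℕ) : ℕ := if x = 8*m+1 then 3*m else if x = 8*m+3 then 3*m+1 else dUb x
def eU6 (m t : ℕ) : ℕ := if t = 3*m then 8*m+1 else if t = 3*m+1 then 8*m+4 else eUb t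
def dU6 (m x : ℕ) : ℕ := if x = 8*m+1 then 3*m else if x = 8*m+4 then 3*m+1 else dUb x
def eV6 (m t : ℕ) : ℕ := if t = 4*m then 8*m+2 else if t = 4*m+1 then 8*m+5 else eVb t
def dV6 (m x : ℕ) : ℕ := if x = 8*m+2 then 4*m else if x = 8*m+5 then 4*m+1 else dVb x
def eU7 (m t : ℕ) : ℕ :=
  if t = 3*m then 8*m+1 else if t = 3*m+1 then 8*m+3 else if t = 3*m+2 then 8*m+5 else eUb t
def dU7 (m x : ℕ) : ℕ :=
  if x = 8*m+1 then 3*m else if x = 8*m+3 then 3*m+1 else if x = 8*m+5 then 3*m+2 else dUb x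
def eV7 (m t : ℕ) : ℕ := if t = 4*m then 8*m+4 else if t = 4*m+1 then 8*m+6 else eVb t
def dV7 (m x : ℕ) : ℕ := if x = 8*m+4 then 4*m else if x = 8*m+6 then 4*m+1 else dVb x

set_option maxHeartbeats 2000000 in
/-- Lower bounds for `α(P(n,4))` for `n > 8` in the residue classes
`4, 6, 7` modulo `8`. -/
theorem alpha_Pn4_lower (n : ℕ) (hn : 8 < n) :
    (n % 8 = 4 → 7 * (n - 4) / 8 + 2 ≤ alpha n 4) ∧
    (n % 8 = 6 → 7 * (n - 6) / 8 + 4 ≤ alpha n 4) ∧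
    (n % 8 = 7 → 7 * (n - 7) / 8 + 5 ≤ alpha n 4) := by
  have hn0 : 0 < n := by omega
  refine ⟨?_, ?_, ?_⟩
  · intro hr
    have hU : ((Finset.range n).filter (pU4 (n/8))).card = 3*(n/8)+2 := by
      refine filter_card_eq _ n _ (eU4 (n/8)) (dU4 (n/8)) ?_ ?_ ?_ ?_
      · intro t ht; unfold eU4 eUb pU4; split_ifs <;> omega
      · intro x hx hp; unfold pU4 at hp; unfold dU4 dUb; split_ifs <;> omega
      · intro t ht; unfold eU4 eUb dU4 dUb; split_ifs <;> omega
      · intro x hx hp; unfold pU4 at hp; unfold eU4 eUb dU4 dUb; split_ifs <;> omega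
    have hV : ((Finset.range n).filter (pV4 (n/8))).card = 4*(n/8) := by
      refine filter_card_eq _ n _ eVb dVb ?_ ?_ ?_ ?_
      · intro t ht; unfold eVb pV4; split_ifs <;> omega
      · intro x hx hp; unfold pV4 at hp; unfold dVb; split_ifs <;> omega
      · intro t ht; unfold eVb dVb; split_ifs <;> omega
      · intro x hx hp; unfold pV4 at hp; unfold eVb dVb; split_ifs <;> omega
    have hI : IsIndep (P n 4) (mkSet n (pU4 (n/8)) (pV4 (n/8))) := by
      refine mkSet_indep n hn _ _ ?_ ?_ ?_
      · intro x y hx hy hpx hpy; unfold pU4 at hpx hpy; omega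
      · intro x hx hpx hpy; unfold pU4 at hpx; unfold pV4 at hpy; omega
      · intro x y hx hy hpx hpy; unfold pV4 at hpx hpy; omega
    have hcard : (mkSet n (pU4 (n/8)) (pV4 (n/8))).card = 7*(n/8)+2 := by
      rw [mkSet_card, hU, hV]; omega
    have hle := card_le_alpha n 4 hn0 _ hI
    rw [hcard] at hle
    omega
  · intro hr
    have hU : ((Finset.range n).filter (pU6 (n/8))).card = 3*(n/8)+2 := by
      refine filter_card_eq _ n _ (eU6 (n/8)) (dU6 (n/8)) ?_ ?_ ?_ ?_
      · intro t ht; unfold eU6 eUb pU6; split_ifs <;> omega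
      · intro x hx hp; unfold pU6 at hp; unfold dU6 dUb; split_ifs <;> omega
      · intro t ht; unfold eU6 eUb dU6 dUb; split_ifs <;> omega
      · intro x hx hp; unfold pU6 at hp; unfold eU6 eUb dU6 dUb; split_ifs <;> omega
    have hV : ((Finset.range n).filter (pV6 (n/8))).card = 4*(n/8)+2 := by
      refine filter_card_eq _ n _ (eV6 (n/8)) (dV6 (n/8)) ?_ ?_ ?_ ?_
      · intro t ht; unfold eV6 eVb pV6; split_ifs <;> omega
      · intro x hx hp; unfold pV6 at hp; unfold dV6 dVb; split_ifs <;> omega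
      · intro t ht; unfold eV6 eVb dV6 dVb; split_ifs <;> omega
      · intro x hx hp; unfold pV6 at hp; unfold eV6 eVb dV6 dVb; split_ifs <;> omega
    have hI : IsIndep (P n 4) (mkSet n (pU6 (n/8)) (pV6 (n/8))) := by
      refine mkSet_indep n hn _ _ ?_ ?_ ?_
      · intro x y hx hy hpx hpy; unfold pU6 at hpx hpy; omega
      · intro x hx hpx hpy; unfold pU6 at hpx; unfold pV6 at hpy; omega
      · intro x y hx hy hpx hpy; unfold pV6 at hpx hpy; omega
    have hcard : (mkSet n (pU6 (n/8)) (pV6 (n/8))).card = 7*(n/8)+4 := by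
      rw [mkSet_card, hU, hV]; omega
    have hle := card_le_alpha n 4 hn0 _ hI
    rw [hcard] at hle
    omega
  · intro hr
    have hU : ((Finset.range n).filter (pU7 (n/8))).card = 3*(n/8)+3 := by
      refine filter_card_eq _ n _ (eU7 (n/8)) (dU7 (n/8)) ?_ ?_ ?_ ?_
      · intro t ht; unfold eU7 eUb pU7; split_ifs <;> omega
      · intro x hx hp; unfold pU7 at hp; unfold dU7 dUb; split_ifs <;> omega
      · intro t ht; unfold eU7 eUb dU7 dUb; split_ifs <;> omega
      · intro x hx hp; unfold pU7 at hp; unfold eU7 eUb dU7 dUb; split_ifs <;> omega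
    have hV : ((Finset.range n).filter (pV7 (n/8))).card = 4*(n/8)+2 := by
      refine filter_card_eq _ n _ (eV7 (n/8)) (dV7 (n/8)) ?_ ?_ ?_ ?_
      · intro t ht; unfold eV7 eVb pV7; split_ifs <;> omega
      · intro x hx hp; unfold pV7 at hp; unfold dV7 dVb; split_ifs <;> omega
      · intro t ht; unfold eV7 eVb dV7 dVb; split_ifs <;> omega
      · intro x hx hp; unfold pV7 at hp; unfold eV7 eVb dV7 dVb; split_ifs <;> omega
    have hI : IsIndep (P n 4) (mkSet n (pU7 (n/8)) (pV7 (n/8))) := by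
      refine mkSet_indep n hn _ _ ?_ ?_ ?_
      · intro x y hx hy hpx hpy; unfold pU7 at hpx hpy; omega
      · intro x hx hpx hpy; unfold pU7 at hpx; unfold pV7 at hpy; omega
      · intro x y hx hy hpx hpy; unfold pV7 at hpx hpy; omega
    have hcard : (mkSet n (pU7 (n/8)) (pV7 (n/8))).card = 7*(n/8)+5 := by
      rw [mkSet_card, hU, hV]; omega
    have hle := card_le_alpha n 4 hn0 _ hI
    rw [hcard] at hle
    omega

end GP
end

section
/- Let k > 2 be an even integer and n > 2k an integer such that n is congruent to 0, 2, k−1, or k+1 modulo 2k. Then α(P(n,k)) = ⌊(2k−1)n/(2k)⌋. -/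
namespace GPcore

/-- Hypotheses on the column predicates coming from an independent set. -/
structure Good (n k : ℕ) (U V : ZMod n → Prop) : Prop where
  hUU : ∀ i, U i → U (i + 1) → False
  hUV : ∀ i, U i → V i → False
  hVV : ∀ i, V i → V (i + (k : ZMod n)) → False

variable {n k : ℕ} {U V : ZMod n → Prop}

lemma hcong (t : ZMod n) {a b : ℕ} (h : a = b) :
    t + (a : ZMod n) = t + (b : ZMod n) := by rw [h]

lemma vshift (h : Good n k U V) (t : ZMod n) (j : ℕ)
    (h1 : V (t + (j : ZMod n))) (h2 : V (t + ((j + k : ℕ) : ZMod n))) : False := by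
  refine h.hVV (t + (j : ZMod n)) h1 ?_
  have : t + ((j + k : ℕ) : ZMod n) = t + (j : ZMod n) + (k : ZMod n) := by
    push_cast; ring
  rwa [this] at h2

lemma ushift (h : Good n k U V) (t : ZMod n) (j : ℕ)
    (h1 : U (t + (j : ZMod n))) (h2 : U (t + ((j + 1 : ℕ) : ZMod n))) : False := by
  refine h.hUU (t + (j : ZMod n)) h1 ?_
  have : t + ((j + 1 : ℕ) : ZMod n) = t + (j : ZMod n) + 1 := by
    push_cast; ring
  rwa [this] at h2

/-- In a fully-occupied window context: no two V's at distance `k`. -/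
lemma pairEx (h : Good n k U V) (t : ZMod n) (j : ℕ) :
    ¬ (V (t + (j : ZMod n)) ∧ V (t + ((j + k : ℕ) : ZMod n))) := by
  rintro ⟨h1, h2⟩; exact vshift h t j h1 h2

lemma adjV (h : Good n k U V) (t : ZMod n)
    (hfull : ∀ j : ℕ, j < 2 * k → U (t + (j : ZMod n)) ∨ V (t + (j : ZMod n)))
    (j : ℕ) (hj : j + 1 < 2 * k) :
    V (t + (j : ZMod n)) ∨ V (t + ((j + 1 : ℕ) : ZMod n)) := by
  rcases hfull j (by omega) with h1 | h1
  · rcases hfull (j + 1) (by omega) with h2 | h2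
    · exact absurd (ushift h t j h1 h2) (by simp)
    · exact Or.inr h2
  · exact Or.inl h1

lemma stepV (h : Good n k U V) (t : ZMod n)
    (hfull : ∀ j : ℕ, j < 2 * k → U (t + (j : ZMod n)) ∨ V (t + (j : ZMod n)))
    (j : ℕ) (hj : j + 2 ≤ k) :
    (V (t + ((j + 1 : ℕ) : ZMod n)) ↔ ¬ V (t + (j : ZMod n))) ∧
    (V (t + ((j + k : ℕ) : ZMod n)) ↔ ¬ V (t + (j : ZMod n))) := by
  have p1 := pairEx h t j
  have p2 := pairEx h t (j + 1)
  have a1 := adjV h t hfull j (by omega)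
  have a2 := adjV h t hfull (j + k) (by omega)
  rw [hcong t (show j + 1 + k = j + k + 1 by omega)] at p2
  tauto

lemma altV (h : Good n k U V) (t : ZMod n)
    (hfull : ∀ j : ℕ, j < 2 * k → U (t + (j : ZMod n)) ∨ V (t + (j : ZMod n))) :
    ∀ j : ℕ, j < k →
    (j % 2 = 0 → (V (t + (j : ZMod n)) ↔ V (t + ((0:ℕ) : ZMod n)))) ∧
    (j % 2 = 1 → (V (t + (j : ZMod n)) ↔ ¬ V (t + ((0:ℕ) : ZMod n)))) := by
  intro j
  induction j with
  | zero => exact fun _ => ⟨fun _ => Iff.rfl, by omega⟩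
  | succ m ih =>
    intro hm
    have hrec := ih (by omega)
    have hst := (stepV h t hfull m (by omega)).1
    constructor
    · intro hpar
      have hm1 : m % 2 = 1 := by omega
      rw [hst, (hrec.2 hm1)]; tauto
    · intro hpar
      have hm0 : m % 2 = 0 := by omega
      rw [hst, (hrec.1 hm0)]

lemma notV0 (h : Good n k U V) (hk : 2 < k) (hke : k % 2 = 0) (t : ZMod n)
    (hfull : ∀ j : ℕ, j < 2 * k → U (t + (j : ZMod n)) ∨ V (t + (j : ZMod n))) :
    ¬ V (t + ((0:ℕ) : ZMod n)) := by
  intro h0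
  have h1 : V (t + ((k - 1 : ℕ) : ZMod n)) ↔ ¬ V (t + ((0:ℕ) : ZMod n)) :=
    (altV h t hfull (k-1) (by omega)).2 (by omega)
  have h2 : V (t + ((0 + k : ℕ) : ZMod n)) ↔ ¬ V (t + ((0:ℕ) : ZMod n)) :=
    (stepV h t hfull 0 (by omega)).2
  have a := adjV h t hfull (k - 1) (by omega)
  rw [hcong t (show k - 1 + 1 = 0 + k by omega)] at a
  tauto

/-- Rigidity: a fully occupied `2k`-window has a forced pattern. -/
lemma rigidV (h : Good n k U V) (hk : 2 < k) (hke : k % 2 = 0) (t : ZMod n)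
    (hfull : ∀ j : ℕ, j < 2 * k → U (t + (j : ZMod n)) ∨ V (t + (j : ZMod n))) :
    ∀ j : ℕ, j < 2 * k →
    (V (t + (j : ZMod n)) ↔ ((j < k ∧ j % 2 = 1) ∨ (k ≤ j ∧ j % 2 = 0))) := by
  intro j hj
  have h0 := notV0 h hk hke t hfull
  rcases lt_or_ge j k with hlt | hge
  · rcases Nat.even_or_odd j with he | ho
    · have he' : j % 2 = 0 := Nat.even_iff.mp he
      rw [(altV h t hfull j hlt).1 he']
      constructor
      · intro hv; exact absurd hv h0
      · omega
    · have ho' : j % 2 = 1 := Nat.odd_iff.mp ho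
      rw [(altV h t hfull j hlt).2 ho']
      constructor
      · intro _; exact Or.inl ⟨hlt, ho'⟩
      · intro _; exact h0
  · rcases Nat.lt_or_ge j (2 * k - 1) with hlt2 | hge2
    · have hst := (stepV h t hfull (j - k) (by omega)).2
      rw [hcong t (show j - k + k = j by omega)] at hst
      rw [hst]
      rcases Nat.even_or_odd (j - k) with he | ho
      · have he' : (j - k) % 2 = 0 := Nat.even_iff.mp he
        rw [(altV h t hfull (j - k) (by omega)).1 he']
        constructor
        · intro hv; exact Or.inr ⟨hge, by omega⟩
        · intro hc hv
          rcases hc with ⟨h1, _⟩ | ⟨_, h2⟩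
          · omega
          · exact h0 hv
      · have ho' : (j - k) % 2 = 1 := Nat.odd_iff.mp ho
        rw [(altV h t hfull (j - k) (by omega)).2 ho']
        constructor
        · intro hv
          exact absurd (not_not.mp hv) h0
        · intro hc
          rcases hc with ⟨h1, _⟩ | ⟨_, h2⟩
          · omega
          · omega
    · have hjeq : j = 2 * k - 1 := by omega
      have hkm1 : V (t + ((k - 1 : ℕ) : ZMod n)) := by
        rw [(altV h t hfull (k-1) (by omega)).2 (by omega)]; exact h0
      have hp := pairEx h t (k - 1)
      rw [hcong t (show k - 1 + k = j by omega)] at hp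
      constructor
      · intro hv; exact absurd ⟨hkm1, hv⟩ hp
      · intro hc; omega

end GPcore

namespace GPcore2
open GPcore

variable {n k : ℕ} {U V : ZMod n → Prop}

lemma assoc (t : ZMod n) (a b : ℕ) :
    (t + (a : ZMod n)) + (b : ZMod n) = t + ((a + b : ℕ) : ZMod n) := by
  push_cast; ring

lemma rigidU (h : Good n k U V) (hk : 2 < k) (hke : k % 2 = 0) (t : ZMod n)
    (hfull : ∀ j : ℕ, j < 2 * k → U (t + (j : ZMod n)) ∨ V (t + (j : ZMod n)))
    (j : ℕ) (hj : j < 2 * k)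
    (hpat : ¬ ((j < k ∧ j % 2 = 1) ∨ (k ≤ j ∧ j % 2 = 0))) : U (t + (j : ZMod n)) := by
  rcases hfull j hj with h1 | h1
  · exact h1
  · exact absurd ((rigidV h hk hke t hfull j hj).mp h1) hpat

/-- After a fully occupied `2k`-window, the next column is empty. -/
lemma afterFull (h : Good n k U V) (hk : 2 < k) (hke : k % 2 = 0) (t : ZMod n)
    (hfull : ∀ j : ℕ, j < 2 * k → U (t + (j : ZMod n)) ∨ V (t + (j : ZMod n))) :
    ¬ U (t + ((2 * k : ℕ) : ZMod n)) ∧ ¬ V (t + ((2 * k : ℕ) : ZMod n)) := by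
  constructor
  · intro hu
    have u1 : U (t + ((2 * k - 1 : ℕ) : ZMod n)) :=
      rigidU h hk hke t hfull (2 * k - 1) (by omega) (by omega)
    refine ushift h t (2 * k - 1) u1 ?_
    rwa [hcong t (show 2 * k - 1 + 1 = 2 * k by omega)]
  · intro hv
    have v1 : V (t + ((k : ℕ) : ZMod n)) := by
      rw [rigidV h hk hke t hfull k (by omega)]; omega
    refine vshift h t k v1 ?_
    rwa [hcong t (show k + k = 2 * k by omega)]

/-- Every `2k+1` consecutive columns contain an empty one. -/
lemma existsE (h : Good n k U V) (hk : 2 < k) (hke : k % 2 = 0) (t : ZMod n) :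
    ∃ j : ℕ, j ≤ 2 * k ∧ ¬ U (t + (j : ZMod n)) ∧ ¬ V (t + (j : ZMod n)) := by
  by_contra hc
  push_neg at hc
  have hfull : ∀ j : ℕ, j < 2 * k → U (t + (j : ZMod n)) ∨ V (t + (j : ZMod n)) := by
    intro j hj
    by_contra hc2
    push_neg at hc2
    exact hc2.2 (hc j (by omega) hc2.1)
  have hE := afterFull h hk hke t hfull
  by_cases hu : U (t + ((2*k : ℕ) : ZMod n))
  · exact hE.1 hu
  · exact hE.2 (hc (2*k) le_rfl hu)

/-- After an empty column that is "blocked", a run of `2k-1` occupied columns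
forces the next column empty and blocked again. -/
lemma chain (h : Good n k U V) (hk : 2 < k) (hke : k % 2 = 0) (p : ZMod n)
    (hB : ∀ j : ℕ, 2 ≤ j → j ≤ k - 2 → j % 2 = 0 → ¬ V (p + (j : ZMod n)))
    (hocc : ∀ j : ℕ, 1 ≤ j → j ≤ 2 * k - 1 → U (p + (j : ZMod n)) ∨ V (p + (j : ZMod n))) :
    (¬ U (p + ((2 * k : ℕ) : ZMod n)) ∧ ¬ V (p + ((2 * k : ℕ) : ZMod n))) ∧
    (∀ j : ℕ, 2 ≤ j → j ≤ k - 2 → j % 2 = 0 → ¬ V (p + ((2 * k + j : ℕ) : ZMod n))) := by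
  have uEven : ∀ j : ℕ, 2 ≤ j → j ≤ k - 2 → j % 2 = 0 → U (p + (j : ZMod n)) := by
    intro j h1 h2 h3
    rcases hocc j (by omega) (by omega) with hu | hv
    · exact hu
    · exact absurd hv (hB j h1 h2 h3)
  have bOdd : ∀ j : ℕ, j % 2 = 1 → j ≤ k - 1 → V (p + (j : ZMod n)) := by
    intro j h1 h2
    rcases hocc j (by omega) (by omega) with hu | hv
    · exfalso
      by_cases hj : j = 1
      · subst hj
        refine ushift h p 1 hu ?_
        rw [hcong p (show 1 + 1 = 2 by omega)]
        exact uEven 2 le_rfl (by omega) (by omega)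
      · have hprev : U (p + ((j - 1 : ℕ) : ZMod n)) :=
          uEven (j-1) (by omega) (by omega) (by omega)
        refine ushift h p (j-1) hprev ?_
        rwa [hcong p (show j - 1 + 1 = j by omega)]
    · exact hv
  have uOddHigh : ∀ j : ℕ, j % 2 = 1 → k + 1 ≤ j → j ≤ 2 * k - 1 → U (p + (j : ZMod n)) := by
    intro j h1 h2 h3
    rcases hocc j (by omega) (by omega) with hu | hv
    · exact hu
    · exfalso
      refine vshift h p (j - k) (bOdd (j-k) (by omega) (by omega)) ?_
      rwa [hcong p (show j - k + k = j by omega)]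
  have bEvenHigh : ∀ j : ℕ, j % 2 = 0 → k ≤ j → j ≤ 2 * k - 2 → V (p + (j : ZMod n)) := by
    intro j h1 h2 h3
    rcases hocc j (by omega) (by omega) with hu | hv
    · exfalso
      refine ushift h p j hu ?_
      exact uOddHigh (j+1) (by omega) (by omega) (by omega)
    · exact hv
  refine ⟨⟨?_, ?_⟩, ?_⟩
  · intro hu
    refine ushift h p (2*k - 1) (uOddHigh (2*k-1) (by omega) (by omega) le_rfl) ?_
    rwa [hcong p (show 2*k - 1 + 1 = 2*k by omega)]
  · intro hv
    refine vshift h p k (bEvenHigh k (by omega) le_rfl (by omega)) ?_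
    rwa [hcong p (show k + k = 2*k by omega)]
  · intro j h1 h2 h3 hv
    refine vshift h p (k + j) (bEvenHigh (k+j) (by omega) (by omega) (by omega)) ?_
    rwa [hcong p (show k + j + k = 2*k + j by omega)]

/-- A full window makes the following empty column blocked. -/
lemma blockedAfterFull (h : Good n k U V) (hk : 2 < k) (hke : k % 2 = 0) (t : ZMod n)
    (hfull : ∀ j : ℕ, j < 2 * k → U (t + (j : ZMod n)) ∨ V (t + (j : ZMod n))) :
    ∀ j : ℕ, 2 ≤ j → j ≤ k - 2 → j % 2 = 0 → ¬ V (t + ((2 * k + j : ℕ) : ZMod n)) := by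
  intro j h1 h2 h3 hv
  have v1 : V (t + ((k + j : ℕ) : ZMod n)) := by
    rw [rigidV h hk hke t hfull (k+j) (by omega)]; omega
  refine vshift h t (k + j) v1 ?_
  rwa [hcong t (show k + j + k = 2*k + j by omega)]

end GPcore2

namespace GPcount
open GPcore GPcore2

variable {n k : ℕ} {U V : ZMod n → Prop} [NeZero n] [DecidablePred U] [DecidablePred V]

lemma gspec (h : Good n k U V) (hk : 2 < k) (hke : k % 2 = 0) (p : ZMod n) :
    ∃ m : ℕ, ¬ U (p + ((m + 1 : ℕ) : ZMod n)) ∧ ¬ V (p + ((m + 1 : ℕ) : ZMod n)) := by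
  obtain ⟨j, hj, hE⟩ := existsE h hk hke (p + ((1:ℕ) : ZMod n))
  refine ⟨j, ?_⟩
  rwa [assoc, hcong p (show 1 + j = j + 1 by omega)] at hE

/-- distance from an empty column to the next empty column -/
noncomputable def g (h : Good n k U V) (hk : 2 < k) (hke : k % 2 = 0) (p : ZMod n) : ℕ :=
  Nat.find (gspec h hk hke p) + 1

lemma g_pos (h : Good n k U V) (hk : 2 < k) (hke : k % 2 = 0) (p : ZMod n) :
    1 ≤ g h hk hke p := by simp [g]

lemma g_le (h : Good n k U V) (hk : 2 < k) (hke : k % 2 = 0) (p : ZMod n) :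
    g h hk hke p ≤ 2 * k + 1 := by
  obtain ⟨j, hj, hE⟩ := existsE h hk hke (p + ((1:ℕ) : ZMod n))
  rw [assoc, hcong p (show 1 + j = j + 1 by omega)] at hE
  have := Nat.find_min' (gspec h hk hke p) hE
  simp only [g]; omega

lemma g_spec (h : Good n k U V) (hk : 2 < k) (hke : k % 2 = 0) (p : ZMod n) :
    ¬ U (p + ((g h hk hke p : ℕ) : ZMod n)) ∧ ¬ V (p + ((g h hk hke p : ℕ) : ZMod n)) :=
  Nat.find_spec (gspec h hk hke p)

lemma g_min (h : Good n k U V) (hk : 2 < k) (hke : k % 2 = 0) (p : ZMod n)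
    (m : ℕ) (h1 : 1 ≤ m) (h2 : m < g h hk hke p) :
    U (p + (m : ZMod n)) ∨ V (p + (m : ZMod n)) := by
  have := Nat.find_min (gspec h hk hke p) (show m - 1 < Nat.find _ by simp only [g] at h2; omega)
  rw [show m - 1 + 1 = m by omega] at this
  by_contra hc
  push_neg at hc
  exact this ⟨hc.1, hc.2⟩

/-- the "blocked" predicate -/
def Blocked (V : ZMod n → Prop) (k : ℕ) (p : ZMod n) : Prop :=
  ∀ j : ℕ, 2 ≤ j → j ≤ k - 2 → j % 2 = 0 → ¬ V (p + (j : ZMod n))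

noncomputable def phi (V : ZMod n → Prop) (k : ℕ) (p : ZMod n) : ℕ := by
  classical exact if Blocked V k p then 1 else 0

lemma phi_le_one (p : ZMod n) : phi V k p ≤ 1 := by
  unfold phi; split <;> omega

/-- Key amortized bound on the gap. -/
lemma gbound (h : Good n k U V) (hk : 2 < k) (hke : k % 2 = 0) (p : ZMod n)
    (hpE : ¬ U p ∧ ¬ V p) :
    g h hk hke p + phi V k p ≤ 2 * k + phi V k (p + ((g h hk hke p : ℕ) : ZMod n)) := by
  classical
  by_cases hb : Blocked V k p
  · -- blocked case
    have hocc : g h hk hke p ≥ 2 * k →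
        ∀ j : ℕ, 1 ≤ j → j ≤ 2 * k - 1 → U (p + (j : ZMod n)) ∨ V (p + (j : ZMod n)) := by
      intro hge j h1 h2
      exact g_min h hk hke p j h1 (by omega)
    have hg2k : g h hk hke p ≤ 2 * k := by
      by_contra hgt
      have hgeq : g h hk hke p = 2 * k + 1 := le_antisymm (g_le h hk hke p) (by omega)
      have hch := chain h hk hke p hb (hocc (by omega))
      have := g_min h hk hke p (2 * k) (by omega) (by omega)
      rcases this with hu | hv
      · exact hch.1.1 hu
      · exact hch.1.2 hv
    rcases eq_or_lt_of_le hg2k with heq | hlt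
    · have hch := chain h hk hke p hb (hocc (by omega))
      have hblocked : Blocked V k (p + ((g h hk hke p : ℕ) : ZMod n)) := by
        intro j h1 h2 h3
        rw [assoc, heq]
        exact hch.2 j h1 h2 h3
      rw [phi, if_pos hb, phi, if_pos hblocked]
      omega
    · rw [phi, if_pos hb]
      have := phi_le_one (V := V) (k := k) (p + ((g h hk hke p : ℕ) : ZMod n))
      omega
  · rw [phi, if_neg hb]
    rcases Nat.lt_or_ge (g h hk hke p) (2 * k + 1) with hlt | hge
    · omega
    · have hgeq : g h hk hke p = 2 * k + 1 := le_antisymm (g_le h hk hke p) hge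
      have hfull : ∀ j : ℕ, j < 2 * k →
          U ((p + ((1:ℕ) : ZMod n)) + (j : ZMod n)) ∨
          V ((p + ((1:ℕ) : ZMod n)) + (j : ZMod n)) := by
        intro j hj
        rw [assoc]
        exact g_min h hk hke p (1 + j) (by omega) (by omega)
      have hbl := blockedAfterFull h hk hke (p + ((1:ℕ) : ZMod n)) hfull
      have hblocked : Blocked V k (p + ((g h hk hke p : ℕ) : ZMod n)) := by
        intro j h1 h2 h3
        rw [assoc, hgeq]
        have := hbl j h1 h2 h3
        rwa [assoc, hcong p (show 1 + (2 * k + j) = 2 * k + 1 + j by omega)] at this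
      rw [phi, if_pos hblocked]
      omega

end GPcount

namespace GPmain
open GPcore GPcore2 GPcount

variable {n k : ℕ} {U V : ZMod n → Prop} [NeZero n] [DecidablePred U] [DecidablePred V]

lemma cast_inj_lt {a b : ℕ} (ha : a < n) (hb : b < n) (hab : (a : ZMod n) = b) : a = b := by
  have := congrArg ZMod.val hab
  rwa [ZMod.val_natCast_of_lt ha, ZMod.val_natCast_of_lt hb] at this

lemma sub_add_nat (i : ZMod n) (a j : ℕ) (hj : j ≤ a) :
    i - ((a : ℕ) : ZMod n) + ((j : ℕ) : ZMod n) = i - (((a - j : ℕ)) : ZMod n) := by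
  rw [Nat.cast_sub hj]; ring

/-- The main counting inequality:  `n ≤ 2k · #empty`. -/
theorem core_count (h : Good n k U V) (hk : 2 < k) (hke : k % 2 = 0) (hn : 2 * k < n) :
    n ≤ 2 * k * (Finset.univ.filter (fun i : ZMod n => ¬ U i ∧ ¬ V i)).card := by
  classical
  set E : Finset (ZMod n) := Finset.univ.filter (fun i : ZMod n => ¬ U i ∧ ¬ V i) with hE
  have memE : ∀ p : ZMod n, p ∈ E ↔ (¬ U p ∧ ¬ V p) := by
    intro p; simp [hE]
  -- key injectivity helper
  have key : ∀ (p1 m1 p2 m2 : ℕ → ℕ) , True := fun _ _ _ _ => trivial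
  clear key
  have key2 : ∀ p1 p2 : ZMod n, p1 ∈ E → p2 ∈ E →
      g h hk hke p1 ≤ g h hk hke p2 →
      ∀ m1 m2 : ℕ, m1 + 1 ≤ g h hk hke p1 → m2 + 1 ≤ g h hk hke p2 → m1 ≤ m2 →
      p1 + ((m1 + 1 : ℕ) : ZMod n) = p2 + ((m2 + 1 : ℕ) : ZMod n) → True := by
    intros; trivial
  clear key2
  -- the injectivity core: if p1,p2 empty, m2 < g p2, and p1 = p2 + (m2-m1) shift with
  -- 1 ≤ m2 - m1 then contradiction
  have keyinj : ∀ p1 p2 : ZMod n, p1 ∈ E → p2 ∈ E →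
      ∀ d : ℕ, 1 ≤ d → d < g h hk hke p2 → p1 = p2 + ((d : ℕ) : ZMod n) → False := by
    intro p1 p2 hp1 hp2 d hd1 hd2 heq
    have := g_min h hk hke p2 d hd1 hd2
    rw [← heq] at this
    rcases this with hu | hv
    · exact ((memE p1).mp hp1).1 hu
    · exact ((memE p1).mp hp1).2 hv
  have shift_eq : ∀ (p2 : ZMod n) (m1 m2 : ℕ), m1 ≤ m2 →
      p2 + ((m2 - m1 : ℕ) : ZMod n) + ((m1 : ℕ) : ZMod n) = p2 + ((m2 : ℕ) : ZMod n) := by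
    intro p2 m1 m2 hle
    rw [assoc, hcong p2 (show m2 - m1 + m1 = m2 by omega)]
  -- Step 1 : ∑ gaps = n
  have hsum : ∑ p ∈ E, g h hk hke p = n := by
    have h1 : ∑ p ∈ E, g h hk hke p
        = (E.sigma fun p => Finset.range (g h hk hke p)).card := by
      rw [Finset.card_sigma]
      simp
    rw [h1]
    have h2 : (E.sigma fun p => Finset.range (g h hk hke p)).card
        = (Finset.univ : Finset (ZMod n)).card := by
      apply Finset.card_bij (fun (a : Σ _ : ZMod n, ℕ) _ => a.1 + ((a.2 + 1 : ℕ) : ZMod n))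
      · intro a ha; exact Finset.mem_univ _
      · -- injectivity
        intro a1 ha1 a2 ha2 heq
        rw [Finset.mem_sigma, Finset.mem_range] at ha1 ha2
        -- wlog
        have main : ∀ a1 a2 : Σ _ : ZMod n, ℕ,
            (a1.1 ∈ E ∧ a1.2 < g h hk hke a1.1) → (a2.1 ∈ E ∧ a2.2 < g h hk hke a2.1) →
            a1.2 ≤ a2.2 →
            a1.1 + ((a1.2 + 1 : ℕ) : ZMod n) = a2.1 + ((a2.2 + 1 : ℕ) : ZMod n) → a1 = a2 := by
          rintro ⟨p1, m1⟩ ⟨p2, m2⟩ ⟨hp1, hm1⟩ ⟨hp2, hm2⟩ hle heq2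
          simp only at heq2 hp1 hm1 hp2 hm2 hle ⊢
          rcases Nat.eq_or_lt_of_le hle with heqm | hltm
          · subst heqm
            have : p1 = p2 := by
              have := add_right_cancel heq2
              exact this
            subst this; rfl
          · exfalso
            have hkey : p1 = p2 + ((m2 - m1 : ℕ) : ZMod n) := by
              have e1 : p2 + ((m2 - m1 : ℕ) : ZMod n) + ((m1 + 1 : ℕ) : ZMod n)
                  = p2 + ((m2 + 1 : ℕ) : ZMod n) := by
                rw [assoc, hcong p2 (show m2 - m1 + (m1 + 1) = m2 + 1 by omega)]
              rw [← e1] at heq2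
              exact add_right_cancel heq2
            exact keyinj p1 p2 hp1 hp2 (m2 - m1) (by omega) (by omega) hkey
        rcases Nat.le_total a1.2 a2.2 with hle | hle
        · exact main a1 a2 ⟨ha1.1, ha1.2⟩ ⟨ha2.1, ha2.2⟩ hle heq
        · exact (main a2 a1 ⟨ha2.1, ha2.2⟩ ⟨ha1.1, ha1.2⟩ hle heq.symm).symm
      · -- surjectivity
        intro i _
        have hexR : ∃ m : ℕ, ¬ U (i - ((m + 1 : ℕ) : ZMod n)) ∧ ¬ V (i - ((m + 1 : ℕ) : ZMod n)) := by
          obtain ⟨j, hj, hEj⟩ := existsE h hk hke (i - ((2 * k + 1 : ℕ) : ZMod n))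
          refine ⟨2 * k - j, ?_⟩
          rw [sub_add_nat i (2 * k + 1) j (by omega)] at hEj
          rwa [show 2 * k + 1 - j = 2 * k - j + 1 by omega] at hEj
        set m0 := Nat.find hexR with hm0
        set p := i - ((m0 + 1 : ℕ) : ZMod n) with hp
        have hpE : p ∈ E := (memE p).mpr (Nat.find_spec hexR)
        have hm0lt : m0 < g h hk hke p := by
          by_contra hc
          push_neg at hc
          have hg1 := g_pos h hk hke p
          have hEg := g_spec h hk hke p
          have heq3 : p + ((g h hk hke p : ℕ) : ZMod n)
              = i - ((m0 - g h hk hke p + 1 : ℕ) : ZMod n) := by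
            rw [hp, sub_add_nat i (m0 + 1) (g h hk hke p) (by omega)]
            rw [show m0 + 1 - g h hk hke p = m0 - g h hk hke p + 1 by omega]
          rw [heq3] at hEg
          exact Nat.find_min hexR (show m0 - g h hk hke p < m0 by omega) hEg
        refine ⟨⟨p, m0⟩, Finset.mem_sigma.mpr ⟨hpE, Finset.mem_range.mpr hm0lt⟩, ?_⟩
        simp only [hp]
        exact sub_add_cancel i _
    rw [h2, Finset.card_univ, ZMod.card]
  -- Step 2: N maps E to E injectively
  have hNmem : ∀ p ∈ E, p + ((g h hk hke p : ℕ) : ZMod n) ∈ E := by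
    intro p hp
    exact (memE _).mpr (g_spec h hk hke p)
  have hNinj : ∀ p1 ∈ E, ∀ p2 ∈ E,
      p1 + ((g h hk hke p1 : ℕ) : ZMod n) = p2 + ((g h hk hke p2 : ℕ) : ZMod n) → p1 = p2 := by
    have main : ∀ p1 ∈ E, ∀ p2 ∈ E, g h hk hke p1 ≤ g h hk hke p2 →
        p1 + ((g h hk hke p1 : ℕ) : ZMod n) = p2 + ((g h hk hke p2 : ℕ) : ZMod n) → p1 = p2 := by
      intro p1 hp1 p2 hp2 hle heq
      rcases Nat.eq_or_lt_of_le hle with heqg | hltg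
      · rw [heqg] at heq
        exact add_right_cancel heq
      · exfalso
        have hkey : p1 = p2 + ((g h hk hke p2 - g h hk hke p1 : ℕ) : ZMod n) := by
          have e1 := shift_eq p2 (g h hk hke p1) (g h hk hke p2) (by omega)
          rw [← e1] at heq
          exact add_right_cancel heq
        have hg1 := g_pos h hk hke p1
        exact keyinj p1 p2 hp1 hp2 _ (by omega) (by omega) hkey
    intro p1 hp1 p2 hp2 heq
    rcases Nat.le_total (g h hk hke p1) (g h hk hke p2) with hle | hle
    · exact main p1 hp1 p2 hp2 hle heq
    · exact (main p2 hp2 p1 hp1 hle heq.symm).symm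
  have himg : E.image (fun p => p + ((g h hk hke p : ℕ) : ZMod n)) = E := by
    apply Finset.eq_of_subset_of_card_le
    · intro q hq
      obtain ⟨p, hp, rfl⟩ := Finset.mem_image.mp hq
      exact hNmem p hp
    · rw [Finset.card_image_of_injOn (fun p1 h1 p2 h2 => hNinj p1 h1 p2 h2)]
  have hphisum : ∑ p ∈ E, phi V k (p + ((g h hk hke p : ℕ) : ZMod n)) = ∑ q ∈ E, phi V k q := by
    conv_rhs => rw [← himg]
    rw [Finset.sum_image (fun p1 h1 p2 h2 => hNinj p1 h1 p2 h2)]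
  -- Step 3: combine
  have hle : ∑ p ∈ E, (g h hk hke p + phi V k p)
      ≤ ∑ p ∈ E, (2 * k + phi V k (p + ((g h hk hke p : ℕ) : ZMod n))) :=
    Finset.sum_le_sum (fun p hp => gbound h hk hke p ((memE p).mp hp))
  rw [Finset.sum_add_distrib, Finset.sum_add_distrib, hsum, hphisum,
    Finset.sum_const, smul_eq_mul] at hle
  have : 2 * k * E.card = E.card * (2 * k) := by ring
  omega

end GPmain


namespace GPglue
open GPcore GPcore2 GPcount GPmain GP

variable {n k : ℕ}

lemma adj_iff (n k : ℕ) (x y : ZMod n ⊕ ZMod n) :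
    (P n k).Adj x y ↔ x ≠ y ∧ (adjFun n k x y ∨ adjFun n k y x) := by
  simp [P, SimpleGraph.fromRel_adj]

lemma one_ne_zero_zmod (hn : 2 * k < n) (hk : 2 < k) : (1 : ZMod n) ≠ 0 := by
  haveI : NeZero n := ⟨by omega⟩
  intro hcon
  have h1 : ((1 : ℕ) : ZMod n) = ((0 : ℕ) : ZMod n) := by push_cast; exact hcon
  have := cast_inj_lt (n := n) (by omega) (by omega) h1
  omega

lemma k_ne_zero_zmod (hn : 2 * k < n) (hk : 2 < k) : ((k : ℕ) : ZMod n) ≠ 0 := by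
  haveI : NeZero n := ⟨by omega⟩
  intro hcon
  have h1 : ((k : ℕ) : ZMod n) = ((0 : ℕ) : ZMod n) := by push_cast; exact hcon
  have := cast_inj_lt (n := n) (by omega) (by omega) h1
  omega

lemma good_of_indep (hk : 2 < k) (hn : 2 * k < n)
    (S : Finset (ZMod n ⊕ ZMod n)) (hS : IsIndep (P n k) S) :
    Good n k (fun i => Sum.inl i ∈ S) (fun i => Sum.inr i ∈ S) := by
  constructor
  · intro i h1 h2
    refine hS _ h1 _ h2 ((adj_iff n k _ _).mpr ⟨?_, Or.inl rfl⟩)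
    intro hcon
    rw [Sum.inl.injEq] at hcon
    exact one_ne_zero_zmod hn hk (by
      have := hcon.symm
      nth_rewrite 2 [show i = i + 0 by ring] at this
      exact add_left_cancel this)
  · intro i h1 h2
    refine hS _ h1 _ h2 ((adj_iff n k _ _).mpr ⟨by simp, Or.inl rfl⟩)
  · intro i h1 h2
    refine hS _ h1 _ h2 ((adj_iff n k _ _).mpr ⟨?_, Or.inl rfl⟩)
    intro hcon
    rw [Sum.inr.injEq] at hcon
    exact k_ne_zero_zmod hn hk (by
      have := hcon.symm
      nth_rewrite 2 [show i = i + 0 by ring] at this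
      exact add_left_cancel this)

/-- Upper bound: every independent set has size at most `n` minus number of empties,
and `n ≤ 2k·(empties)`. -/
theorem indep_card_bound (hk : 2 < k) (hke : k % 2 = 0) (hn : 2 * k < n)
    (S : Finset (ZMod n ⊕ ZMod n)) (hS : IsIndep (P n k) S) :
    ∃ e : ℕ, n ≤ 2 * k * e ∧ S.card + e ≤ n := by
  classical
  haveI : NeZero n := ⟨by omega⟩
  have hgood := good_of_indep hk hn S hS
  set Uf : ZMod n → Prop := fun i => Sum.inl i ∈ S with hUf
  set Vf : ZMod n → Prop := fun i => Sum.inr i ∈ S with hVf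
  set E : Finset (ZMod n) := Finset.univ.filter (fun i : ZMod n => ¬ Uf i ∧ ¬ Vf i) with hE
  refine ⟨E.card, core_count hgood hk hke hn, ?_⟩
  -- injection from S into occupied columns
  have hcard : S.card ≤ (Finset.univ.filter (fun i : ZMod n => ¬ (¬ Uf i ∧ ¬ Vf i))).card := by
    apply Finset.card_le_card_of_injOn (fun x => Sum.elim id id x)
    · intro x hx
      rcases x with i | i
      · simp only [Sum.elim_inl, id, Finset.mem_coe, Finset.mem_filter, Finset.mem_univ, true_and]
        intro hcon; exact hcon.1 hx
      · simp only [Sum.elim_inr, id, Finset.mem_coe, Finset.mem_filter, Finset.mem_univ, true_and]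
        intro hcon; exact hcon.2 hx
    · intro x hx y hy hxy
      rcases x with i | i <;> rcases y with j | j <;>
        simp only [Sum.elim_inl, Sum.elim_inr, id] at hxy <;> subst hxy
      · rfl
      · exact absurd (hS _ hx _ hy ((adj_iff n k _ _).mpr ⟨by simp, Or.inl rfl⟩)) (by simp)
      · exact absurd (hS _ hy _ hx ((adj_iff n k _ _).mpr ⟨by simp, Or.inl rfl⟩)) (by simp)
      · rfl
  have hsplit : (Finset.univ.filter (fun i : ZMod n => ¬ (¬ Uf i ∧ ¬ Vf i))).card
      = n - E.card := by
    rw [Finset.filter_not, Finset.card_sdiff_of_subset (Finset.filter_subset _ _), Finset.card_univ,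
      ZMod.card]
  have hEle : E.card ≤ n := by
    calc E.card ≤ (Finset.univ : Finset (ZMod n)).card := Finset.card_le_card (Finset.filter_subset _ _)
    _ = n := by rw [Finset.card_univ, ZMod.card]
  omega

end GPglue

namespace GPlow
open GPcore GPcore2 GPcount GPmain GPglue GP

variable {n k : ℕ}

/-- the periodic block pattern (0 = empty, 1 = outer, 2 = inner) -/
def beta (k j : ℕ) : ℕ :=
  if j = 2*k-1 then 0
  else if (j < k ∧ j % 2 = 0) ∨ (k-1 ≤ j ∧ j ≤ 2*k-3 ∧ j % 2 = 1) then 2 else 1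

/-- the tail pattern for residue `r` -/
def tau (r j : ℕ) : ℕ :=
  if j = r - 1 then 0 else if r = 2 then 1 else if j % 2 = 0 then 2 else 1

/-- the full coloring of `{0,…,n-1}` -/
def gam (n k i : ℕ) : ℕ :=
  if i < 2*k*(n/(2*k)) then beta k (i % (2*k)) else tau (n % (2*k)) (i - 2*k*(n/(2*k)))

lemma beta_le (k j : ℕ) : beta k j ≤ 2 := by unfold beta; split_ifs <;> omega

lemma tau_le (r j : ℕ) : tau r j ≤ 2 := by unfold tau; split_ifs <;> omega

lemma gam_le (n k i : ℕ) : gam n k i ≤ 2 := by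
  unfold gam; split_ifs
  · exact beta_le _ _
  · exact tau_le _ _

lemma gam_base {m j : ℕ} (hj : j < 2*k) (hlt : 2*k*m + j < 2*k*(n/(2*k))) :
    gam n k (2*k*m + j) = beta k j := by
  unfold gam
  rw [if_pos hlt, Nat.mul_add_mod, Nat.mod_eq_of_lt hj]

lemma gam_tail {j : ℕ} (hk : 0 < k) :
    gam n k (2*k*(n/(2*k)) + j) = tau (n % (2*k)) j := by
  unfold gam
  rw [if_neg (by omega), Nat.add_sub_cancel_left]

/-- the candidate independent set associated with a coloring -/
def mkset (n : ℕ) (γ : ℕ → ℕ) : Finset (ZMod n ⊕ ZMod n) :=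
  ((Finset.range n).filter (fun i => γ i = 1)).image
    (fun i : ℕ => (Sum.inl ((i : ZMod n)) : ZMod n ⊕ ZMod n)) ∪
  ((Finset.range n).filter (fun i => γ i = 2)).image
    (fun i : ℕ => (Sum.inr ((i : ZMod n)) : ZMod n ⊕ ZMod n))

/-- build an independent set from a valid coloring -/
lemma indep_of_coloring (hk : 2 < k) (hn : 2 * k < n) (γ : ℕ → ℕ)
    (hg2 : ∀ i, γ i ≤ 2)
    (hA : ∀ i < n, γ i = 1 → γ ((i+1) % n) ≠ 1)
    (hB : ∀ i < n, γ i = 2 → γ ((i+k) % n) ≠ 2) :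
    ∃ s : Finset (ZMod n ⊕ ZMod n), IsIndep (P n k) s ∧
      s.card + ((Finset.range n).filter (fun i => γ i = 0)).card = n := by
  classical
  haveI : NeZero n := ⟨by omega⟩
  refine ⟨mkset n γ, ?_, ?_⟩
  · -- independence
    intro v hv w hw hadj
    rw [adj_iff] at hadj
    obtain ⟨hne, hrel⟩ := hadj
    have hmem : ∀ x ∈ mkset n γ,
        (∃ i, i < n ∧ γ i = 1 ∧ x = Sum.inl ((i : ZMod n))) ∨
        (∃ i, i < n ∧ γ i = 2 ∧ x = Sum.inr ((i : ZMod n))) := by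
      intro x hx
      rcases Finset.mem_union.mp hx with hx | hx
      · obtain ⟨i, hi, rfl⟩ := Finset.mem_image.mp hx
        simp only [Finset.mem_filter, Finset.mem_range] at hi
        exact Or.inl ⟨i, hi.1, hi.2, rfl⟩
      · obtain ⟨i, hi, rfl⟩ := Finset.mem_image.mp hx
        simp only [Finset.mem_filter, Finset.mem_range] at hi
        exact Or.inr ⟨i, hi.1, hi.2, rfl⟩
    have succ_eq : ∀ i j : ℕ, i < n → j < n → ((j : ZMod n)) = ((i : ZMod n)) + 1 →
        j = (i + 1) % n := by
      intro i j hi hj hij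
      have : ((j : ℕ) : ZMod n) = (((i+1) : ℕ) : ZMod n) := by push_cast; rw [hij]
      have hval := congrArg ZMod.val this
      rwa [ZMod.val_natCast_of_lt hj, ZMod.val_natCast] at hval
    have kshift_eq : ∀ i j : ℕ, i < n → j < n →
        ((j : ZMod n)) = ((i : ZMod n)) + ((k : ℕ) : ZMod n) → j = (i + k) % n := by
      intro i j hi hj hij
      have : ((j : ℕ) : ZMod n) = (((i+k) : ℕ) : ZMod n) := by push_cast; rw [hij]
      have hval := congrArg ZMod.val this
      rwa [ZMod.val_natCast_of_lt hj, ZMod.val_natCast] at hval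
    have same_eq : ∀ i j : ℕ, i < n → j < n → ((j : ZMod n)) = ((i : ZMod n)) → j = i := by
      intro i j hi hj hij
      exact cast_inj_lt hj hi hij
    rcases hmem v hv with ⟨i, hi, hgi, rfl⟩ | ⟨i, hi, hgi, rfl⟩ <;>
      rcases hmem w hw with ⟨j, hj, hgj, rfl⟩ | ⟨j, hj, hgj, rfl⟩
    · -- inl i, inl j
      simp only [adjFun] at hrel
      rcases hrel with h1 | h1
      · have := succ_eq i j hi hj h1
        subst this
        exact hA i hi hgi hgj
      · have := succ_eq j i hj hi h1
        subst this
        exact hA j hj hgj hgi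
    · -- inl i, inr j
      simp only [adjFun] at hrel
      rcases hrel with h1 | h1
      · have hji := same_eq i j hi hj h1
        rw [hji] at hgj
        omega
      · exact h1
    · -- inr i, inl j
      simp only [adjFun] at hrel
      rcases hrel with h1 | h1
      · exact h1
      · have hij := same_eq j i hj hi h1
        rw [hij] at hgi
        omega
    · -- inr i, inr j
      simp only [adjFun] at hrel
      rcases hrel with h1 | h1
      · have := kshift_eq i j hi hj h1
        subst this
        exact hB i hi hgi hgj
      · have := kshift_eq j i hj hi h1
        subst this
        exact hB j hj hgj hgi
  · -- cardinality
    have hinj : ∀ (f : ZMod n → ZMod n ⊕ ZMod n), Function.Injective f →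
        ∀ t : Finset ℕ, t ⊆ Finset.range n →
        (t.image (fun i : ℕ => f ((i : ZMod n)))).card = t.card := by
      intro f hf t ht
      refine Finset.card_image_of_injOn ?_
      intro a ha b hb hab
      have ha' := Finset.mem_range.mp (ht ha)
      have hb' := Finset.mem_range.mp (ht hb)
      exact cast_inj_lt ha' hb' (hf hab)
    have hdisj : Disjoint
        (((Finset.range n).filter (fun i => γ i = 1)).image
          (fun i : ℕ => (Sum.inl ((i : ZMod n)) : ZMod n ⊕ ZMod n)))
        (((Finset.range n).filter (fun i => γ i = 2)).image
          (fun i : ℕ => (Sum.inr ((i : ZMod n)) : ZMod n ⊕ ZMod n))) := by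
      rw [Finset.disjoint_left]
      intro x hx1 hx2
      obtain ⟨i, _, rfl⟩ := Finset.mem_image.mp hx1
      obtain ⟨j, _, hcon⟩ := Finset.mem_image.mp hx2
      exact Sum.inl_ne_inr hcon.symm
    rw [mkset, Finset.card_union_of_disjoint hdisj]
    rw [hinj _ Sum.inl_injective _ (Finset.filter_subset _ _),
      hinj _ Sum.inr_injective _ (Finset.filter_subset _ _)]
    have h12 : ((Finset.range n).filter (fun i => γ i = 1)).card
        + ((Finset.range n).filter (fun i => γ i = 2)).card
        = ((Finset.range n).filter (fun i => ¬ (γ i = 0))).card := by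
      rw [← Finset.card_union_of_disjoint (by
        rw [Finset.disjoint_left]
        intro a ha hb
        rw [Finset.mem_filter] at ha hb
        omega)]
      congr 1
      rw [← Finset.filter_or]
      apply Finset.filter_congr
      intro x _
      have := hg2 x
      constructor
      · intro hor; omega
      · intro hne; omega
    rw [h12]
    have := Finset.card_filter_add_card_filter_not
      (s := Finset.range n) (p := fun i => γ i = 0)
    rw [Finset.card_range] at this
    omega

end GPlow

namespace GPpat
open GPlow

variable {n k : ℕ}

lemma gam_eq (hk : 0 < k) (q r : ℕ) (hq : q = n/(2*k)) (hr : r = n%(2*k)) :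
    (∀ m j, j < 2*k → 2*k*m + j < 2*k*q → gam n k (2*k*m+j) = beta k j) ∧
    (∀ j, gam n k (2*k*q + j) = tau r j) ∧
    (∀ x, x < 2*k → x < 2*k*q → gam n k x = beta k x) := by
  subst hq; subst hr
  refine ⟨fun m j hj hlt => gam_base hj hlt, fun j => gam_tail hk, fun x h1 h2 => ?_⟩
  unfold gam
  rw [if_pos h2, Nat.mod_eq_of_lt h1]

lemma mul_lt_helper (hk : 0 < k) {m q : ℕ} (hm : m < q) : 2*k*m + 2*k ≤ 2*k*q := by
  calc 2*k*m + 2*k = 2*k*(m+1) := by ring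
  _ ≤ 2*k*q := Nat.mul_le_mul_left _ hm

lemma lt_q_helper (hk : 0 < k) {m j q : ℕ} (hj : j < 2*k) (hlt : 2*k*m + j < 2*k*q) :
    m < q := by
  by_contra hc
  push_neg at hc
  have := Nat.mul_le_mul_left (2*k) hc
  omega

/-- The constructed coloring has no two adjacent outer vertices. -/
lemma gamA (hk : 2 < k) (hke : k % 2 = 0) (hn : 2*k < n) :
    ∀ i < n, gam n k i = 1 → gam n k ((i+1) % n) ≠ 1 := by
  have h2k : 0 < 2*k := by omega
  set q := n / (2*k) with hq
  set r := n % (2*k) with hr'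
  obtain ⟨hgb, hgt, hgb0⟩ := gam_eq (n := n) (by omega) q r hq hr'
  have hdm : 2*k*q + r = n := by rw [hq, hr']; exact Nat.div_add_mod n (2*k)
  have hr : r < 2*k := by rw [hr']; exact Nat.mod_lt _ h2k
  have hq1 : 1 ≤ q := by
    rcases Nat.eq_zero_or_pos q with h0 | h
    · rw [h0, Nat.mul_zero] at hdm; omega
    · exact h
  intro i hi h1
  rcases Nat.lt_or_ge i (2*k*q) with hbase | htail
  · have hd : 2*k*(i/(2*k)) + i % (2*k) = i := Nat.div_add_mod i (2*k)
    generalize hm' : i / (2*k) = m at hd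
    generalize hj' : i % (2*k) = j at hd
    have hj : j < 2*k := by rw [← hj']; exact Nat.mod_lt _ h2k
    have hbeta : beta k j = 1 := by rw [← hd, hgb m j hj (by omega)] at h1; exact h1
    have hjne : j + 1 < 2*k := by unfold beta at hbeta; split_ifs at hbeta <;> omega
    have hm : m < q := lt_q_helper (by omega) hj (by omega)
    have hmm := mul_lt_helper (k := k) (by omega) hm
    have hi1 : i + 1 < 2*k*q := by omega
    rw [Nat.mod_eq_of_lt (by omega), show i + 1 = 2*k*m + (j+1) by omega,
      hgb m (j+1) (by omega) (by omega)]
    unfold beta at hbeta ⊢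
    split_ifs at hbeta ⊢ <;> omega
  · have hrne : r ≠ 0 := by omega
    obtain ⟨j, rfl⟩ : ∃ j, i = 2*k*q + j := ⟨i - 2*k*q, by omega⟩
    have hjr : j < r := by omega
    have htau : tau r j = 1 := by rw [hgt j] at h1; exact h1
    have hjne : j ≠ r - 1 := by unfold tau at htau; split_ifs at htau <;> omega
    have hi1 : 2*k*q + j + 1 < n := by omega
    rw [Nat.mod_eq_of_lt hi1, show 2*k*q + j + 1 = 2*k*q + (j+1) by omega, hgt (j+1)]
    unfold tau at htau ⊢
    split_ifs at htau ⊢ <;> omega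

/-- The constructed coloring has no two inner vertices at distance `k`. -/
lemma gamB (hk : 2 < k) (hke : k % 2 = 0) (hn : 2*k < n)
    (hres : n % (2 * k) = 0 ∨ n % (2 * k) = 2 ∨ n % (2 * k) = k - 1 ∨ n % (2 * k) = k + 1) :
    ∀ i < n, gam n k i = 2 → gam n k ((i+k) % n) ≠ 2 := by
  have h2k : 0 < 2*k := by omega
  set q := n / (2*k) with hq
  set r := n % (2*k) with hr'
  obtain ⟨hgb, hgt, hgb0⟩ := gam_eq (n := n) (by omega) q r hq hr'
  have hdm : 2*k*q + r = n := by rw [hq, hr']; exact Nat.div_add_mod n (2*k)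
  have hr : r < 2*k := by rw [hr']; exact Nat.mod_lt _ h2k
  have hres' : r = 0 ∨ r = 2 ∨ r = k - 1 ∨ r = k + 1 := by rw [hr']; exact hres
  have hq1 : 1 ≤ q := by
    rcases Nat.eq_zero_or_pos q with h0 | h
    · rw [h0, Nat.mul_zero] at hdm; omega
    · exact h
  have h2kq : 2*k ≤ 2*k*q := by
    calc 2*k = 2*k*1 := by ring
    _ ≤ 2*k*q := Nat.mul_le_mul_left _ hq1
  intro i hi h2
  rcases Nat.lt_or_ge i (2*k*q) with hbase | htail
  · have hd : 2*k*(i/(2*k)) + i % (2*k) = i := Nat.div_add_mod i (2*k)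
    generalize hm' : i / (2*k) = m at hd
    generalize hj' : i % (2*k) = j at hd
    have hj : j < 2*k := by rw [← hj']; exact Nat.mod_lt _ h2k
    have hbeta : beta k j = 2 := by rw [← hd, hgb m j hj (by omega)] at h2; exact h2
    have hm : m < q := lt_q_helper (by omega) hj (by omega)
    have hmm := mul_lt_helper (k := k) (by omega) hm
    rcases Nat.lt_or_ge j k with hjk | hjk
    · -- stays within the base part
      have h1 : i + k = 2*k*m + (j + k) := by omega
      rw [Nat.mod_eq_of_lt (by omega), h1, hgb m (j+k) (by omega) (by omega)]
      unfold beta at hbeta ⊢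
      split_ifs at hbeta ⊢ <;> omega
    · have hmul : 2*k*(m+1) = 2*k*m + 2*k := by ring
      have h1 : i + k = 2*k*(m+1) + (j - k) := by omega
      rcases Nat.lt_or_ge (i+k) (2*k*q) with hc1 | hc2
      · rw [Nat.mod_eq_of_lt (by omega), h1, hgb (m+1) (j-k) (by omega) (by omega)]
        unfold beta at hbeta ⊢
        split_ifs at hbeta ⊢ <;> omega
      · have hmq : 2*k*(m+1) = 2*k*q := by
          have hle : m + 1 ≤ q := hm
          rcases Nat.eq_or_lt_of_le hle with he | hlt
          · rw [he]
          · exfalso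
            have := mul_lt_helper (k := k) (by omega) hlt
            omega
        rcases Nat.lt_or_ge (i + k) n with hcc1 | hcc2
        · -- lands in the tail
          have h3 : i + k = 2*k*q + (j - k) := by omega
          rw [Nat.mod_eq_of_lt hcc1, h3, hgt (j-k)]
          have hodd : (j - k) % 2 = 1 := by
            unfold beta at hbeta; split_ifs at hbeta <;> omega
          unfold tau
          split_ifs <;> omega
        · -- wraps around
          have hw : (i + k) % n = j - k - r := by
            have he : i + k - n = j - k - r := by omega
            rw [Nat.mod_eq_sub_mod hcc2, he, Nat.mod_eq_of_lt (by omega)]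
          rw [hw, hgb0 (j - k - r) (by omega) (by omega)]
          rcases hres' with h4 | h4 | h4 | h4 <;>
            (unfold beta at hbeta ⊢; split_ifs at hbeta ⊢ <;> omega)
  · -- starts in the tail
    have hrne : r ≠ 0 := by omega
    obtain ⟨j, rfl⟩ : ∃ j, i = 2*k*q + j := ⟨i - 2*k*q, by omega⟩
    have hjr : j < r := by omega
    have htau : tau r j = 2 := by rw [hgt j] at h2; exact h2
    have hprops : j % 2 = 0 ∧ j ≠ r - 1 ∧ r ≠ 2 := by
      unfold tau at htau; split_ifs at htau <;> omega
    rcases Nat.lt_or_ge (2*k*q + j + k) n with hc1 | hc2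
    · have hjk : j + k < r := by omega
      rw [Nat.mod_eq_of_lt hc1, show 2*k*q + j + k = 2*k*q + (j+k) by omega, hgt (j+k)]
      rcases hres' with h4 | h4 | h4 | h4 <;>
        (unfold tau at htau ⊢; split_ifs at htau ⊢ <;> omega)
    · have hw : (2*k*q + j + k) % n = j + k - r := by
        have he : 2*k*q + j + k - n = j + k - r := by omega
        rw [Nat.mod_eq_sub_mod hc2, he, Nat.mod_eq_of_lt (by omega)]
      rw [hw, hgb0 (j + k - r) (by omega) (by omega)]
      rcases hres' with h4 | h4 | h4 | h4 <;>
        (unfold tau at htau; unfold beta; split_ifs at htau ⊢ <;> omega)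

end GPpat

namespace GPfinal
open GPcore GPcore2 GPcount GPmain GPglue GPlow GPpat GP

variable {n k : ℕ}

lemma gam_zero_count (hk : 2 < k) (hn : 2*k < n) :
    (n % (2*k) = 0 → ((Finset.range n).filter (fun i => gam n k i = 0)).card ≤ n/(2*k)) ∧
    (n % (2*k) ≠ 0 → ((Finset.range n).filter (fun i => gam n k i = 0)).card ≤ n/(2*k) + 1) := by
  have h2k : 0 < 2*k := by omega
  set q := n / (2*k) with hq
  set r := n % (2*k) with hr'
  obtain ⟨hgb, hgt, hgb0⟩ := gam_eq (n := n) (by omega) q r hq hr'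
  have hdm : 2*k*q + r = n := by rw [hq, hr']; exact Nat.div_add_mod n (2*k)
  have hr : r < 2*k := by rw [hr']; exact Nat.mod_lt _ h2k
  set f : ℕ → ℕ := fun m => 2*k*m + (2*k-1) with hf
  have hmem : ∀ i < n, gam n k i = 0 →
      (i ∈ (Finset.range q).image f) ∨ (r ≠ 0 ∧ i = n - 1) := by
    intro i hi h0
    rcases Nat.lt_or_ge i (2*k*q) with hbase | htail
    · have hd : 2*k*(i/(2*k)) + i % (2*k) = i := Nat.div_add_mod i (2*k)
      generalize hm' : i / (2*k) = m at hd
      generalize hj' : i % (2*k) = j at hd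
      have hj : j < 2*k := by rw [← hj']; exact Nat.mod_lt _ h2k
      have hbeta : beta k j = 0 := by rw [← hd, hgb m j hj (by omega)] at h0; exact h0
      have hjeq : j = 2*k - 1 := by unfold beta at hbeta; split_ifs at hbeta <;> omega
      have hm : m < q := lt_q_helper (by omega) hj (by omega)
      left
      refine Finset.mem_image.mpr ⟨m, Finset.mem_range.mpr hm, ?_⟩
      simp only [hf]; omega
    · have hrne : r ≠ 0 := by omega
      obtain ⟨j, rfl⟩ : ∃ j, i = 2*k*q + j := ⟨i - 2*k*q, by omega⟩
      have hjr : j < r := by omega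
      have htau : tau r j = 0 := by rw [hgt j] at h0; exact h0
      have hjeq : j = r - 1 := by unfold tau at htau; split_ifs at htau <;> omega
      right
      exact ⟨hrne, by omega⟩
  constructor
  · intro hr0
    have hsub : (Finset.range n).filter (fun i => gam n k i = 0) ⊆ (Finset.range q).image f := by
      intro i hi
      rw [Finset.mem_filter, Finset.mem_range] at hi
      rcases hmem i hi.1 hi.2 with h | h
      · exact h
      · exact absurd hr0 h.1
    calc ((Finset.range n).filter (fun i => gam n k i = 0)).card
        ≤ ((Finset.range q).image f).card := Finset.card_le_card hsub
    _ ≤ (Finset.range q).card := Finset.card_image_le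
    _ = q := Finset.card_range q
  · intro hrne
    have hsub : (Finset.range n).filter (fun i => gam n k i = 0)
        ⊆ ((Finset.range q).image f) ∪ {n-1} := by
      intro i hi
      rw [Finset.mem_filter, Finset.mem_range] at hi
      rcases hmem i hi.1 hi.2 with h | h
      · exact Finset.mem_union_left _ h
      · exact Finset.mem_union_right _ (Finset.mem_singleton.mpr h.2)
    calc ((Finset.range n).filter (fun i => gam n k i = 0)).card
        ≤ (((Finset.range q).image f) ∪ {n-1}).card := Finset.card_le_card hsub
    _ ≤ ((Finset.range q).image f).card + ({n-1} : Finset ℕ).card := Finset.card_union_le _ _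
    _ ≤ (Finset.range q).card + 1 := by
        have := Finset.card_image_le (s := Finset.range q) (f := f)
        simp only [Finset.card_singleton]
        omega
    _ = q + 1 := by rw [Finset.card_range]

theorem alpha_exact (hke : Even k) (hk : 2 < k) (hn : 2 * k < n)
    (hres : n % (2 * k) = 0 ∨ n % (2 * k) = 2 ∨ n % (2 * k) = k - 1 ∨ n % (2 * k) = k + 1) :
    alpha n k = (2 * k - 1) * n / (2 * k) := by
  classical
  have hke' : k % 2 = 0 := Nat.even_iff.mp hke
  have h2k : 0 < 2*k := by omega
  set q := n / (2*k) with hq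
  set r := n % (2*k) with hr'
  have hdm : 2*k*q + r = n := by rw [hq, hr']; exact Nat.div_add_mod n (2*k)
  have hr : r < 2*k := by rw [hr']; exact Nat.mod_lt _ h2k
  have hres' : r = 0 ∨ r = 2 ∨ r = k - 1 ∨ r = k + 1 := by rw [hr']; exact hres
  have hq1 : 1 ≤ q := by
    rcases Nat.eq_zero_or_pos q with h0 | h
    · rw [h0, Nat.mul_zero] at hdm; omega
    · exact h
  have h2kq : 2*k ≤ 2*k*q := by
    calc 2*k = 2*k*1 := by ring
    _ ≤ 2*k*q := Nat.mul_le_mul_left _ hq1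
  -- the target value
  set M : ℕ := n - q - (if r = 0 then 0 else 1) with hM
  -- value of the RHS
  have hq2kq : q ≤ 2*k*q := Nat.le_mul_of_pos_left q (by omega)
  have hval : (2 * k - 1) * n / (2 * k) = M := by
    set c : ℕ := 2*k - 1 with hc0
    have hc : c + 1 = 2*k := by omega
    have e1 : (c+1)*n = c*n + n := by ring
    rw [hc] at e1
    by_cases hr0 : r = 0
    · have hMval : M = n - q := by rw [hM, if_pos hr0]; omega
      have hM1 : M + q = n := by rw [hMval]; omega
      have e2 : 2*k*(M + q) = 2*k*M + 2*k*q := by ring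
      have e3 : 2*k*(M+q) = 2*k*n := by rw [hM1]
      have key : c*n = 2*k*M := by omega
      rw [key, Nat.mul_div_cancel_left _ h2k]
    · have hMval : M = n - q - 1 := by rw [hM, if_neg hr0]
      have hM1 : M + (q + 1) = n := by rw [hMval]; omega
      have e2 : 2*k*(M + (q+1)) = 2*k*M + 2*k*q + 2*k := by ring
      have e3 : 2*k*(M+(q+1)) = 2*k*n := by rw [hM1]
      have key : c*n = 2*k*M + (2*k - r) := by omega
      rw [key, Nat.mul_add_div h2k, Nat.div_eq_of_lt (by omega)]
      omega
  rw [hval]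
  -- upper bound for any independent set
  have hub : ∀ m ∈ {m | ∃ s : Finset (ZMod n ⊕ ZMod n), IsIndep (P n k) s ∧ s.card = m},
      m ≤ M := by
    rintro m ⟨s, hs, rfl⟩
    obtain ⟨e, he1, he2⟩ := indep_card_bound hk hke' hn s hs
    by_cases hr0 : r = 0
    · rw [hM, if_pos hr0]
      have hn' : 2*k*q ≤ 2*k*e := by omega
      have := Nat.le_of_mul_le_mul_left hn' h2k
      omega
    · rw [hM, if_neg hr0]
      have hqe : q + 1 ≤ e := by
        by_contra hcon
        push_neg at hcon
        have h5 : e ≤ q := by omega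
        have := Nat.mul_le_mul_left (2*k) h5
        omega
      omega
  -- lower bound : a concrete independent set
  have hlb : ∃ s : Finset (ZMod n ⊕ ZMod n), IsIndep (P n k) s ∧ s.card = M := by
    obtain ⟨s, hind, hcard⟩ := indep_of_coloring hk hn (gam n k) (fun i => gam_le n k i)
      (gamA hk hke' hn) (gamB hk hke' hn hres)
    have hzc := gam_zero_count (n := n) hk hn
    have hMle : M ≤ s.card := by
      by_cases hr0 : r = 0
      · have h6 := hzc.1 (by rw [← hr']; exact hr0)
        rw [← hq] at h6
        rw [hM, if_pos hr0]
        omega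
      · have h6 := hzc.2 (by rw [← hr']; exact hr0)
        rw [← hq] at h6
        rw [hM, if_neg hr0]
        omega
    obtain ⟨t, hts, htcard⟩ := Finset.exists_subset_card_eq hMle
    exact ⟨t, fun v hv w hw => hind v (hts hv) w (hts hw), htcard⟩
  -- conclude via sSup
  rw [alpha, indepNum]
  apply le_antisymm
  · exact csSup_le ⟨0, ⟨∅, fun v hv => absurd hv (Finset.notMem_empty v), Finset.card_empty⟩⟩ hub
  · exact le_csSup ⟨M, fun m hm => hub m hm⟩ hlb

end GPfinal

namespace GP

/-- For even `k > 2` and `n > 2k` with `n ≡ 0, 2, k−1` or `k+1 (mod 2k)`,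
`α(P(n,k)) = ⌊(2k−1)n/(2k)⌋`. -/
theorem alpha_exact_special_residues (n k : ℕ) (hke : Even k) (hk : 2 < k)
    (hn : 2 * k < n)
    (hres : n % (2 * k) = 0 ∨ n % (2 * k) = 2 ∨ n % (2 * k) = k - 1 ∨ n % (2 * k) = k + 1) :
    alpha n k = (2 * k - 1) * n / (2 * k) := by
  exact GPfinal.alpha_exact hke hk hn hres

end GP
end

section
/- If n is even and k is odd with n > 2k ≥ 2, then α(P(n,k)) = n; in particular α(P(n,k)) ≥ ⌊4n/5⌋. -/
namespace GP

lemma cast_mod_two {n : ℕ} (hd : 2 ∣ n) {a b : ℕ} (h : (a : ZMod n) = (b : ZMod n)) :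
    a % 2 = b % 2 := by
  have h2 : (a : ZMod 2) = (b : ZMod 2) := by
    have := congrArg (ZMod.castHom hd (ZMod 2)) h
    simpa using this
  exact (ZMod.natCast_eq_natCast_iff' a b 2).mp h2

/-- If `n` is even and `k` is odd with `n > 2k ≥ 2`, then
`α(P(n,k)) = n`; in particular `α(P(n,k)) ≥ ⌊4n/5⌋`. -/
theorem alpha_even_n_odd_k (n k : ℕ) (hne : Even n) (hko : Odd k) (hk : 1 ≤ k)
    (hn : 2 * k < n) :
    alpha n k = n ∧ 4 * n / 5 ≤ alpha n k := by
  haveI : NeZero n := ⟨by omega⟩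
  have hd : 2 ∣ n := hne.two_dvd
  obtain ⟨m, hm⟩ := hko
  -- Upper bound: any independent set has card ≤ n
  have hub : ∀ x ∈ {m | ∃ s : Finset (ZMod n ⊕ ZMod n), IsIndep (P n k) s ∧ s.card = x}, x ≤ n := by
    rintro x ⟨s, hind, rfl⟩
    have : s.card ≤ (Finset.univ : Finset (ZMod n)).card := by
      apply Finset.card_le_card_of_injOn (Sum.elim id id) (fun a _ => Finset.mem_univ _)
      intro a ha b hb hab
      by_contra hne'
      rcases a with i | i <;> rcases b with j | j <;> simp at hab <;> subst hab
      · exact hne' rfl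
      · exact hind _ ha _ hb (by simp [P, SimpleGraph.fromRel_adj, adjFun])
      · exact hind _ ha _ hb (by simp [P, SimpleGraph.fromRel_adj, adjFun])
      · exact hne' rfl
    simpa using this
  -- Construction
  set f : ℕ → ZMod n ⊕ ZMod n := fun j =>
    if j % 2 = 0 then Sum.inl (j : ZMod n) else Sum.inr (j : ZMod n) with hf
  have hinj : Set.InjOn f (Finset.range n) := by
    intro a ha b hb hab
    simp only [Finset.coe_range, Set.mem_Iio] at ha hb
    by_cases hA : a % 2 = 0 <;> by_cases hB : b % 2 = 0 <;>
      simp only [hf, hA, hB, if_true, if_false, if_pos, if_neg, reduceIte] at hab <;>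
      first
        | (simp only [Sum.inl.injEq, Sum.inr.injEq] at hab
           have := congrArg ZMod.val hab
           rwa [ZMod.val_natCast_of_lt ha, ZMod.val_natCast_of_lt hb] at this)
        | simp at hab
  have hcard : ((Finset.range n).image f).card = n := by
    rw [Finset.card_image_of_injOn hinj, Finset.card_range]
  have hindep : IsIndep (P n k) ((Finset.range n).image f) := by
    intro x hx y hy hadj
    simp only [Finset.mem_image, Finset.mem_range] at hx hy
    obtain ⟨a, ha, rfl⟩ := hx
    obtain ⟨b, hb, rfl⟩ := hy
    by_cases hA : a % 2 = 0 <;> by_cases hB : b % 2 = 0 <;>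
      simp only [hf, hA, hB, if_true, if_false, reduceIte] at hadj <;>
      rw [P, SimpleGraph.fromRel_adj] at hadj <;>
      obtain ⟨hne', hadj⟩ := hadj <;>
      simp only [adjFun] at hadj
    · rcases hadj with h | h
      · have := cast_mod_two hd (show (b : ZMod n) = ((a+1 : ℕ) : ZMod n) by push_cast; exact h)
        omega
      · have := cast_mod_two hd (show (a : ZMod n) = ((b+1 : ℕ) : ZMod n) by push_cast; exact h)
        omega
    · rcases hadj with h | h
      · have := cast_mod_two hd h; omega
      · exact h
    · rcases hadj with h | h
      · exact h
      · have := cast_mod_two hd h; omega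
    · rcases hadj with h | h
      · have := cast_mod_two hd (show (b : ZMod n) = ((a+k : ℕ) : ZMod n) by push_cast; exact h)
        omega
      · have := cast_mod_two hd (show (a : ZMod n) = ((b+k : ℕ) : ZMod n) by push_cast; exact h)
        omega
  have hmem : n ∈ {m | ∃ s : Finset (ZMod n ⊕ ZMod n), IsIndep (P n k) s ∧ s.card = m} :=
    ⟨_, hindep, hcard⟩
  have halpha : alpha n k = n := by
    refine le_antisymm (csSup_le ⟨n, hmem⟩ hub) (le_csSup ⟨n, hub⟩ hmem)
  exact ⟨halpha, by omega⟩

end GP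
end

section
/- If n and k are both odd with n > 2k ≥ 2 and n ≥ 5(k+1)/2, then α(P(n,k)) ≥ ⌊4n/5⌋ (equivalently, β(P(n,k)) ≤ n + ⌈n/5⌉). -/
namespace GP

lemma reduce {n : ℕ} (hn : 0 < n) {i j : ℕ} (hj : j < n) (h : (j : ZMod n) = (i : ZMod n)) :
    j = i ∨ i = j + n ∨ 2 * n ≤ i := by
  haveI : NeZero n := ⟨hn.ne'⟩
  have h2 : j % n = i % n := (ZMod.natCast_eq_natCast_iff _ _ _).mp h
  rw [Nat.mod_eq_of_lt hj] at h2
  rcases lt_or_ge i n with h3 | h3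
  · left; rw [Nat.mod_eq_of_lt h3] at h2; omega
  · rcases lt_or_ge i (2*n) with h4 | h4
    · right; left
      rw [Nat.mod_eq_sub_mod h3, Nat.mod_eq_of_lt (by omega)] at h2
      omega
    · right; right; exact h4

/-- If `n` and `k` are both odd with `n > 2k ≥ 2` and `n ≥ 5(k+1)/2`,
then `α(P(n,k)) ≥ ⌊4n/5⌋`. -/
theorem bhm_conjecture_odd_odd (n k : ℕ) (hno : Odd n) (hko : Odd k) (hk : 1 ≤ k)
    (hn : 2 * k < n) (hn2 : 5 * (k + 1) / 2 ≤ n) :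
    4 * n / 5 ≤ alpha n k := by
  obtain ⟨a, ha⟩ := hno
  obtain ⟨b, hb⟩ := hko
  have hn0 : 0 < n := by omega
  haveI : NeZero n := ⟨hn0.ne'⟩
  set f : ℕ → (ZMod n ⊕ ZMod n) := fun t => Sum.inl ((2*t : ℕ) : ZMod n) with hf
  set g : ℕ → (ZMod n ⊕ ZMod n) := fun t => Sum.inr ((k + 2*t : ℕ) : ZMod n) with hg
  set S : Finset (ZMod n ⊕ ZMod n) :=
    (Finset.range ((n-1)/2)).image f ∪ (Finset.range ((n-k)/2)).image g with hS
  -- membership characterization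
  have hmemS : ∀ x ∈ S,
      (∃ t, t < (n-1)/2 ∧ x = Sum.inl ((2*t : ℕ) : ZMod n)) ∨
      (∃ t, t < (n-k)/2 ∧ x = Sum.inr ((k + 2*t : ℕ) : ZMod n)) := by
    intro x hx
    simp only [hS, Finset.mem_union, Finset.mem_image, Finset.mem_range, hf, hg] at hx
    rcases hx with ⟨t, ht, rfl⟩ | ⟨t, ht, rfl⟩
    · exact Or.inl ⟨t, ht, rfl⟩
    · exact Or.inr ⟨t, ht, rfl⟩
  -- independence
  have hindep : IsIndep (P n k) S := by
    intro x hx y hy hadj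
    rw [P, SimpleGraph.fromRel_adj] at hadj
    obtain ⟨hne, hrel⟩ := hadj
    rcases hmemS x hx with ⟨t, ht, rfl⟩ | ⟨t, ht, rfl⟩ <;>
      rcases hmemS y hy with ⟨s, hs, rfl⟩ | ⟨s, hs, rfl⟩ <;>
      simp only [adjFun] at hrel
    · -- outer-outer
      have ht' : 2*t ≤ n - 3 := by omega
      have hs' : 2*s ≤ n - 3 := by omega
      rcases hrel with h | h
      · rw [show ((2*t:ℕ):ZMod n) + 1 = ((2*t+1 : ℕ) : ZMod n) by push_cast; ring] at h
        rcases reduce hn0 (by omega : 2*s < n) h with h1 | h1 | h1 <;> omega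
      · rw [show ((2*s:ℕ):ZMod n) + 1 = ((2*s+1 : ℕ) : ZMod n) by push_cast; ring] at h
        rcases reduce hn0 (by omega : 2*t < n) h with h1 | h1 | h1 <;> omega
    · -- outer-inner
      have ht' : 2*t ≤ n - 3 := by omega
      have hs' : k + 2*s ≤ n - 2 := by omega
      rcases hrel with h | h
      · rcases reduce hn0 (by omega : k + 2*s < n) h with h1 | h1 | h1 <;> omega
      · exact h
    · -- inner-outer
      have ht' : k + 2*t ≤ n - 2 := by omega
      have hs' : 2*s ≤ n - 3 := by omega
      rcases hrel with h | h
      · exact h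
      · rcases reduce hn0 (by omega : k + 2*t < n) h with h1 | h1 | h1 <;> omega
    · -- inner-inner
      have ht' : k + 2*t ≤ n - 2 := by omega
      have hs' : k + 2*s ≤ n - 2 := by omega
      rcases hrel with h | h
      · rw [show ((k + 2*t:ℕ):ZMod n) + (k : ZMod n) = ((k + 2*t + k : ℕ) : ZMod n) by
          push_cast; ring] at h
        rcases reduce hn0 (by omega : k + 2*s < n) h with h1 | h1 | h1 <;> omega
      · rw [show ((k + 2*s:ℕ):ZMod n) + (k : ZMod n) = ((k + 2*s + k : ℕ) : ZMod n) by
          push_cast; ring] at h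
        rcases reduce hn0 (by omega : k + 2*t < n) h with h1 | h1 | h1 <;> omega
  -- cardinality
  have hcast : ∀ {i j : ℕ}, i < n → j < n → (i : ZMod n) = (j : ZMod n) → i = j := by
    intro i j hi hj h
    rcases reduce hn0 hi h with h1 | h1 | h1 <;> omega
  have hcardA : ((Finset.range ((n-1)/2)).image f).card = (n-1)/2 := by
    rw [Finset.card_image_of_injOn, Finset.card_range]
    intro t ht t' ht' h
    simp only [Finset.mem_coe, Finset.mem_range] at ht ht'
    simp only [hf, Sum.inl.injEq] at h
    have := hcast (by omega : 2*t < n) (by omega : 2*t' < n) h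
    omega
  have hcardB : ((Finset.range ((n-k)/2)).image g).card = (n-k)/2 := by
    rw [Finset.card_image_of_injOn, Finset.card_range]
    intro t ht t' ht' h
    simp only [Finset.mem_coe, Finset.mem_range] at ht ht'
    simp only [hg, Sum.inr.injEq] at h
    have := hcast (by omega : k + 2*t < n) (by omega : k + 2*t' < n) h
    omega
  have hdisj : Disjoint ((Finset.range ((n-1)/2)).image f)
      ((Finset.range ((n-k)/2)).image g) := by
    rw [Finset.disjoint_left]
    rintro x hx hy
    simp only [Finset.mem_image, hf, hg] at hx hy
    obtain ⟨t, _, rfl⟩ := hx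
    obtain ⟨s, _, h⟩ := hy
    exact Sum.inl_ne_inr h.symm
  have hcardS : S.card = (n-1)/2 + (n-k)/2 := by
    rw [hS, Finset.card_union_of_disjoint hdisj, hcardA, hcardB]
  -- conclude
  have hmem : S.card ∈ {m | ∃ s : Finset (ZMod n ⊕ ZMod n), IsIndep (P n k) s ∧ s.card = m} :=
    ⟨S, hindep, rfl⟩
  have hbdd : BddAbove {m | ∃ s : Finset (ZMod n ⊕ ZMod n), IsIndep (P n k) s ∧ s.card = m} := by
    refine ⟨Fintype.card (ZMod n ⊕ ZMod n), ?_⟩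
    rintro m ⟨s, _, rfl⟩
    exact s.card_le_univ
  have hle : S.card ≤ alpha n k := le_csSup hbdd hmem
  have : 4 * n / 5 ≤ S.card := by rw [hcardS]; omega
  omega


end GP
end

section
/- If n and k are both even with n > 2k ≥ 2, then α(P(n,k)) ≥ ⌊4n/5⌋ (equivalently, β(P(n,k)) ≤ n + ⌈n/5⌉). -/
namespace GP

/-! ### Auxiliary lemmas -/

lemma alpha_ge {n k : ℕ} (hn : 0 < n) (S : Finset (ZMod n ⊕ ZMod n))
    (hS : IsIndep (P n k) S) : S.card ≤ alpha n k := by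
  haveI : NeZero n := ⟨hn.ne'⟩
  apply le_csSup
  · exact ⟨(Finset.univ : Finset (ZMod n ⊕ ZMod n)).card, by
      rintro m ⟨t, _, rfl⟩; exact Finset.card_le_univ t⟩
  · exact ⟨S, hS, rfl⟩

lemma cast_inj_of_lt_s17 {n : ℕ} (hn : 0 < n) {a b : ℕ} (ha : a < n) (hb : b < n)
    (h : (a : ZMod n) = (b : ZMod n)) : a = b := by
  haveI : NeZero n := ⟨hn.ne'⟩
  rw [← ZMod.val_cast_of_lt ha, ← ZMod.val_cast_of_lt hb, h]

/-- Key reduction: an abstract pair of index sets gives a lower bound on `alpha`. -/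
lemma abstract_bound (n k : ℕ) (hn : 0 < n) (A B : Finset ℕ)
    (hAn : ∀ i ∈ A, i < n) (hBn : ∀ i ∈ B, i < n)
    (hdisj : ∀ i, i ∈ A → i ∈ B → False)
    (hA : ∀ i ∈ A, ∀ j ∈ A, (i + 1) % n ≠ j)
    (hB : ∀ i ∈ B, ∀ j ∈ B, (i + k) % n ≠ j) :
    A.card + B.card ≤ alpha n k := by
  haveI : NeZero n := ⟨hn.ne'⟩
  set S : Finset (ZMod n ⊕ ZMod n) :=
    A.image (fun i : ℕ => (Sum.inl (i : ZMod n) : ZMod n ⊕ ZMod n)) ∪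
      B.image (fun i : ℕ => (Sum.inr (i : ZMod n) : ZMod n ⊕ ZMod n)) with hSdef
  have castA : ∀ (i : ℕ) (x : ℕ), i ∈ A → x ∈ A → ((i + 1 : ℕ) : ZMod n) ≠ (x : ZMod n) := by
    intro i x hi hx h
    apply hA i hi x hx
    apply cast_inj_of_lt_s17 hn (Nat.mod_lt _ hn) (hAn x hx)
    rw [ZMod.natCast_mod]; exact h
  have castB : ∀ (i : ℕ) (x : ℕ), i ∈ B → x ∈ B → ((i + k : ℕ) : ZMod n) ≠ (x : ZMod n) := by
    intro i x hi hx h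
    apply hB i hi x hx
    apply cast_inj_of_lt_s17 hn (Nat.mod_lt _ hn) (hBn x hx)
    rw [ZMod.natCast_mod]; exact h
  have hindep : IsIndep (P n k) S := by
    intro x hx y hy hadj
    rw [P, SimpleGraph.fromRel_adj] at hadj
    obtain ⟨-, hor⟩ := hadj
    simp only [hSdef, Finset.mem_union, Finset.mem_image] at hx hy
    rcases hx with ⟨i, hi, rfl⟩ | ⟨i, hi, rfl⟩ <;> rcases hy with ⟨j, hj, rfl⟩ | ⟨j, hj, rfl⟩
    · simp only [adjFun] at hor
      rcases hor with h | h
      · exact castA i j hi hj (by push_cast; rw [h])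
      · exact castA j i hj hi (by push_cast; rw [h])
    · simp only [adjFun] at hor
      rcases hor with h | h
      · exact hdisj i hi ((cast_inj_of_lt_s17 hn (hBn j hj) (hAn i hi) h) ▸ hj)
      · exact h
    · simp only [adjFun] at hor
      rcases hor with h | h
      · exact h
      · exact hdisj j hj ((cast_inj_of_lt_s17 hn (hBn i hi) (hAn j hj) h) ▸ hi)
    · simp only [adjFun] at hor
      rcases hor with h | h
      · exact castB i j hi hj (by push_cast; rw [h])
      · exact castB j i hj hi (by push_cast; rw [h])
  have hcard : S.card = A.card + B.card := by
    rw [hSdef, Finset.card_union_of_disjoint, Finset.card_image_of_injOn,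
      Finset.card_image_of_injOn]
    · intro a ha b hb h
      exact cast_inj_of_lt_s17 hn (hBn a ha) (hBn b hb) (by simpa using h)
    · intro a ha b hb h
      exact cast_inj_of_lt_s17 hn (hAn a ha) (hAn b hb) (by simpa using h)
    · rw [Finset.disjoint_left]
      rintro z hz hz'
      simp only [Finset.mem_image] at hz hz'
      obtain ⟨a, -, rfl⟩ := hz
      obtain ⟨b, -, hb⟩ := hz'
      exact Sum.inl_ne_inr hb.symm
  calc A.card + B.card = S.card := hcard.symm
    _ ≤ alpha n k := alpha_ge hn S hindep

lemma filter_range_succ_card (P : ℕ → Prop) [DecidablePred P] (m : ℕ) :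
    ((Finset.range (m + 1)).filter P).card
      = ((Finset.range m).filter P).card + (if P m then 1 else 0) := by
  rw [Finset.range_add_one, Finset.filter_insert]
  split_ifs with h
  · rw [Finset.card_insert_of_notMem (by simp)]
  · rfl

lemma count_pair (P : ℕ → Prop) [DecidablePred P] (h : ∀ t, P (2*t) ↔ ¬ P (2*t+1)) :
    ∀ s, ((Finset.range (2*s)).filter P).card = s := by
  intro s
  induction s with
  | zero => simp
  | succ s ih =>
    have h2 : 2*(s+1) = (2*s+1)+1 := by ring
    rw [h2, filter_range_succ_card, filter_range_succ_card, ih]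
    rcases Classical.em (P (2*s)) with h1 | h1
    · have hnot : ¬ P (2*s+1) := (h s).1 h1
      rw [if_pos h1, if_neg hnot]
    · have hyes : P (2*s+1) := by
        by_contra hc
        exact h1 ((h s).2 hc)
      rw [if_neg h1, if_pos hyes]

lemma count_mod5 (c : ℕ) (n : ℕ) :
    ((Finset.range n).filter (fun i => i % 5 = c)).card = (n + 4 - c) / 5 ∨ 5 ≤ c := by
  by_cases hc : c < 5
  · left
    induction n with
    | zero => simp; omega
    | succ m ih =>
      rw [filter_range_succ_card, ih]
      split_ifs with h <;> omega
  · right; omega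

lemma mod_split {x n : ℕ} (hn : 0 < n) (h : x < 2*n) :
    x % n = x ∨ (n ≤ x ∧ x % n = x - n) := by
  rcases Nat.lt_or_ge x n with h1 | h1
  · left; exact Nat.mod_eq_of_lt h1
  · right
    refine ⟨h1, ?_⟩
    rw [Nat.mod_eq_sub_mod h1]
    exact Nat.mod_eq_of_lt (by omega)

lemma k2_case (n : ℕ) (hne : n % 2 = 0) (hn : 4 < n) :
    4 * n / 5 ≤ alpha n 2 := by
  have hn0 : 0 < n := by omega
  set A : Finset ℕ := (Finset.range n).filter (fun i => i % 5 = 1 ∨ i % 5 = 4) with hA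
  set B : Finset ℕ := (Finset.range n).filter (fun i => i % 5 = 2 ∨ i % 5 = 3) with hB
  have hcardA : A.card = (n + 3) / 5 + n / 5 := by
    rw [hA, Finset.filter_or, Finset.card_union_of_disjoint]
    · rcases count_mod5 1 n with h1 | h1
      · rcases count_mod5 4 n with h4 | h4
        · rw [h1, h4]; norm_num
        · omega
      · omega
    · rw [Finset.disjoint_left]
      intro a ha ha'
      simp only [Finset.mem_filter] at ha ha'
      omega
  have hcardB : B.card = (n + 2) / 5 + (n + 1) / 5 := by
    rw [hB, Finset.filter_or, Finset.card_union_of_disjoint]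
    · rcases count_mod5 2 n with h2 | h2
      · rcases count_mod5 3 n with h3 | h3
        · rw [h2, h3]
          obtain ⟨q, r, hr, rfl⟩ : ∃ q r, r < 10 ∧ n = 10*q + r :=
            ⟨n/10, n%10, Nat.mod_lt _ (by norm_num), (Nat.div_add_mod n 10).symm⟩
          interval_cases r <;> omega
        · omega
      · omega
    · rw [Finset.disjoint_left]
      intro a ha ha'
      simp only [Finset.mem_filter] at ha ha'
      omega
  have hbound := abstract_bound n 2 hn0 A B
    (fun i hi => (Finset.mem_filter.1 hi).1 |> Finset.mem_range.1)
    (fun i hi => (Finset.mem_filter.1 hi).1 |> Finset.mem_range.1)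
    (by
      intro i hi hi'
      simp only [hA, hB, Finset.mem_filter] at hi hi'
      omega)
    (by
      intro i hi j hj heq
      simp only [hA, Finset.mem_filter, Finset.mem_range] at hi hj
      rcases mod_split hn0 (show i + 1 < 2*n by omega) with h | ⟨h1, h⟩ <;> omega)
    (by
      intro i hi j hj heq
      simp only [hB, Finset.mem_filter, Finset.mem_range] at hi hj
      rcases mod_split hn0 (show i + 2 < 2*n by omega) with h | ⟨h1, h⟩ <;> omega)
  refine le_trans ?_ hbound
  obtain ⟨q, r, hr, rfl⟩ : ∃ q r, r < 10 ∧ n = 10*q + r :=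
    ⟨n/10, n%10, Nat.mod_lt _ (by norm_num), (Nat.div_add_mod n 10).symm⟩
  interval_cases r <;> omega


/-- Core construction for `k ≥ 4`: a dense region `[0, L)` filled with an alternating
pattern whose inner-set parity flips on each length-`k` block, plus a sparse alternating
outer-only region `[L, n)`. -/
lemma core_bound (n k L G : ℕ) (hn2 : n % 2 = 0) (hk2 : k % 2 = 0) (hk4 : 4 ≤ k)
    (hn : 2 * k < n) (hLeven : L % 2 = 0) (hLpos : 2 ≤ L) (hLlt : L + 2 ≤ n)
    (hwrap : L ≤ n - k ∨ L = 2 * k)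
    (hgap : ∀ j, j % 2 = 1 → j * k < L → (j - 1) / 2 < G)
    (harith : 4 * n / 5 ≤ L / 2 + (L / 2 - G) + (n - L) / 2) :
    4 * n / 5 ≤ alpha n k := by
  classical
  have hn0 : 0 < n := by omega
  have hk0 : 0 < k := by omega
  set Bs : Finset ℕ := (Finset.range L).filter (fun i => i % 2 = (i / k) % 2) with hBs
  set gapS : Finset ℕ := (Finset.range G).image (fun t => (2 * t + 1) * k) with hgapS
  set Ad : Finset ℕ :=
    ((Finset.range L).filter (fun i => ¬ i % 2 = (i / k) % 2)) \ gapS with hAd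
  set As : Finset ℕ := (Finset.range ((n - L) / 2)).image (fun t => L + 2 * t + 1) with hAs
  set A : Finset ℕ := Ad ∪ As with hA
  have memAd : ∀ i ∈ Ad, i < L ∧ ¬ i % 2 = (i / k) % 2 ∧ i ∉ gapS := by
    intro i hi
    rw [hAd] at hi
    simp only [Finset.mem_sdiff, Finset.mem_filter, Finset.mem_range] at hi
    tauto
  have memAs : ∀ i ∈ As, ∃ t, t < (n - L) / 2 ∧ i = L + 2 * t + 1 := by
    intro i hi
    rw [hAs] at hi
    simp only [Finset.mem_image, Finset.mem_range] at hi
    obtain ⟨t, ht, h⟩ := hi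
    exact ⟨t, ht, h.symm⟩
  have memBs : ∀ i ∈ Bs, i < L ∧ i % 2 = (i / k) % 2 := by
    intro i hi
    rw [hBs] at hi
    simpa using hi
  have hAn : ∀ i ∈ A, i < n := by
    intro i hi
    rw [hA, Finset.mem_union] at hi
    rcases hi with hi | hi
    · have := (memAd i hi).1; omega
    · obtain ⟨t, ht, h⟩ := memAs i hi; omega
  have hBn : ∀ i ∈ Bs, i < n := by
    intro i hi
    have := (memBs i hi).1; omega
  have hdisj : ∀ i, i ∈ A → i ∈ Bs → False := by
    intro i hi hi'
    obtain ⟨hiL, hip⟩ := memBs i hi'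
    rw [hA, Finset.mem_union] at hi
    rcases hi with hi | hi
    · exact (memAd i hi).2.1 hip
    · obtain ⟨t, ht, h⟩ := memAs i hi; omega
  -- independence of the outer indices
  have hAind : ∀ i ∈ A, ∀ j ∈ A, (i + 1) % n ≠ j := by
    intro i hi j hj heq
    have hiN : i < n := hAn i hi
    rcases mod_split hn0 (show i + 1 < 2 * n by omega) with hm | ⟨hge, hm⟩
    · have hj' : j = i + 1 := by omega
      subst hj'
      rw [hA, Finset.mem_union] at hi hj
      rcases hi with hi | hi <;> rcases hj with hj | hj
      · obtain ⟨hiL, hip, -⟩ := memAd i hi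
        obtain ⟨hjL, hjp, hjgap⟩ := memAd (i + 1) hj
        by_cases hdvd : k ∣ (i + 1)
        · have hdiv : (i + 1) / k = i / k + 1 := Nat.succ_div_of_dvd hdvd
          have hmul : ((i + 1) / k) * k = i + 1 := Nat.div_mul_cancel hdvd
          have h2k : (2 : ℕ) ∣ k := by omega
          have h2 : (2 : ℕ) ∣ (i + 1) := h2k.trans hdvd
          have h2' : (i + 1) % 2 = 0 := by omega
          have hmodd : ((i + 1) / k) % 2 = 1 := by omega
          have hlt : ((i + 1) / k) * k < L := by rw [hmul]; exact hjL
          have hG' := hgap ((i + 1) / k) hmodd hlt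
          have hodd_eq : 2 * (((i + 1) / k - 1) / 2) + 1 = (i + 1) / k := by
            generalize (i + 1) / k = d at hmodd ⊢
            omega
          apply hjgap
          rw [hgapS]
          simp only [Finset.mem_image, Finset.mem_range]
          exact ⟨((i + 1) / k - 1) / 2, hG', by rw [hodd_eq]; exact hmul⟩
        · have hdiv : (i + 1) / k = i / k := Nat.succ_div_of_not_dvd hdvd
          rw [hdiv] at hjp
          omega
      · obtain ⟨hiL, -, -⟩ := memAd i hi
        obtain ⟨t, ht, hteq⟩ := memAs (i + 1) hj
        omega
      · obtain ⟨t, ht, hteq⟩ := memAs i hi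
        obtain ⟨hjL, -, -⟩ := memAd (i + 1) hj
        omega
      · obtain ⟨t, ht, hteq⟩ := memAs i hi
        obtain ⟨t', ht', hteq'⟩ := memAs (i + 1) hj
        omega
    · have hj0 : j = 0 := by omega
      subst hj0
      rw [hA, Finset.mem_union] at hj
      rcases hj with hj | hj
      · have hp := (memAd 0 hj).2.1
        rw [Nat.zero_div] at hp
        omega
      · obtain ⟨t, -, hteq⟩ := memAs 0 hj
        omega
  -- independence of the inner indices
  have hBind : ∀ i ∈ Bs, ∀ j ∈ Bs, (i + k) % n ≠ j := by
    intro i hi j hj heq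
    obtain ⟨hiL, hip⟩ := memBs i hi
    obtain ⟨hjL, hjp⟩ := memBs j hj
    rcases mod_split hn0 (show i + k < 2 * n by omega) with hm | ⟨hge, hm⟩
    · have hj' : j = i + k := by omega
      subst hj'
      rw [Nat.add_div_right _ hk0] at hjp
      omega
    · have hj' : j = i + k - n := by omega
      rcases hwrap with hL1 | hL2
      · omega
      · have hik : k ≤ i := by omega
        have hi2k : i < 2 * k := by omega
        have hdi : i / k = 1 := by
          have h1 : 1 ≤ i / k := (Nat.one_le_div_iff hk0).2 hik
          have h2 : i / k < 2 := (Nat.div_lt_iff_lt_mul hk0).2 (by omega)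
          omega
        have hjk : j < k := by omega
        have hdj : j / k = 0 := Nat.div_eq_of_lt hjk
        rw [hdi] at hip
        rw [hdj] at hjp
        omega
  -- counting
  have keyP : ∀ t, (2 * t) % 2 = ((2 * t) / k) % 2 ↔
      ¬ (2 * t + 1) % 2 = ((2 * t + 1) / k) % 2 := by
    intro t
    have hd : (2 * t + 1) / k = (2 * t) / k := by
      apply Nat.succ_div_of_not_dvd
      intro hdvd
      have h2 : (2 : ℕ) ∣ k := by omega
      have h3 := h2.trans hdvd
      omega
    rw [hd]
    omega
  have cardBs : Bs.card = L / 2 := by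
    have h2 := count_pair (fun i => i % 2 = (i / k) % 2) keyP (L / 2)
    rw [hBs]
    rwa [show 2 * (L / 2) = L by omega] at h2
  have cardAc :
      ((Finset.range L).filter (fun i => ¬ i % 2 = (i / k) % 2)).card = L / 2 := by
    have keyQ : ∀ t, (¬ (2 * t) % 2 = ((2 * t) / k) % 2) ↔
        ¬ (¬ (2 * t + 1) % 2 = ((2 * t + 1) / k) % 2) := by
      intro t
      have := keyP t
      tauto
    have h2 := count_pair (fun i => ¬ i % 2 = (i / k) % 2) keyQ (L / 2)
    rwa [show 2 * (L / 2) = L by omega] at h2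
  have cardGap : gapS.card ≤ G := by
    rw [hgapS]
    exact le_trans Finset.card_image_le (by simp)
  have cardAd : L / 2 - G ≤ Ad.card := by
    have h3 := Finset.le_card_sdiff gapS
      ((Finset.range L).filter (fun i => ¬ i % 2 = (i / k) % 2))
    rw [hAd]
    omega
  have cardAs : As.card = (n - L) / 2 := by
    rw [hAs]
    rw [Finset.card_image_of_injective _ (fun a b h => by omega), Finset.card_range]
  have disjAdAs : Disjoint Ad As := by
    rw [Finset.disjoint_left]
    intro i hi hi'
    have hiL := (memAd i hi).1
    obtain ⟨t, -, hteq⟩ := memAs i hi'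
    omega
  have cardA : A.card = Ad.card + As.card := by
    rw [hA]
    exact Finset.card_union_of_disjoint disjAdAs
  have hbound := abstract_bound n k hn0 A Bs hAn hBn hdisj hAind hBind
  omega


lemma k4_case (n k : ℕ) (hn2 : n % 2 = 0) (hk2 : k % 2 = 0) (hk4 : 4 ≤ k)
    (hn : 2 * k < n) : 4 * n / 5 ≤ alpha n k := by
  have hk0 : 0 < k := by omega
  rcases le_or_gt (3 * n / 10) (k - 1) with hbig | hsmall
  · -- large k : dense region of length 2k
    apply core_bound n k (2 * k) 1 hn2 hk2 hk4 hn (by omega) (by omega) (by omega)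
      (Or.inr rfl)
    · intro j hj hjk
      have hjlt : j < 2 := by
        by_contra hc
        push_neg at hc
        have := Nat.mul_le_mul_right k hc
        omega
      omega
    · omega
  · -- small k : dense region of length n - k
    have h10k : 10 * k ≤ 3 * n := by
      have h1 : k ≤ 3 * n / 10 := by omega
      rw [Nat.le_div_iff_mul_le (by norm_num : (0:ℕ) < 10)] at h1
      omega
    set T : ℕ := (n - k) / k with hT
    have hdm := Nat.div_add_mod (n - k) k
    have hmod : (n - k) % k < k := Nat.mod_lt _ hk0
    rw [← hT] at hdm
    apply core_bound n k (n - k) ((T + 1) / 2) hn2 hk2 hk4 hn (by omega) (by omega)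
      (by omega) (Or.inl (le_refl _))
    · intro j hj hjk
      have hjT : j ≤ T := by
        rw [hT, Nat.le_div_iff_mul_le hk0]
        omega
      omega
    · -- arithmetic: 4n/5 ≤ (n-k)/2 + ((n-k)/2 - (T+1)/2) + (n-(n-k))/2
      rcases (show k = 4 ∨ k = 6 ∨ k = 8 ∨ 10 ≤ k by omega) with hkc | hkc | hkc | hk10
      · subst hkc
        obtain ⟨q, r, hr, rfl⟩ : ∃ q r, r < 10 ∧ n = 10 * q + r :=
          ⟨n / 10, n % 10, Nat.mod_lt _ (by norm_num), (Nat.div_add_mod n 10).symm⟩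
        interval_cases r <;> omega
      · subst hkc
        obtain ⟨q, r, hr, rfl⟩ : ∃ q r, r < 10 ∧ n = 10 * q + r :=
          ⟨n / 10, n % 10, Nat.mod_lt _ (by norm_num), (Nat.div_add_mod n 10).symm⟩
        interval_cases r <;> omega
      · subst hkc
        obtain ⟨q, r, hr, rfl⟩ : ∃ q r, r < 10 ∧ n = 10 * q + r :=
          ⟨n / 10, n % 10, Nat.mod_lt _ (by norm_num), (Nat.div_add_mod n 10).symm⟩
        interval_cases r <;> omega
      · -- k ≥ 10 : the asymptotic chain
        have hTk : (T + 1) * k ≤ n := by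
          have h : (T + 1) * k = k * T + k := by ring
          omega
        have h2G : 2 * ((T + 1) / 2) ≤ T + 1 := by omega
        have hGkn : 2 * ((T + 1) / 2) * k ≤ n := by
          calc 2 * ((T + 1) / 2) * k ≤ (T + 1) * k := Nat.mul_le_mul_right k h2G
            _ ≤ n := hTk
        obtain ⟨e, he⟩ : ∃ e, 3 * n = 10 * k + e := ⟨3 * n - 10 * k, by omega⟩
        have key : 15 * n + 15 * (k * k) ≤ 6 * (n * k) := by
          have h18 : 18 * (n * k) = 60 * (k * k) + 6 * (k * e) := by
            have h3 : 18 * (n * k) = 6 * k * (3 * n) := by ring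
            rw [h3, he]; ring
          have h45 : 45 * n = 150 * k + 15 * e := by omega
          have f1 : 150 * k ≤ 15 * (k * k) := by
            have h5 := Nat.mul_le_mul_right k (show 150 ≤ 15 * k by omega)
            calc 150 * k ≤ 15 * k * k := h5
              _ = 15 * (k * k) := by ring
          have f2 : 15 * e ≤ 6 * (k * e) := by
            have h5 := Nat.mul_le_mul_right e (show 15 ≤ 6 * k by omega)
            calc 15 * e ≤ 6 * k * e := h5
              _ = 6 * (k * e) := by ring
          generalize k * k = p at h18 f1 ⊢
          generalize k * e = q at h18 f2
          generalize n * k = m at h18 ⊢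
          omega
        have hk2eq : 2 * (k / 2) = k := by omega
        have hfin : (T + 1) / 2 + k / 2 ≤ n / 5 := by
          rw [Nat.le_div_iff_mul_le (by norm_num : (0:ℕ) < 5)]
          have hmul : (((T + 1) / 2 + k / 2) * 5) * (6 * k) ≤ n * (6 * k) := by
            have hexp : (((T + 1) / 2 + k / 2) * 5) * (6 * k)
                = 15 * (2 * ((T + 1) / 2) * k) + 15 * ((2 * (k / 2)) * k) := by ring
            rw [hexp, hk2eq]
            have h1 : 15 * (2 * ((T + 1) / 2) * k) ≤ 15 * n := Nat.mul_le_mul_left 15 hGkn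
            have h2 : n * (6 * k) = 6 * (n * k) := by ring
            rw [h2]
            calc 15 * (2 * ((T + 1) / 2) * k) + 15 * (k * k)
                ≤ 15 * n + 15 * (k * k) := Nat.add_le_add_right h1 _
              _ ≤ 6 * (n * k) := key
          exact Nat.le_of_mul_le_mul_right hmul (by omega)
        omega

/-- If `n` and `k` are both even with `n > 2k ≥ 2`, then
`α(P(n,k)) ≥ ⌊4n/5⌋`. -/
theorem bhm_conjecture_even_even (n k : ℕ) (hne : Even n) (hke : Even k) (hk : 1 ≤ k)
    (hn : 2 * k < n) :
    4 * n / 5 ≤ alpha n k := by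
  have hn2 : n % 2 = 0 := Nat.even_iff.1 hne
  have hk2 : k % 2 = 0 := Nat.even_iff.1 hke
  rcases Nat.lt_or_ge k 4 with hk4 | hk4
  · have hk2' : k = 2 := by omega
    subst hk2'
    exact k2_case n hn2 (by omega)
  · exact k4_case n k hn2 hk2 (by omega) hn

end GP
end
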